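/- arXiv:1104.1216 — 10 statements merged into one kernel-verified Lean document; each statement's English description precedes it below -/
import Mathlib

section
/- A continuous action of G on a compact Hausdorff space X is residually finite if and only if for every point x ∈ X, every finite set F ⊆ G, and every neighbourhood ε of the diagonal in X × X, there exist a finite set E, an action of G on E, and a map ζ : E → X such that x lies in the ε-neighbourhood of ζ(E) and (ζ(sz), sζ(z)) ∈ ε for all z ∈ E and s ∈ F. -/
/-- Residual finiteness of a continuous action of a discrete group on a compact
Hausdorff space (neighbourhood-of-the-diagonal formulation). -/
def IsRFAction {G X : Type*} [Group G] [TopologicalSpace X] (act : G → X → X) : Prop :=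
  ∀ (F : Finset G) (ε : Set (X × X)), IsOpen ε → (∀ x, (x, x) ∈ ε) →
    ∃ (E : Type) (_ : Fintype E) (σ : G → E → E),
      (∀ z, σ 1 z = z) ∧ (∀ s t z, σ (s * t) z = σ s (σ t z)) ∧
      ∃ ζ : E → X,
        (∀ x : X, ∃ z : E, (x, ζ z) ∈ ε) ∧
        ∀ (z : E), ∀ s ∈ F, (ζ (σ s z), act s (ζ z)) ∈ ε

/-- A continuous action on a compact Hausdorff space is residually finite iff for every
point `x`, finite `F ⊆ G`, and neighbourhood `ε` of the diagonal there is a finite model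
whose image comes `ε`-close to `x` and which is `ε`-approximately equivariant over `F`. -/
theorem stmt1 {G X : Type*} [Group G]
    [TopologicalSpace X] [CompactSpace X] [T2Space X]
    (act : G → X → X)
    (hone : ∀ x, act 1 x = x)
    (hmul : ∀ s t x, act (s * t) x = act s (act t x))
    (hcont : ∀ s, Continuous (act s)) :
    IsRFAction act ↔
      ∀ (x : X) (F : Finset G) (ε : Set (X × X)), IsOpen ε → (∀ y, (y, y) ∈ ε) →
        ∃ (E : Type) (_ : Fintype E) (σ : G → E → E),
          (∀ z, σ 1 z = z) ∧ (∀ s t z, σ (s * t) z = σ s (σ t z)) ∧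
          ∃ ζ : E → X,
            (∃ z : E, (x, ζ z) ∈ ε) ∧
            ∀ (z : E), ∀ s ∈ F, (ζ (σ s z), act s (ζ z)) ∈ ε := by
  constructor
  · intro h x F ε hε hdiag
    obtain ⟨E, fE, σ, h1, h2, ζ, hdense, hequiv⟩ := h F ε hε hdiag
    exact ⟨E, fE, σ, h1, h2, ζ, hdense x, hequiv⟩
  · intro h F ε hε hdiag
    -- choose, for each x, a finite model close to x
    choose E fE σ h1 h2 ζ hrest using fun x => h x F ε hε hdiag
    choose z hz using fun x => (hrest x).1
    have hequiv := fun x => (hrest x).2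
    -- open cover
    have hcov : (Set.univ : Set X) ⊆ ⋃ x : X, {y | (y, ζ x (z x)) ∈ ε} := by
      intro y _
      exact Set.mem_iUnion.2 ⟨y, hz y⟩
    have hopen : ∀ x : X, IsOpen {y | (y, ζ x (z x)) ∈ ε} := by
      intro x
      exact hε.preimage (Continuous.prodMk continuous_id continuous_const)
    obtain ⟨t, ht⟩ := CompactSpace.isCompact_univ.elim_finite_subcover _ hopen hcov
    haveI : ∀ x : X, Fintype (E x) := fE
    set l := t.toList with hl
    refine ⟨Σ i : Fin l.length, E (l.get i), inferInstance,
      fun s p => ⟨p.1, σ (l.get p.1) s p.2⟩, ?_, ?_,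
      fun p => ζ (l.get p.1) p.2, ?_, ?_⟩
    · intro p; simp [h1]
    · intro s u p; simp [h2]
    · intro y
      obtain ⟨_, ⟨x, rfl⟩, ⟨_, ⟨hx, rfl⟩, hy⟩⟩ := ht (Set.mem_univ y)
      have hxl : x ∈ l := by simpa [hl] using hx
      obtain ⟨i, hi⟩ := List.get_of_mem hxl
      refine ⟨⟨i, hi ▸ z x⟩, ?_⟩
      · subst hi; exact hy
    · intro p s hs
      exact hequiv (l.get p.1) p.2 s hs
end

section
/- If G is a residually finite group and X is a compact Hausdorff space, then the Bernoulli shift action of G on X^G given by (s·x)(t) = x(s⁻¹t) is residually finite as a dynamical system. -/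
open scoped Uniformity


/-- A group is residually finite if every nonidentity element is detected by a
homomorphism to a finite group. -/
def IsResiduallyFiniteGroup (G : Type*) [Group G] : Prop :=
  ∀ g : G, g ≠ 1 → ∃ (H : Type) (_ : Group H) (_ : Fintype H) (π : G →* H), π g ≠ 1

/-- In a residually finite group, any finite set of nonidentity elements is detected
simultaneously by a single homomorphism to a finite group. -/
lemma exists_finite_quotient {G : Type*} [Group G] (hG : IsResiduallyFiniteGroup G)
    (S : Finset G) :
    ∃ (H : Type) (_ : Group H) (_ : Fintype H) (π : G →* H),
      ∀ g ∈ S, g ≠ 1 → π g ≠ 1 := by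
  classical
  induction S using Finset.induction_on with
  | empty => exact ⟨PUnit, inferInstance, inferInstance, 1, by simp⟩
  | @insert a S _ ih =>
    obtain ⟨H, hHg, hHf, π, hπ⟩ := ih
    by_cases h1 : a = 1
    · refine ⟨H, hHg, hHf, π, ?_⟩
      intro g hg hgne
      rcases Finset.mem_insert.mp hg with rfl | hg
      · exact absurd h1 hgne
      · exact hπ g hg hgne
    · obtain ⟨H', hH'g, hH'f, π', hπ'⟩ := hG a h1
      refine ⟨H × H', inferInstance, inferInstance, π.prod π', ?_⟩
      intro g hg hgne
      rcases Finset.mem_insert.mp hg with rfl | hg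
      · intro h
        exact hπ' (congrArg Prod.snd h)
      · intro h
        exact hπ g hg hgne (congrArg Prod.fst h)

/-- For a residually finite group `G` and a compact Hausdorff space `X`, the Bernoulli
shift action of `G` on `X^G`, `(s • x)(t) = x(s⁻¹ t)`, is a residually finite action. -/
theorem stmt2 {G X : Type*} [Group G] [TopologicalSpace X] [CompactSpace X] [T2Space X]
    (hG : IsResiduallyFiniteGroup G) :
    IsRFAction (X := G → X) (fun s x t => x (s⁻¹ * t)) := by
  classical
  intro F ε hεo hεd
  -- Step 1: find a finite set of coordinates and an open entourage controlling ε
  obtain ⟨D, W, hWo, hWd, hWε⟩ :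
      ∃ (D : Finset G) (W : Set (X × X)), IsOpen W ∧ (∀ x, (x, x) ∈ W) ∧
        ∀ p : (G → X) × (G → X), (∀ t ∈ D, (p.1 t, p.2 t) ∈ W) → p ∈ ε := by
    letI : UniformSpace X := uniformSpaceOfCompactR1
    have hε : ε ∈ 𝓤 (G → X) := by
      rw [← nhdsSet_diagonal_eq_uniformity]
      exact hεo.mem_nhdsSet.mpr (Set.diagonal_subset_iff.mpr hεd)
    rw [Pi.uniformity, Filter.mem_iInf'] at hε
    obtain ⟨I, If, V, hV, -, hεeq, -⟩ := hε
    choose W' hW' hW'V using fun i => Filter.mem_comap.mp (hV i)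
    have hIW : (⋂ i ∈ I, W' i) ∈ 𝓤 X := (Filter.biInter_mem If).mpr fun i _ => hW' i
    obtain ⟨W, ⟨hWmem, hWo⟩, hWsub⟩ := uniformity_hasBasis_open.mem_iff.mp hIW
    refine ⟨If.toFinset, W, hWo, fun x => refl_mem_uniformity hWmem, ?_⟩
    intro p hp
    rw [hεeq]
    refine Set.mem_iInter₂.mpr fun i hi => hW'V i ?_
    have hpW : (p.1 i, p.2 i) ∈ W := hp i (If.mem_toFinset.mpr hi)
    exact Set.mem_preimage.mpr (Set.mem_iInter₂.mp (hWsub hpW) i hi)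
  -- Step 2: a finite W-dense family in X
  obtain ⟨A, hA⟩ : ∃ A : Finset X, ∀ x : X, ∃ a ∈ A, (x, a) ∈ W := by
    obtain ⟨A, hA⟩ := IsCompact.elim_finite_subcover isCompact_univ
      (fun a : X => {x | (x, a) ∈ W})
      (fun a => hWo.preimage (continuous_id.prodMk continuous_const))
      (fun x _ => Set.mem_iUnion.mpr ⟨x, hWd x⟩)
    refine ⟨A, fun x => ?_⟩
    obtain ⟨b, hb, hxb⟩ := Set.mem_iUnion₂.mp (hA (Set.mem_univ x))
    exact ⟨b, hb, hxb⟩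
  set m := A.card with hm
  set a : Fin m → X := fun i => (A.equivFin.symm i : X) with ha
  have hcov : ∀ x : X, ∃ i : Fin m, (x, a i) ∈ W := by
    intro x
    obtain ⟨b, hb, hxb⟩ := hA x
    refine ⟨A.equivFin ⟨b, hb⟩, ?_⟩
    simpa [ha] using hxb
  choose pick hpick using hcov
  -- Step 3: a finite quotient separating the points of D
  set S : Finset G := (D ×ˢ D).image fun p => p.1 * p.2⁻¹ with hS
  obtain ⟨H, hHg, hHf, π, hπ⟩ := exists_finite_quotient hG S
  have hinj : ∀ s ∈ D, ∀ t ∈ D, π s = π t → s = t := by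
    intro s hs t ht hst
    by_contra hne
    have hmem : s * t⁻¹ ∈ S :=
      Finset.mem_image.mpr ⟨(s, t), Finset.mem_product.mpr ⟨hs, ht⟩, rfl⟩
    have h1 : s * t⁻¹ ≠ 1 := by
      intro h
      exact hne (mul_inv_eq_one.mp h)
    exact hπ _ hmem h1 (by simp [map_mul, map_inv, hst])
  -- Step 4: the finite model
  refine ⟨H → Fin m, inferInstance, fun s f h => f ((π s)⁻¹ * h), ?_, ?_, ?_⟩
  · intro z; funext h; simp
  · intro s t z; funext h; simp [map_mul, mul_inv_rev, mul_assoc]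
  refine ⟨fun f t => a (f (π t)), ?_, ?_⟩
  · -- density
    intro x
    refine ⟨fun h => if hh : ∃ t ∈ D, π t = h then pick (x hh.choose) else pick (x 1), ?_⟩
    apply hWε
    intro t ht
    have hex : ∃ t' ∈ D, π t' = π t := ⟨t, ht, rfl⟩
    show (x t, a (if hh : ∃ t' ∈ D, π t' = π t then pick (x hh.choose) else pick (x 1))) ∈ W
    rw [dif_pos hex]
    have h1 := hex.choose_spec
    have h2 : hex.choose = t := hinj _ h1.1 t ht h1.2
    rw [h2]
    exact hpick (x t)
  · -- approximate equivariance (here: exact equivariance)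
    intro z s hs
    have key : (fun t => a (z ((π s)⁻¹ * (π t)))) = (fun t => a (z (π (s⁻¹ * t)))) := by
      funext t; rw [map_mul, map_inv]
    show ((fun t => a (z ((π s)⁻¹ * (π t)))), (fun t => a (z (π (s⁻¹ * t))))) ∈ ε
    rw [key]
    exact hεd _
end

section
/- Let G act minimally and continuously on a zero-dimensional compact metrizable space X. Then the following are equivalent: (1) there is a G-invariant Borel probability measure on X; (2) X is completely (G, clopen)-nonparadoxical; (3) there is a nonempty clopen subset of X which is completely (G, clopen)-nonparadoxical. -/
open MeasureTheory

/-- `A` is `(G, S, k, l)`-paradoxical: there are `A₁, …, Aₙ ∈ S` and `s₁, …, sₙ ∈ G` with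
`∑ᵢ 1_{Aᵢ} ≥ k·1_A` and `∑ᵢ 1_{sᵢAᵢ} ≤ l·1_A` pointwise. -/
def IsParadoxical {G X : Type*} (act : G → X → X) (S : Set (Set X)) (A : Set X)
    (k l : ℕ) : Prop :=
  ∃ (n : ℕ) (As : Fin n → Set X) (ss : Fin n → G),
    (∀ i, As i ∈ S) ∧
    (∀ x ∈ A, k ≤ Nat.card {i : Fin n // x ∈ As i}) ∧
    (∀ x ∈ A, Nat.card {i : Fin n // x ∈ act (ss i) '' As i} ≤ l) ∧
    (∀ x, x ∉ A → ∀ i, x ∉ act (ss i) '' As i)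

/-- `A` is completely `(G, S)`-nonparadoxical if it is not `(G, S, k, l)`-paradoxical
for any integers `k > l > 0`. -/
def CompletelyNonparadoxical {G X : Type*} (act : G → X → X) (S : Set (Set X))
    (A : Set X) : Prop :=
  ∀ k l : ℕ, 0 < l → l < k → ¬ IsParadoxical act S A k l

namespace SP

open scoped Classical

set_option linter.unusedSectionVars false

variable {G X : Type*} [Group G] [TopologicalSpace X]

/-- real indicator -/
noncomputable def ind (U : Set X) : X → ℝ := U.indicator 1

lemma ind_apply (U : Set X) (x : X) : ind U x = if x ∈ U then (1:ℝ) else 0 :=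
  Set.indicator_apply U 1 x

lemma ind_nonneg (U : Set X) (x : X) : 0 ≤ ind U x := by
  rw [ind_apply]; split <;> norm_num

lemma ind_le_one (U : Set X) (x : X) : ind U x ≤ 1 := by
  rw [ind_apply]; split <;> norm_num

lemma ind_mono {U V : Set X} (h : U ⊆ V) (x : X) : ind U x ≤ ind V x := by
  rw [ind_apply, ind_apply]
  by_cases hx : x ∈ U
  · simp [hx, h hx]
  · simp only [hx, if_false]; split <;> norm_num

lemma ind_of_mem {U : Set X} {x : X} (h : x ∈ U) : ind U x = 1 := by simp [ind_apply, h]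

lemma ind_of_not_mem {U : Set X} {x : X} (h : x ∉ U) : ind U x = 0 := by simp [ind_apply, h]

lemma natcard_eq_sum {n : ℕ} (p : Fin n → Prop) :
    (Nat.card {i // p i} : ℝ) = ∑ i, if p i then (1:ℝ) else 0 := by
  rw [Nat.card_eq_fintype_card, Fintype.card_subtype]
  rw [Finset.sum_boole]

lemma sum_ind {n : ℕ} (C : Fin n → Set X) (x : X) :
    ∑ i, ind (C i) x = (Nat.card {i // x ∈ C i} : ℝ) := by
  rw [natcard_eq_sum]
  exact Finset.sum_congr rfl fun i _ => ind_apply _ _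

section Action

variable (act : G → X → X)

/-- one-step subequivalence via clopen pieces -/
def Sub (f g : X → ℝ) : Prop :=
  ∃ (n : ℕ) (C : Fin n → Set X) (u : Fin n → G),
    (∀ i, IsClopen (C i)) ∧ (∀ x, f x ≤ ∑ i, ind (C i) x) ∧
      (∀ x, ∑ i, ind (act (u i) '' C i) x ≤ g x)

variable {act}
variable (hone : ∀ x, act 1 x = x) (hmul : ∀ s t x, act (s * t) x = act s (act t x))
  (hcont : ∀ s, Continuous (act s))

section ActLemmas
include hone hmul

lemma act_inv_act (s : G) (x : X) : act s⁻¹ (act s x) = x := by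
  rw [← hmul, inv_mul_cancel, hone]

lemma act_act_inv (s : G) (x : X) : act s (act s⁻¹ x) = x := by
  rw [← hmul, mul_inv_cancel, hone]

lemma mem_image_act {T : Set X} {s : G} {x : X} : x ∈ act s '' T ↔ act s⁻¹ x ∈ T := by
  constructor
  · rintro ⟨y, hy, rfl⟩; rwa [act_inv_act hone hmul]
  · intro h; exact ⟨act s⁻¹ x, h, act_act_inv hone hmul s x⟩

lemma image_act_image_act (a b : G) (T : Set X) :
    act a '' (act b '' T) = act (a * b) '' T := by
  rw [Set.image_image]
  apply Set.image_congr'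
  intro x; rw [hmul]

lemma image_act_one (T : Set X) : act 1 '' T = T := by
  ext x
  constructor
  · rintro ⟨y, hy, rfl⟩; rwa [hone]
  · intro h; exact ⟨x, h, hone x⟩

lemma ind_image_act (s : G) (T : Set X) (x : X) : ind (act s '' T) x = ind T (act s⁻¹ x) := by
  by_cases h : act s⁻¹ x ∈ T
  · rw [ind_of_mem ((mem_image_act hone hmul).2 h), ind_of_mem h]
  · rw [ind_of_not_mem (fun hc => h ((mem_image_act hone hmul).1 hc)), ind_of_not_mem h]

include hcont in
lemma image_act_clopen {T : Set X} (hT : IsClopen T) (s : G) : IsClopen (act s '' T) := by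
  have : act s '' T = act s⁻¹ ⁻¹' T := by
    ext x; rw [Set.mem_preimage, mem_image_act hone hmul]
  rw [this]
  exact hT.preimage (hcont s⁻¹)

end ActLemmas

lemma Sub.of_fintype {ι : Type} [Fintype ι] {f g : X → ℝ} (C : ι → Set X) (u : ι → G)
    (hC : ∀ i, IsClopen (C i)) (hf : ∀ x, f x ≤ ∑ i, ind (C i) x)
    (hg : ∀ x, ∑ i, ind (act (u i) '' C i) x ≤ g x) : Sub act f g := by
  classical
  obtain ⟨e⟩ : Nonempty (ι ≃ Fin (Fintype.card ι)) := ⟨Fintype.equivFin ι⟩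
  refine ⟨Fintype.card ι, C ∘ e.symm, u ∘ e.symm, fun i => hC _, fun x => ?_, fun x => ?_⟩
  · refine le_trans (hf x) (le_of_eq ?_)
    exact (Equiv.sum_comp e.symm (fun i => ind (C i) x)).symm
  · refine le_trans (le_of_eq ?_) (hg x)
    exact Equiv.sum_comp e.symm (fun i => ind (act (u i) '' C i) x)

lemma Sub.mono {f g f' g' : X → ℝ} (hf : ∀ x, f' x ≤ f x) (hg : ∀ x, g x ≤ g' x)
    (h : Sub act f g) : Sub act f' g' := by
  obtain ⟨n, C, u, hC, h1, h2⟩ := h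
  exact ⟨n, C, u, hC, fun x => (hf x).trans (h1 x), fun x => (h2 x).trans (hg x)⟩

lemma Sub.zero : Sub act (fun _ => (0:ℝ)) (fun _ => (0:ℝ)) :=
  ⟨0, fun i => i.elim0, fun i => i.elim0, fun i => i.elim0, fun x => by simp, fun x => by simp⟩

lemma Sub.add {f g f' g' : X → ℝ} (h : Sub act f g) (h' : Sub act f' g') :
    Sub act (fun x => f x + f' x) (fun x => g x + g' x) := by
  classical
  obtain ⟨n, C, u, hC, h1, h2⟩ := h
  obtain ⟨n', C', u', hC', h1', h2'⟩ := h'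
  refine Sub.of_fintype (Sum.elim C C') (Sum.elim u u') ?_ ?_ ?_
  · rintro (i | i) <;> simp [hC, hC']
  · intro x
    rw [Fintype.sum_sum_type]
    exact add_le_add (h1 x) (h1' x)
  · intro x
    rw [Fintype.sum_sum_type]
    exact add_le_add (h2 x) (h2' x)

lemma Sub.nsmul {f g : X → ℝ} (h : Sub act f g) (N : ℕ) :
    Sub act (fun x => (N:ℝ) * f x) (fun x => (N:ℝ) * g x) := by
  induction N with
  | zero => simpa using Sub.zero
  | succ N ih =>
      have := Sub.add ih h
      simpa [add_mul, Nat.cast_add, add_comm] using this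

include hone hmul in
lemma Sub.refl_sum {n : ℕ} (C : Fin n → Set X) (hC : ∀ i, IsClopen (C i)) :
    Sub act (fun x => ∑ i, ind (C i) x) (fun x => ∑ i, ind (C i) x) := by
  refine ⟨n, C, fun _ => 1, hC, fun x => le_rfl, fun x => le_of_eq ?_⟩
  refine Finset.sum_congr rfl fun i _ => ?_
  rw [image_act_one hone hmul]

include hone hmul in
lemma Sub.refl_ind {U : Set X} (hU : IsClopen U) :
    Sub act (ind U) (ind U) := by
  have := Sub.refl_sum (act := act) hone hmul (fun _ : Fin 1 => U) (fun _ => hU)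
  simpa using this

include hone hmul in
lemma Sub.refl_nsmul_ind {U : Set X} (hU : IsClopen U) (N : ℕ) :
    Sub act (fun x => (N:ℝ) * ind U x) (fun x => (N:ℝ) * ind U x) :=
  (Sub.refl_ind hone hmul hU).nsmul N

include hone hmul in
lemma Sub.transport {U : Set X} (hU : IsClopen U) (s : G) :
    Sub act (ind U) (ind (act s '' U)) := by
  refine ⟨1, fun _ => U, fun _ => s, fun _ => hU, fun x => by simp, fun x => by simp⟩

include hone hmul hcont in
lemma Sub.transport' {U : Set X} (hU : IsClopen U) (s : G) :
    Sub act (ind (act s '' U)) (ind U) := by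
  refine ⟨1, fun _ => act s '' U, fun _ => s⁻¹, fun _ => image_act_clopen hone hmul hcont hU s,
    fun x => by simp, fun x => ?_⟩
  have : act s⁻¹ '' (act s '' U) = U := by
    rw [image_act_image_act hone hmul, inv_mul_cancel, image_act_one hone hmul]
  simp [this]

lemma sum_ind_eq_filter_card {n : ℕ} (C : Fin n → Set X) (x : X) :
    ∑ i, ind (C i) x = ((Finset.univ.filter (fun i => x ∈ C i)).card : ℝ) := by
  rw [← Finset.sum_boole]
  exact Finset.sum_congr rfl fun i _ => ind_apply _ _

/-- The refinement (matching) lemma. -/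
lemma refine {n m : ℕ} (C : Fin n → Set X) (B : Fin m → Set X)
    (hC : ∀ i, IsClopen (C i)) (hB : ∀ j, IsClopen (B j))
    (h : ∀ x, ∑ i, ind (C i) x ≤ ∑ j, ind (B j) x) :
    ∃ D : Fin n → Fin m → Set X,
      (∀ i j, IsClopen (D i j)) ∧
      (∀ i j, D i j ⊆ B j) ∧
      (∀ i x, ind (C i) x = ∑ j, ind (D i j) x) ∧
      (∀ j x, ∑ i, ind (D i j) x ≤ ind (B j) x) := by
  -- patterns
  set pat : X → Finset (Fin n) × Finset (Fin m) :=
    fun x => (Finset.univ.filter (fun i => x ∈ C i), Finset.univ.filter (fun j => x ∈ B j))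
    with hpat
  have hcard : ∀ x, (pat x).1.card ≤ (pat x).2.card := by
    intro x
    have := h x
    rw [sum_ind_eq_filter_card, sum_ind_eq_filter_card] at this
    exact_mod_cast this
  -- choose injections for each pattern
  have hFex : ∀ p : Finset (Fin n) × Finset (Fin m), ∃ F : Fin n → Option (Fin m),
      p.1.card ≤ p.2.card →
        ((∀ i ∈ p.1, ∃ j, F i = some j) ∧ (∀ i j, F i = some j → i ∈ p.1 ∧ j ∈ p.2) ∧
          (∀ i i' j, F i = some j → F i' = some j → i = i')) := by
    intro p
    by_cases hp : p.1.card ≤ p.2.card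
    · have hcle : Fintype.card {i // i ∈ p.1} ≤ Fintype.card {j // j ∈ p.2} := by
        rwa [Fintype.card_coe, Fintype.card_coe]
      obtain ⟨e⟩ := Function.Embedding.nonempty_of_card_le hcle
      refine ⟨fun i => if h : i ∈ p.1 then some (e ⟨i, h⟩).1 else none, fun _ => ⟨?_, ?_, ?_⟩⟩
      · intro i hi; exact ⟨(e ⟨i, hi⟩).1, by simp [hi]⟩
      · intro i j hij
        by_cases hi : i ∈ p.1
        · simp only [hi, dif_pos] at hij
          exact ⟨hi, by rw [← Option.some_inj.1 hij]; exact (e ⟨i, hi⟩).2⟩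
        · simp [hi] at hij
      · intro i i' j hi hi'
        by_cases h1 : i ∈ p.1
        · by_cases h2 : i' ∈ p.1
          · simp only [h1, dif_pos] at hi
            simp only [h2, dif_pos] at hi'
            have : e ⟨i, h1⟩ = e ⟨i', h2⟩ := by
              ext
              rw [Option.some_inj.1 hi, Option.some_inj.1 hi']
            exact Subtype.mk_eq_mk.1 (e.injective this)
          · simp [h2] at hi'
        · simp [h1] at hi
    · exact ⟨fun _ => none, fun hc => absurd hc hp⟩
  choose F hF using hFex
  -- the pieces
  refine ⟨fun i j => {x | F (pat x) i = some j}, ?_, ?_, ?_, ?_⟩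
  · -- clopen
    intro i j
    show IsClopen {x | F (pat x) i = some j}
    have : {x | F (pat x) i = some j}
        = ⋃ p ∈ {p : Finset (Fin n) × Finset (Fin m) | F p i = some j}, {x | pat x = p} := by
      ext x
      simp only [Set.mem_setOf_eq, Set.mem_iUnion]
      constructor
      · intro hx; exact ⟨pat x, hx, rfl⟩
      · rintro ⟨p, hp, rfl⟩; exact hp
    rw [this]
    refine (Set.toFinite _).isClopen_biUnion ?_
    intro p _
    have hpe : {x | pat x = p}
        = (⋂ i', {x | x ∈ C i' ↔ i' ∈ p.1}) ∩ ⋂ j', {x | x ∈ B j' ↔ j' ∈ p.2} := by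
      ext x
      simp only [hpat, Set.mem_inter_iff, Set.mem_iInter, Set.mem_setOf_eq, Prod.ext_iff,
        Finset.ext_iff, Finset.mem_filter, Finset.mem_univ, true_and]
    rw [hpe]
    refine IsClopen.inter (isClopen_iInter_of_finite fun i' => ?_)
      (isClopen_iInter_of_finite fun j' => ?_)
    · by_cases hip : i' ∈ p.1
      · have : {x | x ∈ C i' ↔ i' ∈ p.1} = C i' := by ext x; simp [hip]
        rw [this]; exact hC i'
      · have : {x | x ∈ C i' ↔ i' ∈ p.1} = (C i')ᶜ := by ext x; simp [hip]
        rw [this]; exact (hC i').compl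
    · by_cases hjp : j' ∈ p.2
      · have : {x | x ∈ B j' ↔ j' ∈ p.2} = B j' := by ext x; simp [hjp]
        rw [this]; exact hB j'
      · have : {x | x ∈ B j' ↔ j' ∈ p.2} = (B j')ᶜ := by ext x; simp [hjp]
        rw [this]; exact (hB j').compl
  · -- D i j ⊆ B j
    intro i j x hx
    have := ((hF (pat x) (hcard x)).2.1 i j hx).2
    simpa [hpat] using this
  · -- row sums
    intro i x
    by_cases hxi : x ∈ C i
    · have hip : i ∈ (pat x).1 := by simp [hpat, hxi]
      obtain ⟨j₀, hj₀⟩ := (hF (pat x) (hcard x)).1 i hip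
      rw [ind_of_mem hxi]
      have : ∀ j, ind {x' | F (pat x') i = some j} x = if j₀ = j then (1:ℝ) else 0 := by
        intro j
        rw [ind_apply]
        congr 1
        simp only [Set.mem_setOf_eq, hj₀, Option.some_inj, eq_iff_iff]
      rw [Finset.sum_congr rfl (fun j _ => this j), Finset.sum_ite_eq]
      simp
    · have : ∀ j, ind {x' | F (pat x') i = some j} x = 0 := by
        intro j
        refine ind_of_not_mem fun hx => ?_
        exact hxi (by simpa [hpat] using ((hF (pat x) (hcard x)).2.1 i j hx).1)
      rw [ind_of_not_mem hxi, Finset.sum_congr rfl (fun j _ => this j)]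
      simp
  · -- column sums
    intro j x
    show (∑ i, ind {x' | F (pat x') i = some j} x) ≤ ind (B j) x
    by_cases hx : ∃ i, F (pat x) i = some j
    · obtain ⟨i₀, hi₀⟩ := hx
      have hxB : x ∈ B j := by
        have := ((hF (pat x) (hcard x)).2.1 i₀ j hi₀).2
        simpa [hpat] using this
      rw [ind_of_mem hxB]
      have hterm : ∀ i, ind {x' | F (pat x') i = some j} x = if i₀ = i then (1:ℝ) else 0 := by
        intro i
        by_cases hi : F (pat x) i = some j
        · have heq : i₀ = i := ((hF (pat x) (hcard x)).2.2 i i₀ j hi hi₀).symm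
          rw [ind_of_mem (show x ∈ {x' | F (pat x') i = some j} from hi), if_pos heq]
        · have hne : ¬ (i₀ = i) := fun hc => hi (hc ▸ hi₀)
          rw [ind_of_not_mem (show x ∉ {x' | F (pat x') i = some j} from hi), if_neg hne]
      rw [Finset.sum_congr rfl (fun i _ => hterm i), Finset.sum_ite_eq]
      simp
    · have hterm : ∀ i, ind {x' | F (pat x') i = some j} x = 0 := by
        intro i
        exact ind_of_not_mem (fun hc : x ∈ {x' | F (pat x') i = some j} => hx ⟨i, hc⟩)
      rw [Finset.sum_congr rfl (fun i _ => hterm i)]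
      simpa using ind_nonneg (B j) x

include hone hmul hcont in
lemma Sub.trans {f g h : X → ℝ} (h1 : Sub act f g) (h2 : Sub act g h) : Sub act f h := by
  obtain ⟨n, C, u, hC, hf1, hf2⟩ := h1
  obtain ⟨m, E, v, hE, hg1, hg2⟩ := h2
  obtain ⟨D, hDclopen, hDB, hrow, hcol⟩ := refine (fun i => act (u i) '' C i) E
    (fun i => image_act_clopen hone hmul hcont (hC i) (u i)) hE
    (fun x => (hf2 x).trans (hg1 x))
  refine Sub.of_fintype (fun ij : Fin n × Fin m => act (u ij.1)⁻¹ '' D ij.1 ij.2)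
    (fun ij => v ij.2 * u ij.1) (fun ij => image_act_clopen hone hmul hcont (hDclopen _ _) _)
    (fun x => ?_) (fun x => ?_)
  · rw [Fintype.sum_prod_type]
    refine le_trans (hf1 x) (le_of_eq (Finset.sum_congr rfl fun i _ => ?_))
    have : ∀ j, ind (act (u i)⁻¹ '' D i j) x = ind (D i j) (act (u i) x) := by
      intro j
      rw [ind_image_act hone hmul, inv_inv]
    rw [Finset.sum_congr rfl fun j _ => this j, ← hrow i (act (u i) x),
      ind_image_act hone hmul, act_inv_act hone hmul]
  · rw [Fintype.sum_prod_type_right]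
    have step : ∀ j, (∑ i, ind (act (v j * u i) '' (act (u i)⁻¹ '' D i j)) x)
        ≤ ind (act (v j) '' E j) x := by
      intro j
      have e1 : ∀ i, ind (act (v j * u i) '' (act (u i)⁻¹ '' D i j)) x
          = ind (D i j) (act (v j)⁻¹ x) := by
        intro i
        rw [image_act_image_act hone hmul, mul_inv_cancel_right, ind_image_act hone hmul]
      rw [Finset.sum_congr rfl fun i _ => e1 i]
      exact (hcol j (act (v j)⁻¹ x)).trans (le_of_eq (ind_image_act hone hmul _ _ _).symm)
    exact (Finset.sum_le_sum fun j _ => step j).trans (hg2 x)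

include hone hmul hcont in
/-- Finite cover of `X` by preimages of a nonempty clopen set, from minimality. -/
lemma exists_cover [CompactSpace X] (hmin : ∀ x : X, Dense (Set.range fun s : G => act s x))
    {A : Set X} (hA : IsClopen A) (hne : A.Nonempty) :
    ∃ (mw : ℕ) (W : Fin mw → Set X) (w : Fin mw → G),
      (∀ i, IsClopen (W i)) ∧ (∀ x, (1:ℝ) ≤ ∑ i, ind (W i) x) ∧
        (∀ x, ∑ i, ind (act (w i) '' W i) x ≤ (mw:ℝ) * ind A x) := by
  have hcov : ∀ x : X, ∃ s : G, act s x ∈ A := by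
    intro x
    obtain ⟨y, ⟨s, rfl⟩, hy⟩ := (hmin x).exists_mem_open hA.isOpen hne
    exact ⟨s, hy⟩
  obtain ⟨t, ht⟩ := IsCompact.elim_finite_subcover isCompact_univ
    (fun s : G => act s ⁻¹' A) (fun s => hA.isOpen.preimage (hcont s))
    (fun x _ => Set.mem_iUnion.2 (hcov x))
  classical
  have e := t.equivFin
  refine ⟨t.card, fun i => act (e.symm i).1 ⁻¹' A, fun i => (e.symm i).1,
    fun i => hA.preimage (hcont _), fun x => ?_, fun x => ?_⟩
  · obtain ⟨s, hsm, hxs⟩ := Set.mem_iUnion₂.1 (ht (Set.mem_univ x))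
    calc (1:ℝ) = ind (act s ⁻¹' A) x := (ind_of_mem hxs).symm
      _ ≤ ∑ i, ind (act (e.symm i).1 ⁻¹' A) x := by
          have : ind (act s ⁻¹' A) x = ind (act (e.symm (e ⟨s, hsm⟩)).1 ⁻¹' A) x := by
            rw [e.symm_apply_apply]
          rw [this]
          exact Finset.single_le_sum (f := fun i => ind (act (e.symm i).1 ⁻¹' A) x)
            (fun i _ => ind_nonneg _ _) (Finset.mem_univ (e ⟨s, hsm⟩))
  · calc ∑ i, ind (act (e.symm i).1 '' (act (e.symm i).1 ⁻¹' A)) x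
        ≤ ∑ _i : Fin t.card, ind A x :=
          Finset.sum_le_sum fun i _ => ind_mono (Set.image_preimage_subset _ _) x
      _ = (t.card : ℝ) * ind A x := by rw [Finset.sum_const, Finset.card_univ,
          Fintype.card_fin, nsmul_eq_mul]

/-- Convert a `Sub` between multiples of `ind A` into `IsParadoxical`. -/
lemma paradox_of_sub {A : Set X} {k l : ℕ}
    (h : Sub act (fun x => (k:ℝ) * ind A x) (fun x => (l:ℝ) * ind A x)) :
    IsParadoxical act {U : Set X | IsClopen U} A k l := by
  obtain ⟨n, C, u, hC, h1, h2⟩ := h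
  refine ⟨n, C, u, hC, ?_, ?_, ?_⟩
  · intro x hx
    have h1x : (k:ℝ) * ind A x ≤ ∑ i, ind (C i) x := h1 x
    rw [ind_of_mem hx, mul_one, sum_ind] at h1x
    exact_mod_cast h1x
  · intro x hx
    have h2x : ∑ i, ind (act (u i) '' C i) x ≤ (l:ℝ) * ind A x := h2 x
    rw [ind_of_mem hx, mul_one, sum_ind] at h2x
    exact_mod_cast h2x
  · intro x hx i hxi
    have h2x : ∑ i, ind (act (u i) '' C i) x ≤ (l:ℝ) * ind A x := h2 x
    rw [ind_of_not_mem hx, mul_zero] at h2x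
    have hterm : (1:ℝ) ≤ ∑ i', ind (act (u i') '' C i') x := by
      calc (1:ℝ) = ind (act (u i) '' C i) x := (ind_of_mem hxi).symm
        _ ≤ _ := Finset.single_le_sum (f := fun i' => ind (act (u i') '' C i') x)
          (fun i' _ => ind_nonneg _ _) (Finset.mem_univ i)
    linarith

include hone hmul hcont in
lemma telescope {A : Set X} (hA : IsClopen A) (k l M : ℕ) (hl : 0 < l) (hkl : l < k)
    (Q P : X → ℝ) (hQ0 : ∀ x, 0 ≤ Q x)
    (hmain : Sub act (fun x => (k:ℝ) * ind A x + Q x) (fun x => (l:ℝ) * ind A x + P x))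
    (hPQ : Sub act P Q)
    (hPM : Sub act P (fun x => (M:ℝ) * ind A x)) :
    ∃ k' l' : ℕ, 0 < l' ∧ l' < k' ∧
      Sub act (fun x => (k':ℝ) * ind A x) (fun x => (l':ℝ) * ind A x) := by
  have T : ∀ N : ℕ, Sub act (fun x => ((N:ℝ)+1) * k * ind A x + Q x)
      (fun x => ((N:ℝ)+1) * l * ind A x + P x) := by
    intro N
    induction N with
    | zero =>
        refine Sub.mono (fun x => le_of_eq (by ring)) (fun x => le_of_eq (by ring)) hmain
    | succ N ih =>
        -- step 1 : add (N+1)k·1A copies to hmain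
        have s1 := Sub.add (Sub.refl_nsmul_ind hone hmul hA ((N+1)*k)) hmain
        -- step 2 : transport P back to Q
        have s2 := Sub.add (Sub.refl_nsmul_ind hone hmul hA ((N+1)*k + l)) hPQ
        -- step 3 : use the inductive hypothesis
        have s3 := Sub.add ih (Sub.refl_nsmul_ind hone hmul hA l)
        have s2' : Sub act
            (fun x => (((N+1)*k : ℕ) : ℝ) * ind A x + ((l:ℝ) * ind A x + P x))
            (fun x => ((N:ℝ)+1) * (k:ℝ) * ind A x + Q x + (l:ℝ) * ind A x) :=
          Sub.mono (fun x => le_of_eq (by push_cast; ring))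
            (fun x => le_of_eq (by push_cast; ring)) s2
        have s3' : Sub act
            (fun x => ((N:ℝ)+1) * (k:ℝ) * ind A x + Q x + (l:ℝ) * ind A x)
            (fun x => ((N:ℝ) + 2) * (l:ℝ) * ind A x + P x) :=
          Sub.mono (fun x => le_rfl) (fun x => le_of_eq (by push_cast; ring)) s3
        have t1 := s1.trans hone hmul hcont s2'
        have t2 := t1.trans hone hmul hcont s3'
        refine Sub.mono (fun x => le_of_eq ?_) (fun x => le_of_eq ?_) t2
        · push_cast; ring
        · push_cast; ring
  -- now take N := M and drop Q, absorb P
  have final1 := (T M).trans hone hmul hcont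
    (Sub.add (Sub.refl_nsmul_ind hone hmul hA ((M+1)*l)) hPM |>.mono
      (fun x => le_of_eq (by push_cast; ring)) (fun x => le_rfl))
  refine ⟨(M+1)*k, (M+1)*l + M, by positivity, ?_, ?_⟩
  · have e1 : (M+1)*(l+1) = (M+1)*l + (M+1) := Nat.mul_succ _ _
    have e2 : (M+1)*(l+1) ≤ (M+1)*k := Nat.mul_le_mul_left _ (by omega)
    omega
  · refine Sub.mono (fun x => ?_) (fun x => le_of_eq (by push_cast; ring)) final1
    have := hQ0 x
    push_cast
    nlinarith [ind_nonneg A x]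

lemma sum_fin_mul {q : ℕ} {ι : Type*} [Fintype ι] (f : ι → ℝ) :
    ∑ p : Fin q × ι, f p.2 = (q:ℝ) * ∑ i, f i := by
  rw [Fintype.sum_prod_type]
  show (∑ _x : Fin q, ∑ y : ι, f y) = _
  rw [Finset.sum_const, Finset.card_univ, Fintype.card_fin, nsmul_eq_mul]

include hone hmul hcont in
/-- A witness with ratio `< 1` against `A` contradicts complete nonparadoxicality. -/
lemma no_small_witness [CompactSpace X]
    (hmin : ∀ x : X, Dense (Set.range fun s : G => act s x))
    {A : Set X} (hA : IsClopen A) (hne : A.Nonempty)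
    (hnp : CompletelyNonparadoxical act {U : Set X | IsClopen U} A)
    {a τ : ℝ} (ha : 0 ≤ a) (hlt : a < τ)
    {r : ℕ} (U : Fin r → Set X) (t : Fin r → G) (hU : ∀ j, IsClopen (U j))
    {n : ℕ} (C : Fin n → Set X) (u : Fin n → G) (hC : ∀ i, IsClopen (C i))
    (h1 : ∀ x, τ * ind A x + ∑ j, (ind (U j) x - ind (act (t j) '' U j) x)
      ≤ ∑ i, ind (C i) x)
    (h2 : ∀ x, ∑ i, ind (act (u i) '' C i) x ≤ a * ind A x) : False := by
  obtain ⟨mw, W, w, hW, hW1, hW2⟩ := exists_cover hone hmul hcont hmin hA hne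
  have hτa : 0 < τ - a := by linarith
  obtain ⟨q, hq⟩ := exists_nat_gt (3 / (τ - a))
  have hq0 : 0 < (q:ℝ) := lt_trans (div_pos (by norm_num) hτa) hq
  have hq3 : 3 < (q:ℝ) * (τ - a) := by
    rw [div_lt_iff₀ hτa] at hq; linarith
  set k := ⌊(q:ℝ) * τ⌋₊ with hkdef
  set l := ⌈(q:ℝ) * a⌉₊ + 1 with hldef
  have hτ0 : 0 ≤ τ := le_of_lt (lt_of_le_of_lt ha hlt)
  have hk : (k:ℝ) ≤ (q:ℝ) * τ := Nat.floor_le (by positivity)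
  have hk' : (q:ℝ) * τ - 1 < (k:ℝ) := Nat.sub_one_lt_floor _
  have hlle : ((l:ℕ):ℝ) < (q:ℝ) * a + 2 := by
    have := Nat.ceil_lt_add_one (by positivity : (0:ℝ) ≤ (q:ℝ) * a)
    push_cast [hldef]
    linarith
  have hlge : (q:ℝ) * a + 1 ≤ ((l:ℕ):ℝ) := by
    have := Nat.le_ceil ((q:ℝ) * a)
    push_cast [hldef]
    linarith
  have hkl : l < k := by
    have : ((l:ℕ):ℝ) < (k:ℝ) := by nlinarith
    exact_mod_cast this
  have hl0 : 0 < l := Nat.succ_pos _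
  set Q := fun x => (q:ℝ) * ∑ j, ind (U j) x with hQdef
  set P := fun x => (q:ℝ) * ∑ j, ind (act (t j) '' U j) x with hPdef
  have hQ0 : ∀ x, 0 ≤ Q x := fun x => by
    have : 0 ≤ ∑ j, ind (U j) x := Finset.sum_nonneg fun j _ => ind_nonneg _ _
    positivity
  -- the main Sub
  have hmain : Sub act (fun x => (k:ℝ) * ind A x + Q x) (fun x => (l:ℝ) * ind A x + P x) := by
    refine Sub.of_fintype
      (Sum.elim (fun p : Fin q × Fin n => C p.2) (fun p : Fin q × Fin r => act (t p.2) '' U p.2))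
      (Sum.elim (fun p : Fin q × Fin n => u p.2) (fun _ => (1:G))) ?_ ?_ ?_
    · rintro (p | p)
      · exact hC p.2
      · exact image_act_clopen hone hmul hcont (hU p.2) (t p.2)
    · intro x
      rw [Fintype.sum_sum_type]
      simp only [Sum.elim_inl, Sum.elim_inr]
      rw [sum_fin_mul (fun i => ind (C i) x), sum_fin_mul (fun j => ind (act (t j) '' U j) x)]
      have e1 := h1 x
      rw [Finset.sum_sub_distrib] at e1
      have e2 := mul_le_mul_of_nonneg_left e1 (le_of_lt hq0)
      have e3 : (k:ℝ) * ind A x ≤ (q:ℝ) * τ * ind A x :=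
        mul_le_mul_of_nonneg_right hk (ind_nonneg A x)
      simp only [hQdef]
      nlinarith
    · intro x
      rw [Fintype.sum_sum_type]
      simp only [Sum.elim_inl, Sum.elim_inr]
      have him : ∀ p : Fin q × Fin r,
          ind (act 1 '' (act (t p.2) '' U p.2)) x = ind (act (t p.2) '' U p.2) x := by
        intro p
        rw [image_act_one hone hmul]
      rw [Finset.sum_congr rfl fun p _ => him p,
        sum_fin_mul (fun i => ind (act (u i) '' C i) x),
        sum_fin_mul (fun j => ind (act (t j) '' U j) x)]
      have e1 := h2 x
      have e2 := mul_le_mul_of_nonneg_left e1 (le_of_lt hq0)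
      have e3 : (q:ℝ) * a * ind A x ≤ (l:ℝ) * ind A x := by
        refine mul_le_mul_of_nonneg_right ?_ (ind_nonneg A x)
        linarith
      simp only [hPdef]
      nlinarith
  -- transporting P back to Q
  have hPQ : Sub act P Q := by
    refine Sub.of_fintype (fun p : Fin q × Fin r => act (t p.2) '' U p.2)
      (fun p => (t p.2)⁻¹) (fun p => image_act_clopen hone hmul hcont (hU p.2) (t p.2))
      (fun x => ?_) (fun x => ?_)
    · show P x ≤ ∑ p : Fin q × Fin r, ind (act (t p.2) '' U p.2) x
      rw [sum_fin_mul (fun j => ind (act (t j) '' U j) x)]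
    · have him : ∀ p : Fin q × Fin r,
          ind (act (t p.2)⁻¹ '' (act (t p.2) '' U p.2)) x = ind (U p.2) x := by
        intro p
        rw [image_act_image_act hone hmul, inv_mul_cancel, image_act_one hone hmul]
      show (∑ p : Fin q × Fin r, ind (act (t p.2)⁻¹ '' (act (t p.2) '' U p.2)) x) ≤ Q x
      rw [Finset.sum_congr rfl fun p _ => him p, sum_fin_mul (fun j => ind (U j) x)]
  -- bounding P by a multiple of ind A, via the cover
  have hPM : Sub act P (fun x => ((q*r*mw : ℕ):ℝ) * ind A x) := by
    refine Sub.of_fintype (fun p : Fin (q*r) × Fin mw => W p.2)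
      (fun p => w p.2) (fun p => hW p.2) (fun x => ?_) (fun x => ?_)
    · show P x ≤ ∑ p : Fin (q*r) × Fin mw, ind (W p.2) x
      rw [sum_fin_mul (fun i => ind (W i) x)]
      have hP1 : P x ≤ (q:ℝ) * r := by
        simp only [hPdef]
        have : ∑ j, ind (act (t j) '' U j) x ≤ (r:ℝ) := by
          calc ∑ j, ind (act (t j) '' U j) x ≤ ∑ _j : Fin r, (1:ℝ) :=
            Finset.sum_le_sum fun j _ => ind_le_one _ _
            _ = (r:ℝ) := by rw [Finset.sum_const, Finset.card_univ, Fintype.card_fin,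
                nsmul_eq_mul, mul_one]
        nlinarith
      have hqr : ((q*r : ℕ):ℝ) = (q:ℝ) * r := by push_cast; ring
      calc P x ≤ (q:ℝ) * r := hP1
        _ = ((q*r:ℕ):ℝ) * 1 := by rw [hqr, mul_one]
        _ ≤ ((q*r:ℕ):ℝ) * ∑ i, ind (W i) x := by
            refine mul_le_mul_of_nonneg_left (hW1 x) (by positivity)
    · show (∑ p : Fin (q*r) × Fin mw, ind (act (w p.2) '' W p.2) x) ≤ ((q*r*mw : ℕ):ℝ) * ind A x
      rw [sum_fin_mul (fun i => ind (act (w i) '' W i) x)]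
      calc ((q*r:ℕ):ℝ) * ∑ i, ind (act (w i) '' W i) x
          ≤ ((q*r:ℕ):ℝ) * ((mw:ℝ) * ind A x) :=
            mul_le_mul_of_nonneg_left (hW2 x) (by positivity)
        _ = ((q*r*mw : ℕ):ℝ) * ind A x := by push_cast; ring
  obtain ⟨k', l', hl', hkl', hsub⟩ := telescope hone hmul hcont hA k l (q*r*mw) hl0 hkl
    Q P hQ0 hmain hPQ hPM
  exact hnp k' l' hl' hkl' (paradox_of_sub hsub)

end Action

section Functional

variable (act : G → X → X) (A : Set X)

/-- Sums of differences of clopen indicators and their translates. -/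
def Iset : Set (X → ℝ) :=
  {h | ∃ (r : ℕ) (U : Fin r → Set X) (t : Fin r → G), (∀ j, IsClopen (U j)) ∧
    h = fun x => ∑ j, (ind (U j) x - ind (act (t j) '' U j) x)}

/-- Witness set for the upper content. -/
def WS (g : X → ℝ) : Set ℝ :=
  {a : ℝ | 0 ≤ a ∧ ∃ h ∈ Iset act, Sub act (fun x => g x + h x) (fun x => a * ind A x)}

/-- Upper content. -/
noncomputable def UU (g : X → ℝ) : ℝ := sInf (WS act A g)

/-- The set over which the sublinear functional is an infimum. -/
def PS (f : X → ℝ) : Set ℝ :=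
  {v | ∃ ν : ℝ, 0 < ν ∧ v = UU act A (fun x => ν * f x) / ν}

/-- The sublinear functional. -/
noncomputable def pp (f : X → ℝ) : ℝ := sInf (PS act A f)

/-- boundedness, with a natural bound -/
def Bdd (f : X → ℝ) : Prop := ∃ K : ℕ, ∀ x, |f x| ≤ (K:ℝ)

variable {act A}

lemma Bdd.const_mul {f : X → ℝ} (hf : Bdd f) (c : ℝ) : Bdd (fun x => c * f x) := by
  obtain ⟨K, hK⟩ := hf
  refine ⟨⌈|c|⌉₊ * K, fun x => ?_⟩
  rw [abs_mul]
  push_cast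
  have h1 : |c| ≤ (⌈|c|⌉₊ : ℝ) := Nat.le_ceil _
  have h2 := hK x
  have h3 : (0:ℝ) ≤ (⌈|c|⌉₊ : ℝ) := by positivity
  nlinarith [abs_nonneg (f x), abs_nonneg c]

lemma Bdd.add {f g : X → ℝ} (hf : Bdd f) (hg : Bdd g) : Bdd (fun x => f x + g x) := by
  obtain ⟨K, hK⟩ := hf
  obtain ⟨L, hL⟩ := hg
  refine ⟨K + L, fun x => ?_⟩
  push_cast
  calc |f x + g x| ≤ |f x| + |g x| := abs_add_le _ _
    _ ≤ (K:ℝ) + L := add_le_add (hK x) (hL x)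

lemma Iset.zero_mem : (fun _ : X => (0:ℝ)) ∈ Iset act := by
  refine ⟨0, fun i => i.elim0, fun i => i.elim0, fun i => i.elim0, ?_⟩
  funext x
  simp

lemma Iset.add_mem {h₁ h₂ : X → ℝ} (H₁ : h₁ ∈ Iset act) (H₂ : h₂ ∈ Iset act) :
    (fun x => h₁ x + h₂ x) ∈ Iset act := by
  obtain ⟨r₁, U₁, t₁, hU₁, he₁⟩ := H₁
  obtain ⟨r₂, U₂, t₂, hU₂, he₂⟩ := H₂
  refine ⟨r₁ + r₂, Fin.append U₁ U₂, Fin.append t₁ t₂, ?_, ?_⟩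
  · intro j
    refine Fin.addCases (fun i => ?_) (fun i => ?_) j
    · rw [Fin.append_left]; exact hU₁ i
    · rw [Fin.append_right]; exact hU₂ i
  · funext x
    simp only [he₁, he₂]
    rw [Fin.sum_univ_add]
    congr 1
    · exact Finset.sum_congr rfl fun i _ => by rw [Fin.append_left, Fin.append_left]
    · exact Finset.sum_congr rfl fun i _ => by rw [Fin.append_right, Fin.append_right]

lemma WS_bddBelow (g : X → ℝ) : BddBelow (WS act A g) := ⟨0, fun a ha => ha.1⟩

lemma UU_nonneg (g : X → ℝ) : 0 ≤ UU act A g := Real.sInf_nonneg fun a ha => ha.1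

lemma UU_le {g : X → ℝ} {a : ℝ} (h : a ∈ WS act A g) : UU act A g ≤ a :=
  csInf_le (WS_bddBelow g) h

lemma WS.add {g₁ g₂ : X → ℝ} {a₁ a₂ : ℝ} (h₁ : a₁ ∈ WS act A g₁) (h₂ : a₂ ∈ WS act A g₂) :
    a₁ + a₂ ∈ WS act A (fun x => g₁ x + g₂ x) := by
  obtain ⟨ha₁, k₁, hk₁, hs₁⟩ := h₁
  obtain ⟨ha₂, k₂, hk₂, hs₂⟩ := h₂
  refine ⟨by linarith, fun x => k₁ x + k₂ x, Iset.add_mem hk₁ hk₂, ?_⟩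
  refine Sub.mono (fun x => le_of_eq (by ring)) (fun x => le_of_eq (by ring)) (hs₁.add hs₂)

lemma UU_add {g₁ g₂ : X → ℝ} (h₁ : (WS act A g₁).Nonempty) (h₂ : (WS act A g₂).Nonempty) :
    UU act A (fun x => g₁ x + g₂ x) ≤ UU act A g₁ + UU act A g₂ := by
  have key : ∀ a₁ ∈ WS act A g₁, ∀ a₂ ∈ WS act A g₂,
      UU act A (fun x => g₁ x + g₂ x) ≤ a₁ + a₂ :=
    fun a₁ ha₁ a₂ ha₂ => UU_le (WS.add ha₁ ha₂)
  have step : ∀ a₁ ∈ WS act A g₁, UU act A (fun x => g₁ x + g₂ x) ≤ a₁ + UU act A g₂ := by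
    intro a₁ ha₁
    have : UU act A (fun x => g₁ x + g₂ x) - a₁ ≤ UU act A g₂ :=
      le_csInf h₂ fun a₂ ha₂ => by linarith [key a₁ ha₁ a₂ ha₂]
    linarith
  have : UU act A (fun x => g₁ x + g₂ x) - UU act A g₂ ≤ UU act A g₁ :=
    le_csInf h₁ fun a₁ ha₁ => by linarith [step a₁ ha₁]
  linarith

section CoverBased

variable (hone : ∀ x, act 1 x = x) (hmul : ∀ s t x, act (s * t) x = act s (act t x))
  (hcont : ∀ s, Continuous (act s))
variable {mw : ℕ} {W : Fin mw → Set X} {w : Fin mw → G}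
variable (hW : ∀ i, IsClopen (W i)) (hW1 : ∀ x, (1:ℝ) ≤ ∑ i, ind (W i) x)
  (hW2 : ∀ x, ∑ i, ind (act (w i) '' W i) x ≤ (mw:ℝ) * ind A x)

include hW hW1 hW2 in
lemma mem_WS_of_le (g : X → ℝ) (K : ℕ) (hg : ∀ x, g x ≤ (K:ℝ)) :
    ((K * mw : ℕ):ℝ) ∈ WS act A g := by
  refine ⟨by positivity, fun _ => 0, Iset.zero_mem, ?_⟩
  refine Sub.of_fintype (fun p : Fin K × Fin mw => W p.2) (fun p => w p.2)
    (fun p => hW p.2) (fun x => ?_) (fun x => ?_)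
  · show g x + 0 ≤ ∑ p : Fin K × Fin mw, ind (W p.2) x
    rw [sum_fin_mul (fun i => ind (W i) x)]
    have h1 := hW1 x
    have h2 := hg x
    have h3 : (0:ℝ) ≤ (K:ℝ) := by positivity
    nlinarith
  · show (∑ p : Fin K × Fin mw, ind (act (w p.2) '' W p.2) x) ≤ ((K * mw : ℕ):ℝ) * ind A x
    rw [sum_fin_mul (fun i => ind (act (w i) '' W i) x)]
    have h1 := hW2 x
    have h3 : (0:ℝ) ≤ (K:ℝ) := by positivity
    push_cast
    nlinarith

include hW hW1 hW2 in
lemma WS_nonempty {g : X → ℝ} (hg : Bdd g) : (WS act A g).Nonempty := by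
  obtain ⟨K, hK⟩ := hg
  exact ⟨_, mem_WS_of_le hW hW1 hW2 g K fun x => (le_abs_self _).trans (hK x)⟩

lemma UU_mono {g₁ g₂ : X → ℝ} (h : ∀ x, g₁ x ≤ g₂ x) (h₂ : (WS act A g₂).Nonempty) :
    UU act A g₁ ≤ UU act A g₂ := by
  refine csInf_le_csInf (WS_bddBelow _) h₂ ?_
  rintro a ⟨ha, kk, hk, hs⟩
  exact ⟨ha, kk, hk, Sub.mono (fun x => add_le_add (h x) le_rfl) (fun x => le_rfl) hs⟩

lemma UU_zero_smul (g : X → ℝ) : UU act A (fun x => 0 * g x) ≤ 0 := by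
  refine UU_le ⟨le_refl 0, _, Iset.zero_mem (act := act), ?_⟩
  refine ⟨0, fun i => i.elim0, fun i => i.elim0, fun i => i.elim0, fun x => by simp, fun x => by simp⟩

include hW hW1 hW2 in
lemma UU_nsmul {g : X → ℝ} (hg : Bdd g) (N : ℕ) :
    UU act A (fun x => (N:ℝ) * g x) ≤ (N:ℝ) * UU act A g := by
  induction N with
  | zero => simpa using UU_zero_smul g
  | succ N ih =>
      have he : (fun x => ((N+1:ℕ):ℝ) * g x) = (fun x => (N:ℝ) * g x + g x) := by
        funext x; push_cast; ring
      rw [he]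
      have h1 := UU_add (WS_nonempty hW hW1 hW2 (hg.const_mul (N:ℝ)))
        (WS_nonempty hW hW1 hW2 hg)
      push_cast
      nlinarith [UU_nonneg (act := act) (A := A) g]

lemma PS_nonempty (f : X → ℝ) : (PS act A f).Nonempty := ⟨_, 1, one_pos, rfl⟩

lemma PS_bddBelow (f : X → ℝ) : BddBelow (PS act A f) := by
  refine ⟨0, ?_⟩
  rintro v ⟨ν, hν, rfl⟩
  exact div_nonneg (UU_nonneg _) hν.le

lemma pp_nonneg (f : X → ℝ) : 0 ≤ pp act A f := by
  refine Real.sInf_nonneg ?_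
  rintro v ⟨ν, hν, rfl⟩
  exact div_nonneg (UU_nonneg _) hν.le

lemma pp_le {f : X → ℝ} {ν : ℝ} (hν : 0 < ν) :
    pp act A f ≤ UU act A (fun x => ν * f x) / ν :=
  csInf_le (PS_bddBelow f) ⟨ν, hν, rfl⟩

lemma pp_smul_le {c : ℝ} (hc : 0 < c) (f : X → ℝ) :
    pp act A (fun x => c * f x) ≤ c * pp act A f := by
  have key : ∀ v ∈ PS act A f, pp act A (fun x => c * f x) ≤ c * v := by
    rintro v ⟨ν, hν, rfl⟩
    have hν' : 0 < ν / c := div_pos hν hc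
    have he : (fun x => (ν / c) * (c * f x)) = (fun x => ν * f x) := by
      funext x
      rw [← mul_assoc, div_mul_cancel₀ _ hc.ne']
    calc pp act A (fun x => c * f x)
        ≤ UU act A (fun x => (ν / c) * (c * f x)) / (ν / c) := pp_le hν'
      _ = c * (UU act A (fun x => ν * f x) / ν) := by rw [he]; field_simp
  have h2 : pp act A (fun x => c * f x) / c ≤ pp act A f :=
    le_csInf (PS_nonempty f) fun v hv => (div_le_iff₀' hc).2 (key v hv)
  calc pp act A (fun x => c * f x) = c * (pp act A (fun x => c * f x) / c) := by field_simp
    _ ≤ c * pp act A f := mul_le_mul_of_nonneg_left h2 hc.le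

lemma pp_smul {c : ℝ} (hc : 0 < c) (f : X → ℝ) :
    pp act A (fun x => c * f x) = c * pp act A f := by
  refine le_antisymm (pp_smul_le hc f) ?_
  have h2 := pp_smul_le (act := act) (A := A) (inv_pos.2 hc) (fun x => c * f x)
  have he : (fun x => c⁻¹ * (c * f x)) = f := funext fun x => inv_mul_cancel_left₀ hc.ne' _
  rw [he] at h2
  have := mul_le_mul_of_nonneg_left h2 hc.le
  rwa [mul_inv_cancel_left₀ hc.ne'] at this

lemma pp_nonpos {f : X → ℝ} (hf : ∀ x, f x ≤ 0) : pp act A f ≤ 0 := by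
  have h0 : (0:ℝ) ∈ WS act A (fun x => 1 * f x) := by
    refine ⟨le_refl 0, _, Iset.zero_mem, ?_⟩
    refine ⟨0, fun i => i.elim0, fun i => i.elim0, fun i => i.elim0, fun x => ?_, fun x => by simp⟩
    simpa using (by linarith [hf x] : 1 * f x + 0 ≤ 0)
  have hU0 : UU act A (fun x => 1 * f x) ≤ 0 := UU_le h0
  have h1 : pp act A f ≤ UU act A (fun x => 1 * f x) / 1 := pp_le one_pos
  rw [div_one] at h1
  linarith

include hone hmul hcont hW hW1 hW2 in
lemma pp_transport_le {V : Set X} (hV : IsClopen V) (g : G) :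
    pp act A (fun x => ind V x - ind (act g '' V) x) ≤ 0 := by
  have him : act g⁻¹ '' (act g '' V) = V := by
    rw [image_act_image_act hone hmul, inv_mul_cancel, image_act_one hone hmul]
  have key : ∀ ν : ℝ, 0 < ν →
      pp act A (fun x => ind V x - ind (act g '' V) x) ≤ (mw:ℝ) / ν := by
    intro ν hν
    set r := ⌈ν⌉₊ with hrdef
    have hmem : (mw:ℝ) ∈ WS act A (fun x => ν * (ind V x - ind (act g '' V) x)) := by
      refine ⟨by positivity,
        fun x => ∑ _j : Fin r, (ind (act g '' V) x - ind (act g⁻¹ '' (act g '' V)) x),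
        ⟨r, fun _ => act g '' V, fun _ => g⁻¹,
          fun _ => image_act_clopen hone hmul hcont hV g, rfl⟩, ?_⟩
      refine ⟨mw, W, w, hW, fun x => ?_, fun x => ?_⟩
      · show ν * (ind V x - ind (act g '' V) x) +
          (∑ _j : Fin r, (ind (act g '' V) x - ind (act g⁻¹ '' (act g '' V)) x))
          ≤ ∑ i, ind (W i) x
        have hsum : (∑ _j : Fin r, (ind (act g '' V) x - ind (act g⁻¹ '' (act g '' V)) x))
            = (r:ℝ) * (ind (act g '' V) x - ind V x) := by
          rw [him, Finset.sum_const, Finset.card_univ, Fintype.card_fin, nsmul_eq_mul]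
        rw [hsum]
        have hr1 : ν ≤ (r:ℝ) := Nat.le_ceil ν
        have hr2 : (r:ℝ) < ν + 1 := Nat.ceil_lt_add_one hν.le
        have h1 := hW1 x
        have hi1 := ind_nonneg V x
        have hi2 := ind_le_one V x
        have hi3 := ind_nonneg (act g '' V) x
        have hi4 := ind_le_one (act g '' V) x
        nlinarith
      · exact hW2 x
    have hUU := UU_le hmem
    have := pp_le (act := act) (A := A) (f := fun x => ind V x - ind (act g '' V) x) hν
    refine this.trans ?_
    gcongr
  refine le_of_forall_pos_le_add fun ε hε => ?_
  have hν : (0:ℝ) < ((mw:ℝ)+1)/ε := by positivity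
  have h1 := key _ hν
  have h2 : (mw:ℝ) / (((mw:ℝ)+1)/ε) ≤ ε := by
    rw [div_div_eq_mul_div, div_le_iff₀ (by positivity : (0:ℝ) < (mw:ℝ)+1)]
    nlinarith
  linarith

include hW hW1 hW2 in
lemma UU_step {h : X → ℝ} {K : ℕ} (hK : ∀ x, |h x| ≤ (K:ℝ)) {lam ν : ℝ}
    (hlam : 0 < lam) (hν : lam ≤ ν) :
    UU act A (fun x => ν * h x) ≤ (ν/lam) * UU act A (fun x => lam * h x)
      + ((⌈lam * K⌉₊ * mw : ℕ):ℝ) := by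
  set q := ⌊ν/lam⌋₊ with hqdef
  set ρ := ν - q * lam with hρdef
  have hν0 : 0 < ν := lt_of_lt_of_le hlam hν
  have hq1 : (q:ℝ) ≤ ν/lam := Nat.floor_le (by positivity)
  have hq2 : ν/lam < q + 1 := Nat.lt_floor_add_one _
  have hq1' : (q:ℝ) * lam ≤ ν := (le_div_iff₀ hlam).1 hq1
  have hq2' : ν < ((q:ℝ) + 1) * lam := (div_lt_iff₀ hlam).1 hq2
  have hρ0 : 0 ≤ ρ := by rw [hρdef]; linarith
  have hρlam : ρ ≤ lam := by rw [hρdef]; nlinarith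
  have hdecomp : (fun x => ν * h x) = (fun x => (q:ℝ) * (lam * h x) + ρ * h x) := by
    funext x; rw [hρdef]; ring
  rw [hdecomp]
  have hBlam : Bdd (fun x => lam * h x) := Bdd.const_mul ⟨K, hK⟩ lam
  have h1 := UU_add (g₁ := fun x => (q:ℝ) * (lam * h x)) (g₂ := fun x => ρ * h x)
    (WS_nonempty hW hW1 hW2 (hBlam.const_mul (q:ℝ)))
    (WS_nonempty hW hW1 hW2 (Bdd.const_mul ⟨K, hK⟩ ρ))
  have h2 := UU_nsmul (A := A) hW hW1 hW2 hBlam q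
  have h3 : UU act A (fun x => ρ * h x) ≤ ((⌈lam * K⌉₊ * mw : ℕ):ℝ) := by
    refine UU_le (mem_WS_of_le hW hW1 hW2 _ _ fun x => ?_)
    have e1 : ρ * h x ≤ |ρ * h x| := le_abs_self _
    have e2 : |ρ * h x| = ρ * |h x| := by rw [abs_mul, abs_of_nonneg hρ0]
    have e3 : ρ * |h x| ≤ lam * (K:ℝ) :=
      mul_le_mul hρlam (hK x) (abs_nonneg _) hlam.le
    have e4 : lam * (K:ℝ) ≤ (⌈lam * K⌉₊ : ℝ) := Nat.le_ceil _
    linarith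
  have h4 : (q:ℝ) * UU act A (fun x => lam * h x)
      ≤ (ν/lam) * UU act A (fun x => lam * h x) :=
    mul_le_mul_of_nonneg_right hq1 (UU_nonneg _)
  linarith

include hW hW1 hW2 in
lemma pp_add {f g : X → ℝ} (hf : Bdd f) (hg : Bdd g) :
    pp act A (fun x => f x + g x) ≤ pp act A f + pp act A g := by
  obtain ⟨Kf, hKf⟩ := hf
  obtain ⟨Kg, hKg⟩ := hg
  refine le_of_forall_pos_le_add fun ε hε => ?_
  obtain ⟨vf, ⟨lam, hlam, rfl⟩, hvf'⟩ := exists_lt_of_csInf_lt (PS_nonempty (act := act) (A := A) f)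
    (show pp act A f < pp act A f + ε/4 by linarith)
  obtain ⟨vg, ⟨mu, hmu, rfl⟩, hvg'⟩ := exists_lt_of_csInf_lt (PS_nonempty (act := act) (A := A) g)
    (show pp act A g < pp act A g + ε/4 by linarith)
  set B1 := ((⌈lam * Kf⌉₊ * mw : ℕ):ℝ) with hB1def
  set B2 := ((⌈mu * Kg⌉₊ * mw : ℕ):ℝ) with hB2def
  have hB1 : 0 ≤ B1 := by rw [hB1def]; positivity
  have hB2 : 0 ≤ B2 := by rw [hB2def]; positivity
  set ν := max (max lam mu) (2*(B1+B2+1)/ε) with hνdef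
  have hνlam : lam ≤ ν := le_max_of_le_left (le_max_left _ _)
  have hνmu : mu ≤ ν := le_max_of_le_left (le_max_right _ _)
  have hν0 : 0 < ν := lt_of_lt_of_le hlam hνlam
  have hνB : (B1 + B2)/ν ≤ ε/2 := by
    have h1 : 2*(B1+B2+1)/ε ≤ ν := le_max_right _ _
    rw [div_le_div_iff₀ hν0 (by norm_num : (0:ℝ) < 2)]
    rw [div_le_iff₀ hε] at h1
    nlinarith
  have hs1 := UU_step (A := A) hW hW1 hW2 hKf hlam hνlam
  have hs2 := UU_step (A := A) hW hW1 hW2 hKg hmu hνmu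
  have hsplit : UU act A (fun x => ν * (f x + g x))
      ≤ UU act A (fun x => ν * f x) + UU act A (fun x => ν * g x) := by
    have he : (fun x => ν * (f x + g x)) = (fun x => ν * f x + ν * g x) := by
      funext x; ring
    rw [he]
    exact UU_add (WS_nonempty hW hW1 hW2 (Bdd.const_mul ⟨Kf, hKf⟩ ν))
      (WS_nonempty hW hW1 hW2 (Bdd.const_mul ⟨Kg, hKg⟩ ν))
  have hfinal : UU act A (fun x => ν * (f x + g x))
      ≤ (ν/lam) * UU act A (fun x => lam * f x) + (ν/mu) * UU act A (fun x => mu * g x)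
        + (B1 + B2) := by
    linarith
  have hdiv : pp act A (fun x => f x + g x) ≤ UU act A (fun x => ν * (f x + g x)) / ν :=
    pp_le hν0
  have heq : ((ν/lam) * UU act A (fun x => lam * f x) + (ν/mu) * UU act A (fun x => mu * g x)
      + (B1 + B2)) / ν
      = UU act A (fun x => lam * f x) / lam + UU act A (fun x => mu * g x) / mu
        + (B1 + B2)/ν := by
    field_simp
  have hmono : UU act A (fun x => ν * (f x + g x)) / ν
      ≤ ((ν/lam) * UU act A (fun x => lam * f x) + (ν/mu) * UU act A (fun x => mu * g x)
        + (B1 + B2)) / ν := by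
    gcongr
  rw [heq] at hmono
  linarith

include hone hmul hcont hW hW1 hW2 in
lemma pp_one_le [CompactSpace X] (hmin : ∀ x : X, Dense (Set.range fun s : G => act s x))
    (hA : IsClopen A) (hne : A.Nonempty)
    (hnp : CompletelyNonparadoxical act {U : Set X | IsClopen U} A) :
    1 ≤ pp act A (ind A) := by
  refine le_csInf (PS_nonempty _) ?_
  rintro v ⟨ν, hν, rfl⟩
  rw [le_div_iff₀ hν, one_mul]
  have hBdd : Bdd (fun x => ν * ind A x) :=
    Bdd.const_mul ⟨1, fun x => by
      rw [abs_of_nonneg (ind_nonneg A x)]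
      exact_mod_cast ind_le_one A x⟩ ν
  refine le_csInf (WS_nonempty hW hW1 hW2 hBdd) ?_
  rintro a ⟨ha0, hh, ⟨r, U, t, hU, rfl⟩, hsub⟩
  by_contra hcon
  push_neg at hcon
  obtain ⟨n, C, u, hC, h1, h2⟩ := hsub
  exact no_small_witness hone hmul hcont hmin hA hne hnp ha0 hcon U t hU C u hC h1 h2

end CoverBased

end Functional

lemma clopen_separation {X : Type*} [TopologicalSpace X]
    (hzd : TopologicalSpace.IsTopologicalBasis {U : Set X | IsClopen U})
    {K L : Set X} (hK : IsCompact K) (hL : IsClosed L) (hd : Disjoint K L) :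
    ∃ V, IsClopen V ∧ K ⊆ V ∧ Disjoint V L := by
  have hx : ∀ x ∈ K, ∃ V, IsClopen V ∧ x ∈ V ∧ V ⊆ Lᶜ := by
    intro x hxK
    have hxL : x ∈ Lᶜ := Set.disjoint_left.1 hd hxK
    obtain ⟨V, hV, hxV, hVsub⟩ := hzd.exists_subset_of_mem_open hxL hL.isOpen_compl
    exact ⟨V, hV, hxV, hVsub⟩
  choose! V hV1 hV2 hV3 using hx
  obtain ⟨b', hb'sub, hb'fin, hcover⟩ := hK.elim_finite_subcover_image
    (fun x hxK => (hV1 x hxK).isOpen) (fun x hxK => Set.mem_biUnion hxK (hV2 x hxK))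
  refine ⟨⋃ x ∈ b', V x, hb'fin.isClopen_biUnion (fun x hx => hV1 x (hb'sub hx)), hcover, ?_⟩
  rw [Set.disjoint_left]
  intro y hy
  obtain ⟨x, hxb, hyV⟩ := Set.mem_iUnion₂.1 hy
  exact hV3 x (hb'sub hxb) hyV

lemma measure_of_premeasure {X : Type*} [TopologicalSpace X] [CompactSpace X] [T2Space X]
    [MeasurableSpace X] [BorelSpace X]
    (hzd : TopologicalSpace.IsTopologicalBasis {U : Set X | IsClopen U})
    (mR : Set X → ℝ)
    (h0 : ∀ V, 0 ≤ mR V)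
    (hadd : ∀ V₁ V₂, Disjoint V₁ V₂ → mR (V₁ ∪ V₂) = mR V₁ + mR V₂)
    (hmono : ∀ V₁ V₂ : Set X, V₁ ⊆ V₂ → mR V₁ ≤ mR V₂) :
    ∃ ν : Measure X, ∀ V, IsClopen V → ν V = ENNReal.ofReal (mR V) := by
  classical
  set RK : Set X → ℝ := fun K => sInf (mR '' {V | IsClopen V ∧ K ⊆ V}) with hRKdef
  have hRKne : ∀ K : Set X, (mR '' {V | IsClopen V ∧ K ⊆ V}).Nonempty :=
    fun K => ⟨mR Set.univ, Set.univ, ⟨isClopen_univ, Set.subset_univ K⟩, rfl⟩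
  have hRKbdd : ∀ K : Set X, BddBelow (mR '' {V | IsClopen V ∧ K ⊆ V}) := by
    intro K
    refine ⟨0, ?_⟩
    rintro r ⟨V, _, rfl⟩
    exact h0 V
  have hRK0 : ∀ K, 0 ≤ RK K := by
    intro K
    refine Real.sInf_nonneg ?_
    rintro r ⟨V, _, rfl⟩
    exact h0 V
  have hRKle : ∀ K V, IsClopen V → K ⊆ V → RK K ≤ mR V :=
    fun K V hV hKV => csInf_le (hRKbdd K) ⟨V, ⟨hV, hKV⟩, rfl⟩
  have hRKge : ∀ V, IsClopen V → mR V ≤ RK V := by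
    intro V hV
    refine le_csInf (hRKne V) ?_
    rintro r ⟨V', ⟨hV', hVV'⟩, rfl⟩
    exact hmono _ _ hVV'
  have hRKmono : ∀ K₁ K₂ : Set X, K₁ ⊆ K₂ → RK K₁ ≤ RK K₂ := by
    intro K₁ K₂ h
    refine csInf_le_csInf (hRKbdd K₁) (hRKne K₂) ?_
    rintro r ⟨V, ⟨hV, hKV⟩, rfl⟩
    exact ⟨V, ⟨hV, h.trans hKV⟩, rfl⟩
  have hsub : ∀ V₁ V₂ : Set X, mR (V₁ ∪ V₂) ≤ mR V₁ + mR V₂ := by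
    intro V₁ V₂
    have e1 : V₁ ∪ (V₂ \ V₁) = V₁ ∪ V₂ := Set.union_diff_self
    have e2 := hadd V₁ (V₂ \ V₁) disjoint_sdiff_self_right
    rw [e1] at e2
    rw [e2]
    have := hmono (V₂ \ V₁) V₂ Set.diff_subset
    linarith
  have hRKsuble : ∀ K₁ K₂ : Set X, RK (K₁ ∪ K₂) ≤ RK K₁ + RK K₂ := by
    intro K₁ K₂
    have key : ∀ r₁ ∈ mR '' {V | IsClopen V ∧ K₁ ⊆ V}, ∀ r₂ ∈ mR '' {V | IsClopen V ∧ K₂ ⊆ V},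
        RK (K₁ ∪ K₂) ≤ r₁ + r₂ := by
      rintro _ ⟨V₁, ⟨hV₁, hK₁⟩, rfl⟩ _ ⟨V₂, ⟨hV₂, hK₂⟩, rfl⟩
      have h1 : RK (K₁ ∪ K₂) ≤ mR (V₁ ∪ V₂) :=
        hRKle _ _ (hV₁.union hV₂) (Set.union_subset_union hK₁ hK₂)
      linarith [hsub V₁ V₂]
    have step : ∀ r₁ ∈ mR '' {V | IsClopen V ∧ K₁ ⊆ V}, RK (K₁ ∪ K₂) ≤ r₁ + RK K₂ := by
      intro r₁ hr₁
      have : RK (K₁ ∪ K₂) - r₁ ≤ RK K₂ :=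
        le_csInf (hRKne K₂) fun r₂ hr₂ => by linarith [key r₁ hr₁ r₂ hr₂]
      linarith
    have : RK (K₁ ∪ K₂) - RK K₂ ≤ RK K₁ :=
      le_csInf (hRKne K₁) fun r₁ hr₁ => by linarith [step r₁ hr₁]
    linarith
  have hRKsup : ∀ K₁ K₂ : Set X, IsCompact K₁ → IsClosed K₂ → Disjoint K₁ K₂ →
      RK K₁ + RK K₂ ≤ RK (K₁ ∪ K₂) := by
    intro K₁ K₂ hK₁c hK₂cl hd
    refine le_csInf (hRKne _) ?_
    rintro r ⟨V, ⟨hV, hKV⟩, rfl⟩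
    obtain ⟨V', hV', hK₁V', hd'⟩ := clopen_separation hzd hK₁c hK₂cl hd
    have hdisj : Disjoint (V ∩ V') (V \ V') := by
      rw [Set.disjoint_left]
      rintro y ⟨_, hyV'⟩ ⟨_, hyV'c⟩
      exact hyV'c hyV'
    have e : mR V = mR (V ∩ V') + mR (V \ V') := by
      rw [← hadd _ _ hdisj, Set.inter_union_diff]
    have h1 : RK K₁ ≤ mR (V ∩ V') := by
      refine hRKle _ _ (hV.inter hV') (Set.subset_inter ?_ hK₁V')
      exact (Set.subset_union_left.trans hKV)
    have h2 : RK K₂ ≤ mR (V \ V') := by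
      refine hRKle _ _ (hV.diff hV') ?_
      intro y hy
      exact ⟨(Set.subset_union_right.trans hKV) hy, fun hyV' => Set.disjoint_left.1 hd' hyV' hy⟩
    linarith
  -- the content
  set κ : MeasureTheory.Content X :=
    { toFun := fun K => (RK K).toNNReal
      mono' := fun K₁ K₂ h => Real.toNNReal_mono (hRKmono _ _ h)
      sup_disjoint' := by
        intro K₁ K₂ hd h₁ h₂
        show (RK (K₁ ∪ K₂)).toNNReal = (RK K₁).toNNReal + (RK K₂).toNNReal
        rw [← Real.toNNReal_add (hRK0 _) (hRK0 _)]
        congr 1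
        exact le_antisymm (hRKsuble _ _) (hRKsup _ _ K₁.isCompact h₂ hd)
      sup_le' := by
        intro K₁ K₂
        show (RK (K₁ ∪ K₂)).toNNReal ≤ (RK K₁).toNNReal + (RK K₂).toNNReal
        rw [← Real.toNNReal_add (hRK0 _) (hRK0 _)]
        exact Real.toNNReal_mono (hRKsuble _ _) } with hκdef
  refine ⟨κ.measure, ?_⟩
  intro V hV
  rw [MeasureTheory.Content.measure_apply _ hV.isOpen.measurableSet,
    κ.outerMeasure_of_isOpen V hV.isOpen,
    κ.innerContent_of_isCompact hV.isClosed.isCompact hV.isOpen]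
  have hRV : RK V = mR V := le_antisymm (hRKle V V hV (subset_refl V)) (hRKge V hV)
  show ((RK V).toNNReal : ENNReal) = ENNReal.ofReal (mR V)
  rw [hRV]
  rfl

lemma exists_invariant_measure {G X : Type*} [Group G] [MetricSpace X] [CompactSpace X]
    [MeasurableSpace X] [BorelSpace X]
    (hzd : TopologicalSpace.IsTopologicalBasis {U : Set X | IsClopen U})
    (act : G → X → X)
    (hone : ∀ x, act 1 x = x)
    (hmul : ∀ s t x, act (s * t) x = act s (act t x))
    (hcont : ∀ s, Continuous (act s))
    (hmin : ∀ x : X, Dense (Set.range fun s : G => act s x))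
    {A : Set X} (hA : IsClopen A) (hne : A.Nonempty)
    (hnp : CompletelyNonparadoxical act {U : Set X | IsClopen U} A) :
    ∃ μ : Measure X, IsProbabilityMeasure μ ∧ ∀ s, Measure.map (act s) μ = μ := by
  classical
  obtain ⟨mw, W, w, hW, hW1, hW2⟩ := exists_cover hone hmul hcont hmin hA hne
  -- the submodule of bounded functions
  let E : Submodule ℝ (X → ℝ) :=
    { carrier := {f | Bdd f}
      add_mem' := fun hf hg => hf.add hg
      zero_mem' := ⟨0, fun x => by simp⟩
      smul_mem' := fun c f hf => hf.const_mul c }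
  have hindE : ∀ V : Set X, ind V ∈ E := fun V =>
    ⟨1, fun x => by
      rw [abs_of_nonneg (ind_nonneg V x)]
      simpa using ind_le_one V x⟩
  set xA : E := ⟨ind A, hindE A⟩ with hxAdef
  have hxA0 : xA ≠ 0 := by
    obtain ⟨a, ha⟩ := hne
    intro hcon
    have h0 : ind A = (0 : X → ℝ) := congrArg Subtype.val hcon
    have := congrFun h0 a
    rw [ind_of_mem ha] at this
    norm_num at this
  have Nhom : ∀ c : ℝ, 0 < c → ∀ f : E, pp act A ((c • f : E) : X → ℝ) = c * pp act A (f : X → ℝ) := by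
    intro c hc f
    have he : ((c • f : E) : X → ℝ) = fun x => c * (f : X → ℝ) x := rfl
    rw [he, pp_smul hc]
  have Nadd : ∀ f g : E, pp act A ((f + g : E) : X → ℝ)
      ≤ pp act A (f : X → ℝ) + pp act A (g : X → ℝ) := by
    intro f g
    have he : ((f + g : E) : X → ℝ) = fun x => (f : X → ℝ) x + (g : X → ℝ) x := rfl
    rw [he]
    exact pp_add hW hW1 hW2 f.2 g.2
  have hone_le := pp_one_le hone hmul hcont hW hW1 hW2 hmin hA hne hnp
  have Nspec : ∀ z : (LinearPMap.mkSpanSingleton (K := ℝ) (L := ℝ) (σ := RingHom.id ℝ) xA (1:ℝ) hxA0).domain,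
      (LinearPMap.mkSpanSingleton (K := ℝ) (L := ℝ) (σ := RingHom.id ℝ) xA (1:ℝ) hxA0) z ≤ pp act A ((z : E) : X → ℝ) := by
    rintro ⟨z, hz⟩
    obtain ⟨c, rfl⟩ := Submodule.mem_span_singleton.1 hz
    have hval : (LinearPMap.mkSpanSingleton (K := ℝ) (L := ℝ) (σ := RingHom.id ℝ) xA (1:ℝ) hxA0) ⟨c • xA, hz⟩ = c := by
      have h := LinearPMap.mkSpanSingleton'_apply xA (1:ℝ) _ c hz
      rw [h, smul_eq_mul, mul_one, RingHom.id_apply]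
    rw [hval]
    rcases lt_trichotomy c 0 with hc | hc | hc
    · exact le_trans hc.le (pp_nonneg _)
    · subst hc
      exact le_trans (le_refl 0) (by simpa using pp_nonneg (act := act) (A := A) ((0:ℝ) • xA : E))
    · have he : (((c • xA : E)) : X → ℝ) = fun x => c * ind A x := rfl
      rw [he, pp_smul hc]
      nlinarith
  obtain ⟨μL, hμLeq, hμLle⟩ := exists_extension_of_le_sublinear
    (LinearPMap.mkSpanSingleton (K := ℝ) (L := ℝ) (σ := RingHom.id ℝ) xA (1:ℝ) hxA0)
    (fun f => pp act A (f : X → ℝ)) Nhom Nadd Nspec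
  -- positivity of μL
  have hpos : ∀ f : E, (∀ x, 0 ≤ (f : X → ℝ) x) → 0 ≤ μL f := by
    intro f hf
    have h1 : μL (-f) ≤ pp act A ((-f : E) : X → ℝ) := hμLle (-f)
    have h2 : pp act A ((-f : E) : X → ℝ) ≤ 0 := by
      refine pp_nonpos fun x => ?_
      have he : ((-f : E) : X → ℝ) x = -((f : X → ℝ) x) := rfl
      rw [he]
      linarith [hf x]
    have h3 : μL (-f) = -μL f := map_neg μL f
    linarith
  have hA1 : μL xA = 1 := by
    have h := hμLeq ⟨xA, Submodule.mem_span_singleton_self xA⟩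
    rw [LinearPMap.mkSpanSingleton_apply] at h
    exact h
  set mR : Set X → ℝ := fun V => μL ⟨ind V, hindE V⟩ with hmRdef
  have hmR0 : ∀ V, 0 ≤ mR V := fun V => hpos _ (fun x => ind_nonneg V x)
  have hmRadd : ∀ V₁ V₂ : Set X, Disjoint V₁ V₂ → mR (V₁ ∪ V₂) = mR V₁ + mR V₂ := by
    intro V₁ V₂ hd
    have he : (⟨ind (V₁ ∪ V₂), hindE _⟩ : E) = ⟨ind V₁, hindE _⟩ + ⟨ind V₂, hindE _⟩ := by
      apply Subtype.ext
      show ind (V₁ ∪ V₂) = ind V₁ + ind V₂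
      exact Set.indicator_union_of_disjoint hd 1
    show μL _ = μL _ + μL _
    rw [he, map_add]
  have hmRmono : ∀ V₁ V₂ : Set X, V₁ ⊆ V₂ → mR V₁ ≤ mR V₂ := by
    intro V₁ V₂ hsub
    have h := hpos ((⟨ind V₂, hindE _⟩ : E) - ⟨ind V₁, hindE _⟩) (fun x => by
      show 0 ≤ ind V₂ x - ind V₁ x
      linarith [ind_mono hsub x])
    rw [map_sub] at h
    show μL _ ≤ μL _
    linarith
  have hmRinv : ∀ (V : Set X), IsClopen V → ∀ s : G, mR (act s '' V) = mR V := by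
    intro V hV s
    have h1 : μL ((⟨ind V, hindE _⟩ : E) - ⟨ind (act s '' V), hindE _⟩) ≤ 0 := by
      refine (hμLle _).trans ?_
      have he : ((((⟨ind V, hindE _⟩ : E) - ⟨ind (act s '' V), hindE _⟩) : E) : X → ℝ)
          = fun x => ind V x - ind (act s '' V) x := rfl
      rw [he]
      exact pp_transport_le hone hmul hcont hW hW1 hW2 hV s
    have h2 : μL ((⟨ind (act s '' V), hindE _⟩ : E) - ⟨ind V, hindE _⟩) ≤ 0 := by
      refine (hμLle _).trans ?_
      have hVs := image_act_clopen hone hmul hcont hV s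
      have key := pp_transport_le hone hmul hcont hW hW1 hW2 hVs s⁻¹
      have him : act s⁻¹ '' (act s '' V) = V := by
        rw [image_act_image_act hone hmul, inv_mul_cancel, image_act_one hone hmul]
      rw [him] at key
      have he : ((((⟨ind (act s '' V), hindE _⟩ : E) - ⟨ind V, hindE _⟩) : E) : X → ℝ)
          = fun x => ind (act s '' V) x - ind V x := rfl
      rw [he]
      exact key
    rw [map_sub] at h1 h2
    show μL _ = μL _
    linarith
  have hmRA : mR A = 1 := hA1
  have hmRuniv : 1 ≤ mR Set.univ := by
    rw [← hmRA]
    exact hmRmono A Set.univ (Set.subset_univ A)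
  -- build the measure
  obtain ⟨ν₀, hν₀⟩ := measure_of_premeasure hzd mR hmR0 hmRadd hmRmono
  have hν₀univ : ν₀ Set.univ = ENNReal.ofReal (mR Set.univ) := hν₀ _ isClopen_univ
  have hν₀ne : ν₀ Set.univ ≠ 0 := by
    rw [hν₀univ]
    exact (ENNReal.ofReal_pos.2 (by linarith)).ne'
  have hν₀top : ν₀ Set.univ ≠ ⊤ := by
    rw [hν₀univ]
    exact ENNReal.ofReal_ne_top
  refine ⟨(ν₀ Set.univ)⁻¹ • ν₀, ⟨?_⟩, ?_⟩
  · show ((ν₀ Set.univ)⁻¹ • ν₀) Set.univ = 1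
    rw [Measure.smul_apply, smul_eq_mul]
    exact ENNReal.inv_mul_cancel hν₀ne hν₀top
  · intro s
    have hprob : IsProbabilityMeasure ((ν₀ Set.univ)⁻¹ • ν₀) := by
      constructor
      rw [Measure.smul_apply, smul_eq_mul]
      exact ENNReal.inv_mul_cancel hν₀ne hν₀top
    haveI := hprob
    haveI : IsProbabilityMeasure (Measure.map (act s) ((ν₀ Set.univ)⁻¹ • ν₀)) :=
      Measure.isProbabilityMeasure_map ((hcont s).measurable.aemeasurable)
    refine MeasureTheory.ext_of_generate_finite {U : Set X | IsClopen U}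
      (BorelSpace.measurable_eq.trans hzd.borel_eq_generateFrom) ?_ ?_ ?_
    · rintro U hU V hV -
      exact hU.inter hV
    · intro V hV
      rw [Measure.map_apply (hcont s).measurable hV.isOpen.measurableSet]
      have hpre : (act s) ⁻¹' V = act s⁻¹ '' V := by
        ext x
        rw [Set.mem_preimage, mem_image_act hone hmul, inv_inv]
      rw [hpre]
      have hc1 : IsClopen (act s⁻¹ '' V) := image_act_clopen hone hmul hcont hV s⁻¹
      rw [Measure.smul_apply, Measure.smul_apply, hν₀ _ hc1, hν₀ _ hV, hmRinv _ hV s⁻¹]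
    · rw [Measure.map_apply (hcont s).measurable MeasurableSet.univ, Set.preimage_univ]

lemma natcard_eq_sum_ennreal {n : ℕ} (p : Fin n → Prop) :
    ((Nat.card {i // p i}) : ENNReal) = ∑ i, if p i then 1 else 0 := by
  rw [Nat.card_eq_fintype_card, Fintype.card_subtype]
  rw [Finset.sum_boole]

lemma nonparadoxical_univ_of_measure {G X : Type*} [Group G] [TopologicalSpace X]
    [MeasurableSpace X] [BorelSpace X]
    (act : G → X → X)
    (hone : ∀ x, act 1 x = x)
    (hmul : ∀ s t x, act (s * t) x = act s (act t x))
    (hcont : ∀ s, Continuous (act s))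
    (μ : Measure X) (hμp : IsProbabilityMeasure μ)
    (hinv : ∀ s, Measure.map (act s) μ = μ) :
    CompletelyNonparadoxical act {U : Set X | IsClopen U} Set.univ := by
  rintro k l hl hlk ⟨n, C, u, hC, hk, hlcard, -⟩
  classical
  have hmeas : ∀ i, MeasurableSet (C i) := fun i => (hC i).isOpen.measurableSet
  have hmeasim : ∀ i, MeasurableSet (act (u i) '' C i) :=
    fun i => (image_act_clopen hone hmul hcont (hC i) (u i)).isOpen.measurableSet
  have hsum_eq : ∀ (D : Fin n → Set X), (∀ i, MeasurableSet (D i)) →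
      ∫⁻ x, ∑ i, (D i).indicator (fun _ => (1:ENNReal)) x ∂μ = ∑ i, μ (D i) := by
    intro D hD
    rw [lintegral_finset_sum _ (fun i _ => measurable_const.indicator (hD i))]
    refine Finset.sum_congr rfl fun i _ => ?_
    rw [lintegral_indicator_const (hD i), one_mul]
  have h1 : (k : ENNReal) ≤ ∑ i, μ (C i) := by
    calc (k:ENNReal) = ∫⁻ _x, (k:ENNReal) ∂μ := by
          rw [lintegral_const, measure_univ, mul_one]
      _ ≤ ∫⁻ x, ∑ i, (C i).indicator (fun _ => (1:ENNReal)) x ∂μ := by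
          refine lintegral_mono fun x => ?_
          have hcard := hk x (Set.mem_univ x)
          have he : ∑ i, (C i).indicator (fun _ => (1:ENNReal)) x
              = ((Nat.card {i // x ∈ C i}) : ENNReal) := by
            rw [natcard_eq_sum_ennreal]
            exact Finset.sum_congr rfl fun i _ => Set.indicator_apply _ _ _
          rw [he]
          exact (Nat.cast_le (α := ENNReal)).2 hcard
      _ = ∑ i, μ (C i) := hsum_eq C hmeas
  have h2 : ∑ i, μ (act (u i) '' C i) ≤ (l : ENNReal) := by
    calc ∑ i, μ (act (u i) '' C i)
        = ∫⁻ x, ∑ i, (act (u i) '' C i).indicator (fun _ => (1:ENNReal)) x ∂μ :=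
          (hsum_eq _ hmeasim).symm
      _ ≤ ∫⁻ _x, (l:ENNReal) ∂μ := by
          refine lintegral_mono fun x => ?_
          have hcard := hlcard x (Set.mem_univ x)
          have he : ∑ i, (act (u i) '' C i).indicator (fun _ => (1:ENNReal)) x
              = ((Nat.card {i // x ∈ act (u i) '' C i}) : ENNReal) := by
            rw [natcard_eq_sum_ennreal]
            exact Finset.sum_congr rfl fun i _ => Set.indicator_apply _ _ _
          rw [he]
          exact (Nat.cast_le (α := ENNReal)).2 hcard
      _ = (l:ENNReal) := by rw [lintegral_const, measure_univ, mul_one]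
  have h3 : ∀ i, μ (act (u i) '' C i) = μ (C i) := by
    intro i
    have e1 : μ (act (u i) '' C i) = (Measure.map (act (u i)) μ) (act (u i) '' C i) := by
      rw [hinv]
    rw [e1, Measure.map_apply (hcont _).measurable (hmeasim i)]
    congr 1
    ext x
    rw [Set.mem_preimage, mem_image_act hone hmul, act_inv_act hone hmul]
  have h4 : (k : ENNReal) ≤ (l : ENNReal) := by
    calc (k:ENNReal) ≤ ∑ i, μ (C i) := h1
      _ = ∑ i, μ (act (u i) '' C i) := (Finset.sum_congr rfl fun i _ => h3 i).symm
      _ ≤ l := h2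
  have : k ≤ l := by exact_mod_cast h4
  omega

lemma paradox_of_empty {G X : Type*} (act : G → X → X) (S : Set (Set X)) (h : IsEmpty X) :
    IsParadoxical act S Set.univ 2 1 :=
  ⟨0, fun i => i.elim0, fun i => i.elim0, fun i => i.elim0,
    fun x _ => (h.false x).elim, fun x _ => (h.false x).elim, fun x => (h.false x).elim⟩

end SP

/-- For a minimal continuous action of `G` on a zero-dimensional compact metrizable space
`X` the following are equivalent: (1) there is a `G`-invariant Borel probability measure;
(2) `X` is completely `(G, clopen)`-nonparadoxical; (3) some nonempty clopen subset of `X`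
is completely `(G, clopen)`-nonparadoxical. -/
theorem stmt5 {G X : Type*} [Group G] [MetricSpace X] [CompactSpace X]
    [MeasurableSpace X] [BorelSpace X]
    (hzd : TopologicalSpace.IsTopologicalBasis {U : Set X | IsClopen U})
    (act : G → X → X)
    (hone : ∀ x, act 1 x = x)
    (hmul : ∀ s t x, act (s * t) x = act s (act t x))
    (hcont : ∀ s, Continuous (act s))
    (hmin : ∀ x : X, Dense (Set.range fun s : G => act s x)) :
    ((∃ μ : Measure X, IsProbabilityMeasure μ ∧ ∀ s, Measure.map (act s) μ = μ) ↔
        CompletelyNonparadoxical act {U : Set X | IsClopen U} Set.univ) ∧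
    ((∃ μ : Measure X, IsProbabilityMeasure μ ∧ ∀ s, Measure.map (act s) μ = μ) ↔
        ∃ A : Set X, IsClopen A ∧ A.Nonempty ∧
          CompletelyNonparadoxical act {U : Set X | IsClopen U} A) := by
  have easy : (∃ μ : Measure X, IsProbabilityMeasure μ ∧ ∀ s, Measure.map (act s) μ = μ) →
      CompletelyNonparadoxical act {U : Set X | IsClopen U} Set.univ := by
    rintro ⟨μ, h1, h2⟩
    exact SP.nonparadoxical_univ_of_measure act hone hmul hcont μ h1 h2
  have hard : (∃ A : Set X, IsClopen A ∧ A.Nonempty ∧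
      CompletelyNonparadoxical act {U : Set X | IsClopen U} A) →
      (∃ μ : Measure X, IsProbabilityMeasure μ ∧ ∀ s, Measure.map (act s) μ = μ) := by
    rintro ⟨A, hA, hne, hnp⟩
    exact SP.exists_invariant_measure hzd act hone hmul hcont hmin hA hne hnp
  constructor
  · constructor
    · exact easy
    · intro h2
      have hXne : Nonempty X := by
        by_contra hc
        rw [not_nonempty_iff] at hc
        exact h2 2 1 one_pos one_lt_two (SP.paradox_of_empty act _ hc)
      exact hard ⟨Set.univ, isClopen_univ, Set.univ_nonempty, h2⟩
  · constructor
    · rintro ⟨μ, hμ, hinv⟩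
      have hXne : Nonempty X := by
        by_contra hc
        rw [not_nonempty_iff] at hc
        have h1 : μ Set.univ = 1 := hμ.measure_univ
        have h0 : μ Set.univ = 0 := by
          have he : (Set.univ : Set X) = ∅ := Set.univ_eq_empty_iff.2 hc
          rw [he, measure_empty]
        rw [h0] at h1
        exact zero_ne_one h1
      exact ⟨Set.univ, isClopen_univ, Set.univ_nonempty, easy ⟨μ, hμ, hinv⟩⟩
    · exact hard
end

section
/- Let G act continuously and residually finitely on a zero-dimensional compact metrizable space X. Then every nonempty clopen subset of X is completely (G, clopen)-nonparadoxical. -/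
/-- `{p | p.1 ∈ C → p.2 ∈ D}` is open when `C` is clopen and `D` open. -/
lemma aux_open_imp {X : Type*} [TopologicalSpace X] {C D : Set X}
    (hC : IsClopen C) (hD : IsOpen D) :
    IsOpen {p : X × X | p.1 ∈ C → p.2 ∈ D} := by
  have h : {p : X × X | p.1 ∈ C → p.2 ∈ D} = (Cᶜ ×ˢ Set.univ) ∪ (Set.univ ×ˢ D) := by
    ext ⟨u, v⟩
    simp [imp_iff_not_or]
  rw [h]
  exact (hC.compl.isOpen.prod isOpen_univ).union (isOpen_univ.prod hD)

/-- `{p | p.2 ∈ C → p.1 ∈ D}` is open when `C` is clopen and `D` open. -/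
lemma aux_open_imp' {X : Type*} [TopologicalSpace X] {C D : Set X}
    (hC : IsClopen C) (hD : IsOpen D) :
    IsOpen {p : X × X | p.2 ∈ C → p.1 ∈ D} := by
  have h : {p : X × X | p.2 ∈ C → p.1 ∈ D} = (Set.univ ×ˢ Cᶜ) ∪ (D ×ˢ Set.univ) := by
    ext ⟨u, v⟩
    simp [imp_iff_not_or, or_comm]
  rw [h]
  exact (isOpen_univ.prod hC.compl.isOpen).union (hD.prod isOpen_univ)

lemma aux_sum_card_comm {α β : Type*} [Fintype α] [Fintype β] (p : α → β → Prop)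
    [∀ a b, Decidable (p a b)] :
    ∑ a, (Finset.univ.filter (fun b => p a b)).card
      = ∑ b, (Finset.univ.filter (fun a => p a b)).card := by
  simp only [Finset.card_filter]
  exact Finset.sum_comm

/-- If a continuous action of `G` on a zero-dimensional compact metrizable space is
residually finite, then every nonempty clopen subset of `X` is completely
`(G, clopen)`-nonparadoxical. -/
theorem stmt6 {G X : Type*} [Group G] [MetricSpace X] [CompactSpace X]
    (hzd : TopologicalSpace.IsTopologicalBasis {U : Set X | IsClopen U})
    (act : G → X → X)
    (hone : ∀ x, act 1 x = x)
    (hmul : ∀ s t x, act (s * t) x = act s (act t x))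
    (hcont : ∀ s, Continuous (act s))
    (hrf : IsRFAction act) :
    ∀ A : Set X, IsClopen A → A.Nonempty →
      CompletelyNonparadoxical act {U : Set X | IsClopen U} A := by
  classical
  intro A hA hAne k l hl hlk ⟨n, As, ss, hAs, hk, hup, hout⟩
  -- images are clopen
  have hinv : ∀ (s : G) (x : X), act s⁻¹ (act s x) = x := fun s x => by
    rw [← hmul, inv_mul_cancel, hone]
  have hinv' : ∀ (s : G) (x : X), act s (act s⁻¹ x) = x := fun s x => by
    rw [← hmul, mul_inv_cancel, hone]
  have himg : ∀ i, act (ss i) '' As i = act (ss i)⁻¹ ⁻¹' As i := by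
    intro i
    ext x
    constructor
    · rintro ⟨y, hy, rfl⟩
      simpa [hinv] using hy
    · intro hx
      exact ⟨act (ss i)⁻¹ x, hx, hinv' _ _⟩
  have hCi : ∀ i, IsClopen (act (ss i) '' As i) := by
    intro i
    rw [himg i]
    exact (hAs i).preimage (hcont _)
  -- the entourage
  set ε : Set (X × X) :=
    {p : X × X | p.1 ∈ A → p.2 ∈ A} ∩
      ⋂ i : Fin n, {p : X × X | p.2 ∈ act (ss i) '' As i → p.1 ∈ act (ss i) '' As i}
    with hε
  have hεopen : IsOpen ε :=
    (aux_open_imp hA hA.isOpen).inter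
      (isOpen_iInter_of_finite fun i => aux_open_imp' (hCi i) (hCi i).isOpen)
  have hεdiag : ∀ x, (x, x) ∈ ε := fun x =>
    ⟨fun h => h, Set.mem_iInter.2 fun i h => h⟩
  obtain ⟨E, hE, σ, hσ1, hσmul, ζ, hdense, happrox⟩ :=
    hrf (Finset.image ss Finset.univ) ε hεopen hεdiag
  -- σ s is injective
  have hσinj : ∀ s : G, Function.Injective (σ s) := by
    intro s z w h
    have : σ s⁻¹ (σ s z) = σ s⁻¹ (σ s w) := by rw [h]
    rwa [← hσmul, ← hσmul, inv_mul_cancel, hσ1, hσ1] at this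
  set EA : Finset E := Finset.univ.filter (fun z => ζ z ∈ A) with hEA
  -- EA is nonempty
  have hEApos : 0 < EA.card := by
    obtain ⟨x, hx⟩ := hAne
    obtain ⟨z, hz⟩ := hdense x
    have : ζ z ∈ A := hz.1 hx
    exact Finset.card_pos.2 ⟨z, Finset.mem_filter.2 ⟨Finset.mem_univ _, this⟩⟩
  -- lower bound: k * |EA| ≤ ∑ i, |{z : ζ z ∈ As i}|
  have hlow : k * EA.card ≤ ∑ i : Fin n, (Finset.univ.filter (fun z => ζ z ∈ As i)).card := by
    rw [aux_sum_card_comm (fun i (z : E) => ζ z ∈ As i)]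
    calc k * EA.card = ∑ _z ∈ EA, k := by rw [Finset.sum_const, smul_eq_mul, mul_comm]
      _ ≤ ∑ z ∈ EA, (Finset.univ.filter (fun i => ζ z ∈ As i)).card := by
          apply Finset.sum_le_sum
          intro z hz
          have hzA : ζ z ∈ A := (Finset.mem_filter.1 hz).2
          have := hk (ζ z) hzA
          rwa [Nat.card_eq_fintype_card, Fintype.card_subtype] at this
      _ ≤ ∑ z : E, (Finset.univ.filter (fun i => ζ z ∈ As i)).card :=
          Finset.sum_le_sum_of_subset (Finset.filter_subset _ _)
  -- middle: |{z : ζ z ∈ As i}| ≤ |{z : ζ z ∈ ss i '' As i}|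
  have hmid : ∀ i : Fin n, (Finset.univ.filter (fun z => ζ z ∈ As i)).card
      ≤ (Finset.univ.filter (fun z => ζ z ∈ act (ss i) '' As i)).card := by
    intro i
    apply Finset.card_le_card_of_injOn (σ (ss i))
    · intro z hz
      have hzi : ζ z ∈ As i := (Finset.mem_filter.1 hz).2
      have hmem : ss i ∈ Finset.image ss Finset.univ :=
        Finset.mem_image.2 ⟨i, Finset.mem_univ _, rfl⟩
      have h := happrox z (ss i) hmem
      have h2 := Set.mem_iInter.1 h.2 i
      exact Finset.mem_filter.2 ⟨Finset.mem_univ _, h2 ⟨ζ z, hzi, rfl⟩⟩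
    · exact fun z _ w _ h => hσinj _ h
  -- upper bound: ∑ i, |{z : ζ z ∈ ss i '' As i}| ≤ l * |EA|
  have hupper : ∑ i : Fin n, (Finset.univ.filter (fun z => ζ z ∈ act (ss i) '' As i)).card
      ≤ l * EA.card := by
    rw [aux_sum_card_comm (fun i (z : E) => ζ z ∈ act (ss i) '' As i)]
    calc ∑ z : E, (Finset.univ.filter (fun i => ζ z ∈ act (ss i) '' As i)).card
        = ∑ z ∈ EA, (Finset.univ.filter (fun i => ζ z ∈ act (ss i) '' As i)).card := by
          apply (Finset.sum_subset (Finset.filter_subset _ _) _).symm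
          intro z _ hz
          have hzA : ζ z ∉ A := by
            intro h
            exact hz (Finset.mem_filter.2 ⟨Finset.mem_univ _, h⟩)
          have : (Finset.univ.filter (fun i => ζ z ∈ act (ss i) '' As i)) = ∅ := by
            apply Finset.filter_eq_empty_iff.2
            intro i _
            exact hout (ζ z) hzA i
          rw [this, Finset.card_empty]
      _ ≤ ∑ _z ∈ EA, l := by
          apply Finset.sum_le_sum
          intro z hz
          have hzA : ζ z ∈ A := (Finset.mem_filter.1 hz).2
          have := hup (ζ z) hzA
          rwa [Nat.card_eq_fintype_card, Fintype.card_subtype] at this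
      _ = l * EA.card := by rw [Finset.sum_const, smul_eq_mul, mul_comm]
  have : k * EA.card ≤ l * EA.card :=
    hlow.trans ((Finset.sum_le_sum fun i _ => hmid i).trans hupper)
  have hkl : k ≤ l := Nat.le_of_mul_le_mul_right
    (by simpa [mul_comm] using this) hEApos
  exact absurd hlk (not_lt.2 hkl)
end

section
/- For every n ∈ ℕ and ε > 0 there exists δ > 0 such that whenever d ∈ ℕ and a₁, …, aₙ are self-adjoint elements of M_d satisfying ‖aᵢ² − aᵢ‖ < δ for all i, ‖aᵢaⱼ‖ < δ for all i ≠ j, and ∑ᵢ aᵢ = 1, there exist pairwise orthogonal projections p₁, …, pₙ ∈ M_d with ∑ᵢ pᵢ = 1 and ‖pᵢ − aᵢ‖ < ε for all i. -/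
noncomputable def chi (c t : ℝ) : ℝ := min 1 (max 0 (2 - 4 * |t - c|))
noncomputable def hinv (s c t : ℝ) : ℝ := (t - c) / max ((t - c)^2) (s^2)

lemma chi_cont (c : ℝ) : Continuous (chi c) := by
  unfold chi; fun_prop

lemma chi_nonneg (c t : ℝ) : 0 ≤ chi c t :=
  le_min one_pos.le (le_max_left _ _)

lemma chi_le_one (c t : ℝ) : chi c t ≤ 1 := min_le_left _ _

lemma chi_eq_one {c t : ℝ} (h : |t - c| ≤ 1/4) : chi c t = 1 := by
  have : (1:ℝ) ≤ 2 - 4 * |t - c| := by linarith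
  unfold chi
  rw [min_eq_left (le_max_of_le_right this)]

lemma chi_eq_zero {c t : ℝ} (h : 1/2 ≤ |t - c|) : chi c t = 0 := by
  have h0 : 0 ≤ |t - c| := abs_nonneg _
  have : 2 - 4 * |t - c| ≤ 0 := by linarith
  unfold chi
  rw [max_eq_left this, min_eq_right zero_le_one]

lemma hinv_cont {s : ℝ} (hs : 0 < s) (c : ℝ) : Continuous (hinv s c) := by
  unfold hinv
  apply Continuous.div (by fun_prop) (by fun_prop)
  intro t
  have : (0:ℝ) < max ((t - c)^2) (s^2) := lt_max_of_lt_right (by positivity)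
  exact this.ne'

lemma abs_hinv_le {s : ℝ} (hs : 0 < s) (c t : ℝ) : |hinv s c t| ≤ 1 / s := by
  have hd : (0:ℝ) < max ((t - c)^2) (s^2) := lt_max_of_lt_right (by positivity)
  unfold hinv
  rw [abs_div, abs_of_pos hd]
  rcases le_total (|t - c|) s with h | h
  · calc |t - c| / max ((t - c)^2) (s^2) ≤ s / s^2 :=
          div_le_div₀ (le_of_lt hs) h (by positivity) (le_max_right _ _)
      _ = 1 / s := by rw [pow_two, ← div_div, div_self hs.ne']
  · have hsq : s^2 ≤ (t - c)^2 := by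
      rw [← sq_abs (t - c)]
      exact pow_le_pow_left₀ hs.le h 2
    have ht0 : 0 < |t - c| := lt_of_lt_of_le hs h
    rw [max_eq_left hsq, ← sq_abs (t - c), pow_two, ← div_div, div_self ht0.ne']
    exact one_div_le_one_div_of_le hs h

lemma hinv_mul {s c t : ℝ} (hs : 0 < s) (h : s ≤ |t - c|) : hinv s c t * (t - c) = 1 := by
  have hsq : s^2 ≤ (t - c)^2 := by
    rw [← sq_abs (t - c)]
    exact pow_le_pow_left₀ hs.le h 2
  have ht : t - c ≠ 0 := by
    intro h0; rw [h0, abs_zero] at h; linarith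
  unfold hinv
  rw [max_eq_left hsq]
  field_simp

lemma nat_sep {i j : ℕ} (h : i ≠ j) : (1:ℝ) ≤ |(i:ℝ) - (j:ℝ)| := by
  rcases lt_or_gt_of_ne h with hlt | hlt
  · have h1 : (i:ℝ) + 1 ≤ (j:ℝ) := by exact_mod_cast hlt
    rw [abs_sub_comm, abs_of_nonneg (by linarith)]
    linarith
  · have h1 : (j:ℝ) + 1 ≤ (i:ℝ) := by exact_mod_cast hlt
    rw [abs_of_nonneg (by linarith)]
    linarith

/-- The `d × d` complex matrix algebra with operator norm, realized as the algebra of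
bounded operators on the `d`-dimensional complex Hilbert space. -/
abbrev MatAlg (d : ℕ) := EuclideanSpace ℂ (Fin d) →L[ℂ] EuclideanSpace ℂ (Fin d)

set_option maxHeartbeats 2000000 in
set_option synthInstance.maxHeartbeats 200000 in
/-- For every `n` and `ε > 0` there is `δ > 0` such that any `n` self-adjoint elements of
a matrix algebra which are `δ`-approximately idempotent, `δ`-approximately pairwise
orthogonal, and sum to `1`, can be perturbed within `ε` to pairwise orthogonal projections
summing to `1`. -/
theorem stmt8 :
    ∀ (n : ℕ) (ε : ℝ), 0 < ε → ∃ δ : ℝ, 0 < δ ∧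
      ∀ (d : ℕ) (a : Fin n → MatAlg d),
        (∀ i, IsSelfAdjoint (a i)) →
        (∀ i, ‖a i * a i - a i‖ < δ) →
        (∀ i j, i ≠ j → ‖a i * a j‖ < δ) →
        (∑ i, a i = 1) →
        ∃ p : Fin n → MatAlg d,
          (∀ i, IsSelfAdjoint (p i) ∧ p i * p i = p i) ∧
          (∀ i j, i ≠ j → p i * p j = 0) ∧
          (∑ i, p i = 1) ∧
          (∀ i, ‖p i - a i‖ < ε) := by
  intro n ε hε
  rcases Nat.eq_zero_or_pos n with hn0 | hn1
  · subst hn0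
    exact ⟨1, one_pos, fun d a _ _ _ hsum =>
      ⟨a, fun i => i.elim0, fun i => i.elim0, hsum, fun i => i.elim0⟩⟩
  set N : ℝ := (n : ℝ) with hN
  have hN1 : (1:ℝ) ≤ N := by rw [hN]; exact_mod_cast hn1
  set M : ℝ := 2 * N ^ 2 + N with hM
  have hM0 : (0:ℝ) < M := by nlinarith
  set B : ℝ := N ^ 3 * M ^ (n - 1) with hB
  have hB0 : (0:ℝ) < B :=
    mul_pos (pow_pos (by linarith) 3) (pow_pos hM0 _)
  set C : ℝ := 2 * N ^ 2 * (N + 1) with hC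
  have hC0 : (0:ℝ) < C := by nlinarith
  set δ : ℝ := min 1 (min ((4:ℝ)⁻¹ ^ n / (B + 1)) (ε / (C + 1))) with hδdef
  have hq : (0:ℝ) < (4:ℝ)⁻¹ ^ n := by positivity
  have hδ0 : 0 < δ := lt_min one_pos (lt_min (by positivity) (by positivity))
  have hδ1 : δ ≤ 1 := min_le_left _ _
  have hδB : B * δ < (4:ℝ)⁻¹ ^ n := by
    have h1 : δ ≤ (4:ℝ)⁻¹ ^ n / (B + 1) := (min_le_right _ _).trans (min_le_left _ _)
    have h3 : B * δ ≤ B * ((4:ℝ)⁻¹ ^ n / (B + 1)) := mul_le_mul_of_nonneg_left h1 hB0.le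
    have h4 : B * ((4:ℝ)⁻¹ ^ n / (B + 1)) < (4:ℝ)⁻¹ ^ n := by
      rw [mul_div_assoc', div_lt_iff₀ (by linarith)]
      nlinarith
    linarith
  have hδC : C * δ < ε := by
    have h1 : δ ≤ ε / (C + 1) := (min_le_right _ _).trans (min_le_right _ _)
    have h3 : C * δ ≤ C * (ε / (C + 1)) := mul_le_mul_of_nonneg_left h1 hC0.le
    have h4 : C * (ε / (C + 1)) < ε := by
      rw [mul_div_assoc', div_lt_iff₀ (by linarith)]
      nlinarith
    linarith
  refine ⟨δ, hδ0, ?_⟩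
  intro d a hsa happ horth hsum
  rcases subsingleton_or_nontrivial (MatAlg d) with hss | hnt
  · refine ⟨fun _ => 1, fun i => ⟨(by rw [IsSelfAdjoint, star_one] : IsSelfAdjoint (1:MatAlg d)), Subsingleton.elim _ _⟩,
      fun i j _ => Subsingleton.elim _ _, Subsingleton.elim _ _, fun i => ?_⟩
    have h0 : (1:MatAlg d) - a i = 0 := Subsingleton.elim _ _
    rw [h0, norm_zero]
    exact hε
  -- main case
  set w : Fin n → ℝ := fun i => ((i : ℕ) : ℝ) + 1 with hw
  have hw1 : ∀ i, (1:ℝ) ≤ w i := by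
    intro i
    have h0 : (0:ℝ) ≤ ((i:ℕ):ℝ) := Nat.cast_nonneg _
    simp only [hw]
    linarith
  have hwN : ∀ i, w i ≤ N := by
    intro i
    rw [hw, hN]
    have : ((i:ℕ):ℝ) + 1 ≤ (n:ℝ) := by exact_mod_cast Nat.succ_le_of_lt i.isLt
    simpa using this
  have hwabs : ∀ i, |w i| ≤ N := fun i => by
    rw [abs_of_pos (by linarith [hw1 i])]; exact hwN i
  have hsep : ∀ i j : Fin n, i ≠ j → (1:ℝ) ≤ |w i - w j| := by
    intro i j hij
    have h1 : ((i:ℕ):ℝ) + 1 - (((j:ℕ):ℝ) + 1) = ((i:ℕ):ℝ) - ((j:ℕ):ℝ) := by ring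
    rw [hw, h1]
    exact nat_sep (Fin.val_ne_of_ne hij)
  have hA2 : ∀ i, ‖a i‖ ≤ 2 := by
    intro i
    by_contra hcon
    push_neg at hcon
    have h1 : ‖a i * a i‖ = ‖a i‖ * ‖a i‖ := by
      have h4 := CStarRing.norm_star_mul_self (x := a i)
      rw [(hsa i).star_eq] at h4
      exact h4
    have h2 : ‖a i * a i‖ ≤ ‖a i * a i - a i‖ + ‖a i‖ := by
      have h3 := norm_add_le (a i * a i - a i) (a i)
      simpa using h3
    have h3 := happ i
    nlinarith [norm_nonneg (a i)]
  set x : MatAlg d := ∑ i, algebraMap ℝ (MatAlg d) (w i) * a i with hx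
  have hxsa : IsSelfAdjoint x := by
    have hterm : ∀ i : Fin n, IsSelfAdjoint (algebraMap ℝ (MatAlg d) (w i) * a i) := by
      intro i
      have h1 : star (algebraMap ℝ (MatAlg d) (w i)) = algebraMap ℝ (MatAlg d) (w i) :=
        (cfc_predicate_algebraMap (A := MatAlg d) (p := IsSelfAdjoint) (w i)).star_eq
      rw [IsSelfAdjoint, star_mul, h1, (hsa i).star_eq, ← Algebra.commutes]
    rw [hx]
    exact isSelfAdjoint_sum (R := MatAlg d) (x := fun i => algebraMap ℝ (MatAlg d) (w i) * a i)
      Finset.univ (fun i _ => hterm i)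
  have halg : ∀ (r : ℝ), ‖algebraMap ℝ (MatAlg d) r‖ = |r| := fun r => by
    rw [norm_algebraMap']
    exact Real.norm_eq_abs r
  have hxn : ‖x‖ ≤ 2 * N ^ 2 := by
    rw [hx]
    calc ‖∑ i, algebraMap ℝ (MatAlg d) (w i) * a i‖
        ≤ ∑ i : Fin n, ‖algebraMap ℝ (MatAlg d) (w i) * a i‖ := norm_sum_le _ _
      _ ≤ ∑ _i : Fin n, N * 2 := by
          refine Finset.sum_le_sum fun i _ => ?_
          calc ‖algebraMap ℝ (MatAlg d) (w i) * a i‖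
              ≤ ‖algebraMap ℝ (MatAlg d) (w i)‖ * ‖a i‖ := norm_mul_le _ _
            _ ≤ N * 2 := by
                rw [halg]
                exact mul_le_mul (hwabs i) (hA2 i) (norm_nonneg _) (by linarith)
      _ = 2 * N ^ 2 := by
          rw [Finset.sum_const, Finset.card_univ, Fintype.card_fin, nsmul_eq_mul, ← hN]
          ring
  have hkey : ∀ j, ‖(x - algebraMap ℝ (MatAlg d) (w j)) * a j‖ ≤ N ^ 2 * δ := by
    intro j
    have hexp : (x - algebraMap ℝ (MatAlg d) (w j)) * a j
        = (∑ i ∈ Finset.univ.erase j, algebraMap ℝ (MatAlg d) (w i) * (a i * a j))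
          + algebraMap ℝ (MatAlg d) (w j) * (a j * a j - a j) := by
      rw [hx, sub_mul, Finset.sum_mul]
      simp only [mul_assoc]
      rw [← Finset.sum_erase_add _ _ (Finset.mem_univ j), mul_sub]
      abel
    rw [hexp]
    have hsumb : ‖∑ i ∈ Finset.univ.erase j, algebraMap ℝ (MatAlg d) (w i) * (a i * a j)‖
        ≤ (N - 1) * (N * δ) := by
      calc ‖∑ i ∈ Finset.univ.erase j, algebraMap ℝ (MatAlg d) (w i) * (a i * a j)‖
          ≤ ∑ i ∈ Finset.univ.erase j, ‖algebraMap ℝ (MatAlg d) (w i) * (a i * a j)‖ :=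
            norm_sum_le _ _
        _ ≤ (Finset.univ.erase j).card • (N * δ) := by
            refine Finset.sum_le_card_nsmul _ _ _ fun i hi => ?_
            have hij : i ≠ j := Finset.ne_of_mem_erase hi
            calc ‖algebraMap ℝ (MatAlg d) (w i) * (a i * a j)‖
                ≤ ‖algebraMap ℝ (MatAlg d) (w i)‖ * ‖a i * a j‖ := norm_mul_le _ _
              _ ≤ N * δ := by
                  rw [halg]
                  exact mul_le_mul (hwabs i) (horth i j hij).le (norm_nonneg _) (by linarith)
        _ = (N - 1) * (N * δ) := by
            rw [Finset.card_erase_of_mem (Finset.mem_univ j), Finset.card_univ, Fintype.card_fin,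
              nsmul_eq_mul, Nat.cast_sub hn1, Nat.cast_one, ← hN]
    have htb : ‖algebraMap ℝ (MatAlg d) (w j) * (a j * a j - a j)‖ ≤ N * δ := by
      calc ‖algebraMap ℝ (MatAlg d) (w j) * (a j * a j - a j)‖
          ≤ ‖algebraMap ℝ (MatAlg d) (w j)‖ * ‖a j * a j - a j‖ := norm_mul_le _ _
        _ ≤ N * δ := by
            rw [halg]
            exact mul_le_mul (hwabs j) (happ j).le (norm_nonneg _) (by linarith)
    calc ‖_ + _‖ ≤ (N - 1) * (N * δ) + N * δ := (norm_add_le _ _).trans (add_le_add hsumb htb)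
      _ = N ^ 2 * δ := by ring
  have hcont1 : ∀ (s : Finset (Fin n)), Continuous (fun t : ℝ => ∏ k ∈ s, (t - w k)) :=
    fun s => continuous_finset_prod s (fun k _ => by fun_prop)
  set P : ℝ → ℝ := fun t => ∏ k, (t - w k) with hP
  have hsub : ∀ (c : ℝ), cfc (fun t : ℝ => t - c) x = x - algebraMap ℝ (MatAlg d) c := by
    intro c
    rw [cfc_sub (fun t : ℝ => t) (fun _ : ℝ => c) x (by fun_prop) (by fun_prop),
      cfc_id' ℝ x hxsa, cfc_const c x hxsa]
  have hPsplit : ∀ j : Fin n, cfc P x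
      = cfc (fun t => ∏ k ∈ Finset.univ.erase j, (t - w k)) x
        * (x - algebraMap ℝ (MatAlg d) (w j)) := by
    intro j
    rw [← hsub (w j), ← cfc_mul _ _ x ((hcont1 _).continuousOn) (by fun_prop)]
    apply cfc_congr
    intro t _
    exact (Finset.prod_erase_mul _ _ (Finset.mem_univ j)).symm
  have hspecb : ∀ t ∈ spectrum ℝ x, |t| ≤ 2 * N ^ 2 := by
    intro t ht
    have h1 := norm_apply_le_norm_cfc (fun t : ℝ => t) x ht (by fun_prop) hxsa
    rw [cfc_id' ℝ x hxsa] at h1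
    calc |t| = ‖t‖ := (Real.norm_eq_abs t).symm
      _ ≤ ‖x‖ := h1
      _ ≤ 2 * N ^ 2 := hxn
  have hEj : ∀ j : Fin n, ‖cfc (fun t => ∏ k ∈ Finset.univ.erase j, (t - w k)) x‖
      ≤ M ^ (n - 1) := by
    intro j
    apply norm_cfc_le (by positivity)
    intro t ht
    rw [Real.norm_eq_abs, Finset.abs_prod]
    calc ∏ k ∈ Finset.univ.erase j, |t - w k| ≤ ∏ _k ∈ Finset.univ.erase j, M := by
          refine Finset.prod_le_prod (fun _ _ => abs_nonneg _) (fun k _ => ?_)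
          calc |t - w k| = ‖t - w k‖ := (Real.norm_eq_abs _).symm
            _ ≤ ‖t‖ + ‖w k‖ := norm_sub_le _ _
            _ ≤ M := by
                rw [Real.norm_eq_abs, Real.norm_eq_abs, hM]
                have := hspecb t ht
                have := hwabs k
                linarith
      _ = M ^ (n - 1) := by
          rw [Finset.prod_const, Finset.card_erase_of_mem (Finset.mem_univ j),
            Finset.card_univ, Fintype.card_fin]
  have hPx : ‖cfc P x‖ ≤ B * δ := by
    have h2 : cfc P x = ∑ j : Fin n,
        cfc (fun t => ∏ k ∈ Finset.univ.erase j, (t - w k)) x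
          * ((x - algebraMap ℝ (MatAlg d) (w j)) * a j) := by
      calc cfc P x = cfc P x * ∑ j, a j := by rw [hsum, mul_one]
        _ = ∑ j, cfc P x * a j := Finset.mul_sum _ _ _
        _ = _ := Finset.sum_congr rfl fun j _ => by rw [hPsplit j, mul_assoc]
    rw [h2]
    calc ‖∑ j : Fin n, cfc (fun t => ∏ k ∈ Finset.univ.erase j, (t - w k)) x
          * ((x - algebraMap ℝ (MatAlg d) (w j)) * a j)‖
        ≤ ∑ j : Fin n, ‖cfc (fun t => ∏ k ∈ Finset.univ.erase j, (t - w k)) x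
          * ((x - algebraMap ℝ (MatAlg d) (w j)) * a j)‖ := norm_sum_le _ _
      _ ≤ ∑ _j : Fin n, M ^ (n - 1) * (N ^ 2 * δ) := by
          refine Finset.sum_le_sum fun j _ => ?_
          calc ‖cfc (fun t => ∏ k ∈ Finset.univ.erase j, (t - w k)) x
                * ((x - algebraMap ℝ (MatAlg d) (w j)) * a j)‖
              ≤ ‖cfc (fun t => ∏ k ∈ Finset.univ.erase j, (t - w k)) x‖
                * ‖(x - algebraMap ℝ (MatAlg d) (w j)) * a j‖ := norm_mul_le _ _
            _ ≤ M ^ (n - 1) * (N ^ 2 * δ) :=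
                mul_le_mul (hEj j) (hkey j) (norm_nonneg _) (by positivity)
      _ = B * δ := by
          rw [Finset.sum_const, Finset.card_univ, Fintype.card_fin, nsmul_eq_mul, ← hN, hB]
          ring
  have hspec : ∀ t ∈ spectrum ℝ x, ∃ k, |t - w k| < 1/4 := by
    intro t ht
    by_contra hcon
    push_neg at hcon
    have h1 : |P t| ≤ ‖cfc P x‖ := by
      simpa [Real.norm_eq_abs] using
        norm_apply_le_norm_cfc P x ht ((hcont1 _).continuousOn) hxsa
    have h2 : (4:ℝ)⁻¹ ^ n ≤ |P t| := by
      have hPt : P t = ∏ k, (t - w k) := by rw [hP]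
      rw [hPt, Finset.abs_prod]
      calc (4:ℝ)⁻¹ ^ n = ∏ _k : Fin n, (4:ℝ)⁻¹ := by
            rw [Finset.prod_const, Finset.card_univ, Fintype.card_fin]
        _ ≤ ∏ k, |t - w k| := by
            refine Finset.prod_le_prod (fun _ _ => by norm_num) (fun k _ => ?_)
            have := hcon k
            rw [show (4:ℝ)⁻¹ = 1/4 by norm_num]
            linarith
    linarith
  have hone : ∀ t ∈ spectrum ℝ x, ∃ k, chi (w k) t = 1 ∧ ∀ i, i ≠ k → chi (w i) t = 0 := by
    intro t ht
    obtain ⟨k, hk⟩ := hspec t ht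
    refine ⟨k, chi_eq_one hk.le, fun i hik => ?_⟩
    have h1 := hsep i k hik
    have h2 : |w i - w k| ≤ |w i - t| + |t - w k| := abs_sub_le _ _ _
    have h3 : |t - w i| = |w i - t| := abs_sub_comm _ _
    apply chi_eq_zero
    rw [h3]
    linarith
  have hchicont : ∀ c : ℝ, ContinuousOn (chi c) (spectrum ℝ x) :=
    fun c => (chi_cont c).continuousOn
  refine ⟨fun i => cfc (chi (w i)) x, fun i => ⟨cfc_predicate _ x, ?_⟩,
    fun i j hij => ?_, ?_, fun i => ?_⟩
  · -- idempotent
    rw [← cfc_mul _ _ x (hchicont _) (hchicont _)]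
    apply cfc_congr
    intro t ht
    obtain ⟨k, hk1, hk0⟩ := hone t ht
    show chi (w i) t * chi (w i) t = chi (w i) t
    by_cases hik : i = k
    · subst hik; rw [hk1]; norm_num
    · rw [hk0 i hik]; norm_num
  · -- orthogonal
    rw [← cfc_mul _ _ x (hchicont _) (hchicont _)]
    have hzero : ∀ t : ℝ, chi (w i) t * chi (w j) t = 0 := by
      intro t
      rcases le_or_gt (1/2 : ℝ) |t - w i| with h | h
      · rw [chi_eq_zero h, zero_mul]
      · have h1 := hsep i j hij
        have h2 : |w i - w j| ≤ |w i - t| + |t - w j| := abs_sub_le _ _ _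
        have h4 : |t - w i| = |w i - t| := abs_sub_comm _ _
        have h3 : (1/2:ℝ) ≤ |t - w j| := by rw [h4] at h; linarith
        rw [chi_eq_zero h3, mul_zero]
    calc cfc (fun t => chi (w i) t * chi (w j) t) x = cfc (fun _ : ℝ => (0:ℝ)) x :=
          cfc_congr fun t _ => hzero t
      _ = 0 := cfc_const_zero ℝ x
  · -- sum to one
    rw [← cfc_sum_univ (fun i => chi (w i)) x (fun i => hchicont _)]
    calc cfc (∑ i, chi (w i)) x = cfc (fun _ : ℝ => (1:ℝ)) x := by
          apply cfc_congr
          intro t ht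
          obtain ⟨k, hk1, hk0⟩ := hone t ht
          have hs : (∑ i, chi (w i)) t = ∑ i, chi (w i) t := by
            simp [Finset.sum_apply]
          rw [hs, Finset.sum_eq_single k (fun i _ hik => hk0 i hik)
            (fun h => absurd (Finset.mem_univ k) h), hk1]
      _ = 1 := cfc_const_one ℝ x hxsa
  · -- norm estimate
    have horthog : ∀ j, j ≠ i → ‖cfc (chi (w i)) x * a j‖ ≤ 2 * (N ^ 2 * δ) := by
      intro j hji
      have hij : i ≠ j := hji.symm
      have hfeq : ∀ t : ℝ, chi (w i) t
          = (chi (w i) t * hinv (1/2) (w j) t) * (t - w j) := by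
        intro t
        rcases le_or_gt (1/2 : ℝ) |t - w j| with h | h
        · rw [mul_assoc, hinv_mul (by norm_num) h, mul_one]
        · have h1 := hsep i j hij
          have h2 : |w i - w j| ≤ |w i - t| + |t - w j| := abs_sub_le _ _ _
          have h4 : |t - w i| = |w i - t| := abs_sub_comm _ _
          have h3 : (1/2:ℝ) ≤ |t - w i| := by rw [h4]; linarith
          rw [chi_eq_zero h3, zero_mul, zero_mul]
      have hpeq : cfc (chi (w i)) x
          = cfc (fun t => chi (w i) t * hinv (1/2) (w j) t) x
            * (x - algebraMap ℝ (MatAlg d) (w j)) := by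
        calc cfc (chi (w i)) x
            = cfc (fun t => (chi (w i) t * hinv (1/2) (w j) t) * (t - w j)) x :=
              cfc_congr fun t _ => hfeq t
          _ = cfc (fun t => chi (w i) t * hinv (1/2) (w j) t) x
              * cfc (fun t : ℝ => t - w j) x :=
              cfc_mul _ _ x
                (((chi_cont _).mul (hinv_cont (by norm_num) _)).continuousOn) (by fun_prop)
          _ = _ := by rw [hsub]
      have hGnorm : ‖cfc (fun t => chi (w i) t * hinv (1/2) (w j) t) x‖ ≤ 2 := by
        apply norm_cfc_le (by norm_num)
        intro t _
        rw [Real.norm_eq_abs, abs_mul]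
        calc |chi (w i) t| * |hinv (1/2) (w j) t| ≤ 1 * (1 / (1/2)) := by
              apply mul_le_mul _ (abs_hinv_le (by norm_num) _ _) (abs_nonneg _) zero_le_one
              rw [abs_of_nonneg (chi_nonneg _ _)]
              exact chi_le_one _ _
          _ = 2 := by norm_num
      rw [hpeq, mul_assoc]
      calc ‖cfc (fun t => chi (w i) t * hinv (1/2) (w j) t) x
            * ((x - algebraMap ℝ (MatAlg d) (w j)) * a j)‖
          ≤ ‖cfc (fun t => chi (w i) t * hinv (1/2) (w j) t) x‖
            * ‖(x - algebraMap ℝ (MatAlg d) (w j)) * a j‖ := norm_mul_le _ _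
        _ ≤ 2 * (N ^ 2 * δ) :=
            mul_le_mul hGnorm (hkey j) (norm_nonneg _) (by norm_num)
    have hii : ‖a i - cfc (chi (w i)) x * a i‖ ≤ 4 * (N ^ 2 * δ) := by
      have h1 : a i - cfc (chi (w i)) x * a i = (1 - cfc (chi (w i)) x) * a i := by
        rw [sub_mul, one_mul]
      have h1p : (1:MatAlg d) - cfc (chi (w i)) x = cfc (fun t => 1 - chi (w i) t) x := by
        rw [cfc_sub (fun _ : ℝ => (1:ℝ)) (chi (w i)) x (by fun_prop) (hchicont _),
          cfc_const_one ℝ x hxsa]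
      have hfeq : ∀ t : ℝ, 1 - chi (w i) t
          = ((1 - chi (w i) t) * hinv (1/4) (w i) t) * (t - w i) := by
        intro t
        rcases le_or_gt (1/4 : ℝ) |t - w i| with h | h
        · rw [mul_assoc, hinv_mul (by norm_num) h, mul_one]
        · rw [chi_eq_one h.le, sub_self, zero_mul, zero_mul]
      have hpeq : cfc (fun t => 1 - chi (w i) t) x
          = cfc (fun t => (1 - chi (w i) t) * hinv (1/4) (w i) t) x
            * (x - algebraMap ℝ (MatAlg d) (w i)) := by
        calc cfc (fun t => 1 - chi (w i) t) x
            = cfc (fun t => ((1 - chi (w i) t) * hinv (1/4) (w i) t) * (t - w i)) x :=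
              cfc_congr fun t _ => hfeq t
          _ = cfc (fun t => (1 - chi (w i) t) * hinv (1/4) (w i) t) x
              * cfc (fun t : ℝ => t - w i) x :=
              cfc_mul _ _ x
                (((continuous_const.sub (chi_cont _)).mul
                  (hinv_cont (by norm_num) _)).continuousOn) (by fun_prop)
          _ = _ := by rw [hsub]
      have hGnorm : ‖cfc (fun t => (1 - chi (w i) t) * hinv (1/4) (w i) t) x‖ ≤ 4 := by
        apply norm_cfc_le (by norm_num)
        intro t _
        rw [Real.norm_eq_abs, abs_mul]
        calc |1 - chi (w i) t| * |hinv (1/4) (w i) t| ≤ 1 * (1 / (1/4)) := by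
              apply mul_le_mul _ (abs_hinv_le (by norm_num) _ _) (abs_nonneg _) zero_le_one
              rw [abs_of_nonneg (by linarith [chi_le_one (w i) t])]
              linarith [chi_nonneg (w i) t]
          _ = 4 := by norm_num
      rw [h1, h1p, hpeq, mul_assoc]
      calc ‖cfc (fun t => (1 - chi (w i) t) * hinv (1/4) (w i) t) x
            * ((x - algebraMap ℝ (MatAlg d) (w i)) * a i)‖
          ≤ ‖cfc (fun t => (1 - chi (w i) t) * hinv (1/4) (w i) t) x‖
            * ‖(x - algebraMap ℝ (MatAlg d) (w i)) * a i‖ := norm_mul_le _ _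
        _ ≤ 4 * (N ^ 2 * δ) :=
            mul_le_mul hGnorm (hkey i) (norm_nonneg _) (by norm_num)
    have hsplit2 : cfc (chi (w i)) x - a i
        = (∑ j ∈ Finset.univ.erase i, cfc (chi (w i)) x * a j)
          - (a i - cfc (chi (w i)) x * a i) := by
      have h1 : cfc (chi (w i)) x = ∑ j, cfc (chi (w i)) x * a j := by
        rw [← Finset.mul_sum, hsum, mul_one]
      nth_rewrite 1 [h1]
      rw [← Finset.sum_erase_add _ _ (Finset.mem_univ i)]
      abel
    rw [hsplit2]
    have hsumb2 : ‖∑ j ∈ Finset.univ.erase i, cfc (chi (w i)) x * a j‖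
        ≤ (N - 1) * (2 * (N ^ 2 * δ)) := by
      calc ‖∑ j ∈ Finset.univ.erase i, cfc (chi (w i)) x * a j‖
          ≤ ∑ j ∈ Finset.univ.erase i, ‖cfc (chi (w i)) x * a j‖ := norm_sum_le _ _
        _ ≤ (Finset.univ.erase i).card • (2 * (N ^ 2 * δ)) := by
            refine Finset.sum_le_card_nsmul _ _ _ fun j hj => ?_
            exact horthog j (Finset.ne_of_mem_erase hj)
        _ = (N - 1) * (2 * (N ^ 2 * δ)) := by
            rw [Finset.card_erase_of_mem (Finset.mem_univ i), Finset.card_univ,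
              Fintype.card_fin, nsmul_eq_mul, Nat.cast_sub hn1, Nat.cast_one, ← hN]
    calc ‖(∑ j ∈ Finset.univ.erase i, cfc (chi (w i)) x * a j)
          - (a i - cfc (chi (w i)) x * a i)‖
        ≤ ‖∑ j ∈ Finset.univ.erase i, cfc (chi (w i)) x * a j‖
          + ‖a i - cfc (chi (w i)) x * a i‖ := norm_sub_le _ _
      _ ≤ (N - 1) * (2 * (N ^ 2 * δ)) + 4 * (N ^ 2 * δ) := add_le_add hsumb2 hii
      _ = C * δ := by rw [hC]; ring
      _ < ε := hδC
end

section
/- Let X be a compact metrizable space with compatible metric d and let T : X → X be a homeomorphism. Then the ℤ-action generated by T is residually finite if and only if T is chain recurrent, i.e., every point x ∈ X admits, for every ε > 0, a finite sequence x = x₁, x₂, …, xₙ = x with n > 1 and d(T xᵢ, xᵢ₊₁) < ε for all i = 1, …, n−1. -/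
/-- The point `x` is chain recurrent for `T`: for every `ε > 0` there is an `ε`-chain
from `x` to itself. -/
def ChainRecurrentPt {X : Type*} [MetricSpace X] (T : X → X) (x : X) : Prop :=
  ∀ ε : ℝ, 0 < ε → ∃ (n : ℕ) (c : ℕ → X), 0 < n ∧ c 0 = x ∧ c n = x ∧
    ∀ i < n, dist (T (c i)) (c (i + 1)) < ε

/-- Residual finiteness of the `ℤ`-action generated by a homeomorphism `T` of a compact
metric space: for every finite `F ⊆ ℤ` and `ε > 0` there are a finite set `E`, a bijection
`S` of `E`, and `ζ : E → X` with `ζ(E)` `ε`-dense and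
`dist (ζ (Sᵏ z)) (Tᵏ (ζ z)) < ε` for all `z ∈ E`, `k ∈ F`. -/
def ZResFin {X : Type*} [MetricSpace X] (T : Equiv.Perm X) : Prop :=
  ∀ (F : Finset ℤ) (ε : ℝ), 0 < ε →
    ∃ (E : Type) (_ : Fintype E) (S : Equiv.Perm E) (ζ : E → X),
      (∀ x : X, ∃ z : E, dist x (ζ z) < ε) ∧
      ∀ (z : E), ∀ k ∈ F, dist (ζ ((S ^ k) z)) ((T ^ k) (ζ z)) < ε

/-- Pseudo-orbit tracking for `N` steps for a continuous map of a compact metric space. -/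
lemma track_aux {X : Type*} [MetricSpace X] [CompactSpace X] (f : X → X) (hf : Continuous f)
    (N : ℕ) : ∀ ε : ℝ, 0 < ε → ∃ δ : ℝ, 0 < δ ∧ δ ≤ ε ∧
      ∀ c : ℕ → X, (∀ i < N, dist (f (c i)) (c (i + 1)) < δ) →
        ∀ k ≤ N, dist (c k) (f^[k] (c 0)) < ε := by
  induction N with
  | zero =>
    intro ε hε
    refine ⟨ε, hε, le_refl _, fun c _ k hk => ?_⟩
    interval_cases k
    simpa using hε
  | succ N ih =>
    intro ε hε
    obtain ⟨η, hη, hη'⟩ := Metric.uniformContinuous_iff.mp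
      (CompactSpace.uniformContinuous_of_continuous hf) (ε / 2) (by positivity)
    obtain ⟨δ, hδpos, hδle, htr⟩ := ih (min η (ε / 2)) (by positivity)
    refine ⟨δ, hδpos, hδle.trans ((min_le_right _ _).trans (by linarith)), fun c hc k hk => ?_⟩
    rcases Nat.lt_succ_iff_lt_or_eq.mp (Nat.lt_succ_of_le hk) with hk' | hk'
    · exact (htr c (fun i hi => hc i (hi.trans (Nat.lt_succ_self N))) k
        (Nat.lt_succ_iff.mp hk')).trans_le ((min_le_right _ _).trans (by linarith))
    · subst hk'
      have h1 : dist (c (N + 1)) (f (c N)) < δ := by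
        rw [dist_comm]; exact hc N (Nat.lt_succ_self N)
      have h2 : dist (c N) (f^[N] (c 0)) < η :=
        (htr c (fun i hi => hc i (hi.trans (Nat.lt_succ_self N))) N le_rfl).trans_le
          (min_le_left _ _)
      have h3 : dist (f (c N)) (f (f^[N] (c 0))) < ε / 2 := hη' h2
      calc dist (c (N + 1)) (f^[N + 1] (c 0))
          ≤ dist (c (N + 1)) (f (c N)) + dist (f (c N)) (f^[N + 1] (c 0)) := dist_triangle _ _ _
        _ < δ + ε / 2 := by
            rw [Function.iterate_succ_apply']
            exact add_lt_add h1 h3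
        _ ≤ ε := by
            have := hδle.trans (min_le_right η (ε / 2)); linarith

lemma zmod_val_succ {n : ℕ} [NeZero n] (i : ZMod n) : (i + 1).val = (i.val + 1) % n := by
  rw [ZMod.val_add, ZMod.val_one_eq_one_mod]
  exact (Nat.ModEq.refl i.val).add (Nat.mod_modEq 1 n)

lemma forward_aux {X : Type*} [MetricSpace X] [CompactSpace X]
    (T : Equiv.Perm X) (hT : Continuous T) (hRF : ZResFin T) (x : X) (ε : ℝ) (hε : 0 < ε) :
    ∃ (n : ℕ) (c : ℕ → X), 0 < n ∧ c 0 = x ∧ c n = x ∧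
      ∀ i < n, dist (T (c i)) (c (i + 1)) < ε := by
  obtain ⟨δ, hδpos, hδ⟩ := Metric.uniformContinuous_iff.mp
    (CompactSpace.uniformContinuous_of_continuous hT) (ε / 3) (by positivity)
  set ε' := min δ (ε / 3) with hε'def
  have hε'pos : 0 < ε' := lt_min hδpos (by positivity)
  have hε'le : ε' ≤ ε / 3 := min_le_right _ _
  obtain ⟨E, _, S, ζ, hdense, happ⟩ := hRF {1} ε' hε'pos
  obtain ⟨z₀, hz₀⟩ := hdense x
  have happ1 : ∀ z : E, dist (ζ (S z)) (T (ζ z)) < ε' := fun z => by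
    have h := happ z 1 (Finset.mem_singleton_self 1)
    simpa using h
  set m := orderOf S with hmdef
  have hm : 0 < m := orderOf_pos S
  have hSm : ∀ z : E, (S ^ m) z = z := fun z => by
    rw [pow_orderOf_eq_one]; rfl
  have hchain : ∀ j : ℕ, dist (T (ζ ((S ^ j) z₀))) (ζ ((S ^ (j + 1)) z₀)) < ε' := fun j => by
    have h := happ1 ((S ^ j) z₀)
    rw [dist_comm] at h
    rwa [pow_succ', Equiv.Perm.mul_apply]
  have hTx : dist (T x) (T (ζ z₀)) < ε / 3 := hδ (hz₀.trans_le (min_le_left _ _))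
  refine ⟨m, fun i => if i = 0 ∨ i = m then x else ζ ((S ^ i) z₀), hm, if_pos (Or.inl rfl), if_pos (Or.inr rfl), ?_⟩
  intro i hi
  by_cases hi0 : i = 0
  · subst hi0
    show dist (T (if (0:ℕ) = 0 ∨ (0:ℕ) = m then x else ζ ((S ^ 0) z₀)))
      (if 0 + 1 = 0 ∨ 0 + 1 = m then x else ζ ((S ^ (0 + 1)) z₀)) < ε
    rw [if_pos (Or.inl rfl)]
    show dist (T x) (if 1 = 0 ∨ 1 = m then x else ζ ((S ^ 1) z₀)) < ε
    by_cases hm1 : m = 1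
    · have hS1 : ζ ((S ^ 1) z₀) = ζ z₀ := by rw [← hm1, hSm]
      rw [if_pos (Or.inr hm1.symm)]
      have h1 := hchain 0
      rw [pow_zero, Equiv.Perm.one_apply, hS1] at h1
      calc dist (T x) x ≤ dist (T x) (T (ζ z₀)) + dist (T (ζ z₀)) (ζ z₀) + dist (ζ z₀) x :=
            dist_triangle4 _ _ _ _
        _ < ε / 3 + ε' + ε' := by
            rw [dist_comm (ζ z₀) x]
            exact add_lt_add (add_lt_add hTx h1) hz₀
        _ ≤ ε := by linarith
    · have h1ne : ¬(1 = 0 ∨ 1 = m) := by omega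
      rw [if_neg h1ne]
      have h1 := hchain 0
      rw [pow_zero, Equiv.Perm.one_apply] at h1
      calc dist (T x) (ζ ((S ^ 1) z₀))
          ≤ dist (T x) (T (ζ z₀)) + dist (T (ζ z₀)) (ζ ((S ^ 1) z₀)) := dist_triangle _ _ _
        _ < ε / 3 + ε' := add_lt_add hTx h1
        _ ≤ ε := by linarith
  · have him : i ≠ m := ne_of_lt hi
    show dist (T (if i = 0 ∨ i = m then x else ζ ((S ^ i) z₀)))
      (if i + 1 = 0 ∨ i + 1 = m then x else ζ ((S ^ (i + 1)) z₀)) < ε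
    rw [if_neg (by tauto)]
    by_cases hi1 : i + 1 = m
    · rw [if_pos (Or.inr hi1)]
      have h1 := hchain i
      rw [hi1, hSm] at h1
      calc dist (T (ζ ((S ^ i) z₀))) x
          ≤ dist (T (ζ ((S ^ i) z₀))) (ζ z₀) + dist (ζ z₀) x := dist_triangle _ _ _
        _ < ε' + ε' := add_lt_add h1 (by rwa [dist_comm])
        _ ≤ ε := by linarith
    · rw [if_neg (by omega)]
      exact (hchain i).trans_le (by linarith)

lemma backward_aux {X : Type*} [MetricSpace X] [CompactSpace X]
    (T : Equiv.Perm X) (hT : Continuous T) (hT' : Continuous T.symm)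
    (hCR : ∀ x : X, ChainRecurrentPt T x) (F : Finset ℤ) (ε : ℝ) (hε : 0 < ε) :
    ∃ (E : Type) (_ : Fintype E) (S : Equiv.Perm E) (ζ : E → X),
      (∀ x : X, ∃ z : E, dist x (ζ z) < ε) ∧
      ∀ (z : E), ∀ k ∈ F, dist (ζ ((S ^ k) z)) ((T ^ k) (ζ z)) < ε := by
  classical
  set N := F.sup Int.natAbs with hNdef
  have hN : ∀ k ∈ F, k.natAbs ≤ N := fun k hk => Finset.le_sup hk
  obtain ⟨δ₁, hδ₁pos, hδ₁le, htr₁⟩ := track_aux T hT N ε hε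
  obtain ⟨δ₂, hδ₂pos, hδ₂le, htr₂⟩ := track_aux T.symm hT' N ε hε
  obtain ⟨δ₃, hδ₃pos, hδ₃⟩ := Metric.uniformContinuous_iff.mp
    (CompactSpace.uniformContinuous_of_continuous hT') δ₂ hδ₂pos
  set δ := min δ₁ δ₃ with hδdef
  have hδpos : 0 < δ := lt_min hδ₁pos hδ₃pos
  have hδ1 : δ ≤ δ₁ := min_le_left _ _
  have hδ3 : δ ≤ δ₃ := min_le_right _ _
  have hδε : δ ≤ ε := hδ1.trans hδ₁le
  -- a finite δ-dense set, enumerated by Fin M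
  obtain ⟨t, ht, htd⟩ : ∃ t : Set X, t.Finite ∧ ∀ x : X, ∃ p ∈ t, dist x p < δ := by
    obtain ⟨t, -, htf, hc⟩ := finite_cover_balls_of_compact (isCompact_univ (X := X)) hδpos
    exact ⟨t, htf, fun x => by simpa using hc (Set.mem_univ x)⟩
  set A := ht.toFinset with hAdef
  set y : Fin A.card → X := fun j => (A.equivFin.symm j : X) with hydef
  have hyd : ∀ x : X, ∃ j, dist x (y j) < δ := by
    intro x
    obtain ⟨p, hp, hpd⟩ := htd x
    have hpA : p ∈ A := ht.mem_toFinset.mpr hp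
    refine ⟨A.equivFin ⟨p, hpA⟩, ?_⟩
    simpa [hydef] using hpd
  -- δ-chains through each net point
  choose n c hnpos h0 hcyc hchain using fun j : Fin A.card => hCR (y j) δ hδpos
  haveI : ∀ j, NeZero (n j) := fun j => ⟨(hnpos j).ne'⟩
  set E := Σ j : Fin A.card, ZMod (n j) with hEdef
  set S : Equiv.Perm E :=
    { toFun := fun z => ⟨z.1, z.2 + 1⟩, invFun := fun z => ⟨z.1, z.2 - 1⟩,
      left_inv := fun z => by simp, right_inv := fun z => by simp } with hSdef
  set ζ : E → X := fun z => c z.1 z.2.val with hζdef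
  have hcast : ∀ (j : Fin A.card) (i : ZMod (n j)), ((i.val : ℤ) : ZMod (n j)) = i :=
    fun j i => by push_cast; exact ZMod.natCast_rightInverse i
  set cb : ∀ _ : Fin A.card, ℤ → X := fun j a => c j ((a : ZMod (n j)).val) with hcbdef
  have hζcb : ∀ z : E, ζ z = cb z.1 (z.2.val) := fun z => by
    show c z.1 z.2.val = c z.1 (((z.2.val : ℤ) : ZMod (n z.1))).val
    rw [hcast]
  have hcb : ∀ (j : Fin A.card) (a : ℤ), dist (T (cb j a)) (cb j (a + 1)) < δ := by
    intro j a
    set i : ZMod (n j) := (a : ZMod (n j)) with hidef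
    have hv : i.val < n j := ZMod.val_lt i
    have he : cb j (a + 1) = c j (i.val + 1) := by
      show c j (((a + 1 : ℤ) : ZMod (n j)).val) = c j (i.val + 1)
      have h1 : ((a + 1 : ℤ) : ZMod (n j)) = i + 1 := by push_cast; rfl
      rw [h1, zmod_val_succ]
      rcases eq_or_lt_of_le (Nat.succ_le_of_lt hv) with h | h
      · have h' : i.val + 1 = n j := h
        rw [h', Nat.mod_self, h0 j, ← hcyc j]
      · rw [Nat.mod_eq_of_lt h]
    rw [he]
    exact hchain j i.val hv
  have hSpow : ∀ (k : ℤ) (z : E), (S ^ k) z = ⟨z.1, z.2 + (k : ZMod (n z.1))⟩ := by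
    intro k
    induction k using Int.induction_on with
    | zero => intro z; simpa using (Sigma.eta z).symm
    | succ k ih =>
      intro z
      rw [zpow_add_one, Equiv.Perm.mul_apply]
      have hz : S z = ⟨z.1, z.2 + 1⟩ := rfl
      rw [hz, ih ⟨z.1, z.2 + 1⟩]
      exact congrArg (Sigma.mk z.1) (by push_cast; ring)
    | pred k ih =>
      intro z
      rw [zpow_sub_one, Equiv.Perm.mul_apply]
      have hz : S⁻¹ z = ⟨z.1, z.2 - 1⟩ := rfl
      rw [hz, ih ⟨z.1, z.2 - 1⟩]
      exact congrArg (Sigma.mk z.1) (by push_cast; ring)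
  refine ⟨E, inferInstance, S, ζ, ?_, ?_⟩
  · intro x
    obtain ⟨j, hj⟩ := hyd x
    refine ⟨⟨j, 0⟩, ?_⟩
    show dist x (c j (0 : ZMod (n j)).val) < ε
    rw [ZMod.val_zero, h0 j]
    exact hj.trans_le hδε
  · rintro ⟨j, i⟩ k hk
    have hk' : k.natAbs ≤ N := hN k hk
    rw [hSpow k ⟨j, i⟩]
    rcases le_or_gt 0 k with hk0 | hk0
    · set m := k.toNat with hmdef
      have hmk : (m : ℤ) = k := Int.toNat_of_nonneg hk0
      have hmN : m ≤ N := by omega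
      set c' : ℕ → X := fun l => cb j ((i.val : ℤ) + l) with hc'def
      have hc' : ∀ l < N, dist (T (c' l)) (c' (l + 1)) < δ₁ := by
        intro l _
        show dist (T (cb j ((i.val : ℤ) + l))) (cb j ((i.val : ℤ) + (l + 1 : ℕ))) < δ₁
        have he : ((i.val : ℤ) + (l + 1 : ℕ)) = ((i.val : ℤ) + l) + 1 := by push_cast; ring
        rw [he]
        exact (hcb j _).trans_le hδ1
      have htr := htr₁ c' hc' m hmN
      have e0 : c' 0 = ζ ⟨j, i⟩ := by
        show cb j ((i.val : ℤ) + (0 : ℕ)) = ζ ⟨j, i⟩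
        rw [hζcb ⟨j, i⟩]
        norm_num
      have em : c' m = ζ ⟨j, i + (k : ZMod (n j))⟩ := by
        show c j ((((i.val : ℤ) + m : ℤ) : ZMod (n j)).val) = c j ((i + (k : ZMod (n j))).val)
        have h1 : (((i.val : ℤ) + m : ℤ) : ZMod (n j)) = i + (k : ZMod (n j)) := by
          rw [← hmk]; push_cast
          rw [show ((i.val : ℕ) : ZMod (n j)) = i from ZMod.natCast_rightInverse i]
        rw [h1]
      have hTk : ((T ^ k) (ζ ⟨j, i⟩) : X) = T^[m] (ζ ⟨j, i⟩) := by
        rw [← hmk, zpow_natCast, ← Equiv.Perm.iterate_eq_pow]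
      rw [← em, hTk, ← e0]
      exact htr
    · set m := k.natAbs with hmdef
      have hmk : (m : ℤ) = -k := by omega
      have hmN : m ≤ N := hk'
      set c'' : ℕ → X := fun l => cb j ((i.val : ℤ) - l) with hc''def
      have hc'' : ∀ l < N, dist (T.symm (c'' l)) (c'' (l + 1)) < δ₂ := by
        intro l _
        show dist (T.symm (cb j ((i.val : ℤ) - l))) (cb j ((i.val : ℤ) - (l + 1 : ℕ))) < δ₂
        have h := hcb j ((i.val : ℤ) - (l + 1 : ℕ))
        have he : ((i.val : ℤ) - (l + 1 : ℕ)) + 1 = (i.val : ℤ) - l := by push_cast; ring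
        rw [he] at h
        have h2 := hδ₃ (a := cb j ((i.val : ℤ) - l))
          (b := T (cb j ((i.val : ℤ) - (l + 1 : ℕ)))) (by rw [dist_comm]; exact h.trans_le hδ3)
        rwa [Equiv.symm_apply_apply] at h2
      have htr := htr₂ c'' hc'' m hmN
      have e0 : c'' 0 = ζ ⟨j, i⟩ := by
        show cb j ((i.val : ℤ) - (0 : ℕ)) = ζ ⟨j, i⟩
        rw [hζcb ⟨j, i⟩]
        norm_num
      have em : c'' m = ζ ⟨j, i + (k : ZMod (n j))⟩ := by
        show c j ((((i.val : ℤ) - m : ℤ) : ZMod (n j)).val) = c j ((i + (k : ZMod (n j))).val)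
        have h1 : (((i.val : ℤ) - m : ℤ) : ZMod (n j)) = i + (k : ZMod (n j)) := by
          rw [hmk]; push_cast
          rw [show ((i.val : ℕ) : ZMod (n j)) = i from ZMod.natCast_rightInverse i]
          ring
        rw [h1]
      have hTk : ((T ^ k) (ζ ⟨j, i⟩) : X) = T.symm^[m] (ζ ⟨j, i⟩) := by
        have h1 : (T : Equiv.Perm X) ^ k = T.symm ^ m := by
          rw [show k = -(m : ℤ) by omega, zpow_neg, zpow_natCast, ← inv_pow]
          rfl
        rw [h1, ← Equiv.Perm.iterate_eq_pow]
      rw [← em, hTk, ← e0]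
      exact htr

/-- For a homeomorphism `T` of a compact metrizable space, the `ℤ`-action generated by
`T` is residually finite if and only if `T` is chain recurrent. -/
theorem stmt10 {X : Type*} [MetricSpace X] [CompactSpace X]
    (T : Equiv.Perm X) (hT : Continuous T) (hT' : Continuous T.symm) :
    ZResFin T ↔ ∀ x : X, ChainRecurrentPt T x := by
  constructor
  · intro hRF x ε hε
    exact forward_aux T hT hRF x ε hε
  · intro hCR F ε hε
    exact backward_aux T hT hT' hCR F ε hε
end

section
/- Let (X, T) be a metrizable ℤ-system with a point x whose orbit {Tᵏx : k ∈ ℤ} is dense in X, and let d be a compatible metric. Then the following are equivalent: (1) the system is chain recurrent; (2) the closures of the forward orbit {Tᵏ x : k ≥ 0} and the backward orbit {Tᵏ x : k < 0} intersect; (3) for every ε > 0 and N ∈ ℕ there exist integers m, n ≥ N with d(Tⁿ x, T⁻ᵐ x) < ε; (4) for every ε > 0 there exist m, n ∈ ℕ with d(Tⁿ x, T⁻ᵐ x) < ε. -/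
namespace Stmt11Aux

set_option linter.unusedSectionVars false

variable {X : Type*} [MetricSpace X]

lemma apply_zpow (T : Equiv.Perm X) (j k : ℤ) (y : X) :
    (T ^ j) ((T ^ k) y) = (T ^ (j + k)) y := by
  rw [zpow_add, Equiv.Perm.mul_apply]

lemma apply_one_zpow (T : Equiv.Perm X) (k : ℤ) (y : X) :
    T ((T ^ k) y) = (T ^ (k + 1)) y := by
  rw [add_comm, ← apply_zpow, zpow_one]

lemma cont_zpow (T : Equiv.Perm X) (hT : Continuous T) (hT' : Continuous T.symm) (k : ℤ) :
    Continuous ⇑(T ^ k) := by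
  induction k using Int.induction_on with
  | zero => simpa using continuous_id
  | succ n ih =>
      have : (T ^ ((n : ℤ) + 1)) = T ^ (n : ℤ) * T := by rw [zpow_add, zpow_one]
      rw [this]
      have : ⇑(T ^ (n:ℤ) * T) = ⇑(T ^ (n:ℤ)) ∘ ⇑T := rfl
      rw [this]; exact ih.comp hT
  | pred n ih =>
      have h1 : (T ^ (-(n : ℤ) - 1)) = T ^ (-(n:ℤ)) * T⁻¹ := by
        rw [zpow_sub, zpow_one]
      rw [h1]
      have h2 : ⇑(T ^ (-(n:ℤ)) * T⁻¹) = ⇑(T ^ (-(n:ℤ))) ∘ ⇑(T⁻¹) := rfl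
      have h3 : ⇑(T⁻¹) = ⇑(T.symm) := rfl
      rw [h2, h3]; exact ih.comp hT'

/-- `T ^ k` as a homeomorphism. -/
def homeoZpow (T : Equiv.Perm X) (hT : Continuous T) (hT' : Continuous T.symm) (k : ℤ) :
    Homeomorph X X where
  toEquiv := T ^ k
  continuous_toFun := cont_zpow T hT hT' k
  continuous_invFun := by
    show Continuous ⇑(Equiv.symm (T ^ k))
    have : ⇑(Equiv.symm (T ^ k)) = ⇑(T ^ (-k)) := by
      rw [zpow_neg]; rfl
    rw [this]; exact cont_zpow T hT hT' (-k)

lemma image_closure_zpow (T : Equiv.Perm X) (hT : Continuous T) (hT' : Continuous T.symm)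
    (k : ℤ) (s : Set X) :
    ⇑(T ^ k) '' closure s = closure (⇑(T ^ k) '' s) :=
  (homeoZpow T hT hT' k).image_closure s


/-- Points of the orbit with exponent `≥ a`. -/
def fwdS (T : Equiv.Perm X) (x : X) (a : ℤ) : Set X := {y | ∃ k : ℤ, a ≤ k ∧ (T ^ k) x = y}

/-- Points of the orbit with exponent `≤ a`. -/
def bwdS (T : Equiv.Perm X) (x : X) (a : ℤ) : Set X := {y | ∃ k : ℤ, k ≤ a ∧ (T ^ k) x = y}

lemma fwdS_mono (T : Equiv.Perm X) (x : X) {a b : ℤ} (h : a ≤ b) :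
    fwdS T x b ⊆ fwdS T x a := fun y ⟨k, hk, hy⟩ => ⟨k, h.trans hk, hy⟩

lemma bwdS_mono (T : Equiv.Perm X) (x : X) {a b : ℤ} (h : a ≤ b) :
    bwdS T x a ⊆ bwdS T x b := fun y ⟨k, hk, hy⟩ => ⟨k, hk.trans h, hy⟩

lemma image_fwdS (T : Equiv.Perm X) (x : X) (j a : ℤ) :
    ⇑(T ^ j) '' fwdS T x a = fwdS T x (a + j) := by
  ext y
  constructor
  · rintro ⟨z, ⟨k, hk, rfl⟩, rfl⟩
    refine ⟨k + j, by omega, ?_⟩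
    have h : j + k = k + j := by ring
    rw [← h, ← apply_zpow]
  · rintro ⟨k, hk, rfl⟩
    refine ⟨(T ^ (k - j)) x, ⟨k - j, by omega, rfl⟩, ?_⟩
    have h : j + (k - j) = k := by ring
    rw [apply_zpow, h]

lemma image_bwdS (T : Equiv.Perm X) (x : X) (j a : ℤ) :
    ⇑(T ^ j) '' bwdS T x a = bwdS T x (a + j) := by
  ext y
  constructor
  · rintro ⟨z, ⟨k, hk, rfl⟩, rfl⟩
    refine ⟨k + j, by omega, ?_⟩
    have h : j + k = k + j := by ring
    rw [← h, ← apply_zpow]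
  · rintro ⟨k, hk, rfl⟩
    refine ⟨(T ^ (k - j)) x, ⟨k - j, by omega, rfl⟩, ?_⟩
    have h : j + (k - j) = k := by ring
    rw [apply_zpow, h]

lemma closure_fwdS_decomp (T : Equiv.Perm X) (x : X) {a b : ℤ} (hab : a ≤ b) :
    closure (fwdS T x a) =
      closure (fwdS T x b) ∪ ((fun k : ℤ => (T ^ k) x) '' Set.Ico a b) := by
  have hsplit : fwdS T x a = fwdS T x b ∪ ((fun k : ℤ => (T ^ k) x) '' Set.Ico a b) := by
    ext y
    constructor
    · rintro ⟨k, hk, rfl⟩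
      rcases le_or_gt b k with h | h
      · exact Or.inl ⟨k, h, rfl⟩
      · exact Or.inr ⟨k, ⟨hk, h⟩, rfl⟩
    · rintro (⟨k, hk, rfl⟩ | ⟨k, ⟨hk, _⟩, rfl⟩)
      · exact ⟨k, hab.trans hk, rfl⟩
      · exact ⟨k, hk, rfl⟩
  rw [hsplit, closure_union,
    ((Set.finite_Ico a b).image _).isClosed.closure_eq]

lemma closure_bwdS_decomp (T : Equiv.Perm X) (x : X) {a b : ℤ} (hab : a ≤ b) :
    closure (bwdS T x b) =
      closure (bwdS T x a) ∪ ((fun k : ℤ => (T ^ k) x) '' Set.Ioc a b) := by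
  have hsplit : bwdS T x b = bwdS T x a ∪ ((fun k : ℤ => (T ^ k) x) '' Set.Ioc a b) := by
    ext y
    constructor
    · rintro ⟨k, hk, rfl⟩
      rcases le_or_gt k a with h | h
      · exact Or.inl ⟨k, h, rfl⟩
      · exact Or.inr ⟨k, ⟨h, hk⟩, rfl⟩
    · rintro (⟨k, hk, rfl⟩ | ⟨k, ⟨_, hk⟩, rfl⟩)
      · exact ⟨k, hk.trans hab, rfl⟩
      · exact ⟨k, hk, rfl⟩
  rw [hsplit, closure_union,
    ((Set.finite_Ioc a b).image _).isClosed.closure_eq]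

lemma periodic_zpow (T : Equiv.Perm X) (x : X) (p : ℤ) (hp : (T ^ p) x = x) (t : ℕ) :
    (T ^ ((t : ℤ) * p)) x = x := by
  induction t with
  | zero => simp
  | succ t ih =>
      have : ((t : ℤ) + 1) * p = p + (t : ℤ) * p := by ring
      push_cast
      rw [this, ← apply_zpow, ih, hp]


section Main

variable [CompactSpace X]

/-- From condition (4), `x` itself is chain recurrent. -/
lemma crpt_x (T : Equiv.Perm X) (x : X)
    (h4 : ∀ ε : ℝ, 0 < ε → ∃ m n : ℕ, 1 ≤ m ∧ 1 ≤ n ∧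
      dist ((T ^ (n : ℤ)) x) ((T ^ (-(m : ℤ))) x) < ε) :
    ChainRecurrentPt T x := by
  intro ε hε
  obtain ⟨m, n, hm, hn, hd⟩ := h4 ε hε
  refine ⟨n + m, fun i => (T ^ (if i < n then (i : ℤ) else (i : ℤ) - n - m)) x,
    by omega, ?_, ?_, ?_⟩
  · show (T ^ (if 0 < n then ((0:ℕ) : ℤ) else ((0:ℕ) : ℤ) - n - m)) x = x
    rw [if_pos (by omega)]
    norm_num
  · show (T ^ (if n + m < n then ((n + m :ℕ) : ℤ) else ((n + m : ℕ) : ℤ) - n - m)) x = x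
    rw [if_neg (by omega)]
    have h : ((n + m : ℕ) : ℤ) - n - m = 0 := by push_cast; ring
    rw [h]; norm_num
  · intro i hi
    show dist (T ((T ^ (if i < n then (i : ℤ) else (i : ℤ) - n - m)) x))
      ((T ^ (if i + 1 < n then ((i + 1 : ℕ) : ℤ) else ((i + 1 : ℕ) : ℤ) - n - m)) x) < ε
    rcases lt_trichotomy (i + 1) n with h1 | h1 | h1
    · rw [if_pos (by omega), if_pos (by omega), apply_one_zpow]
      have h : ((i : ℤ) + 1) = ((i + 1 : ℕ) : ℤ) := by push_cast; ring
      rw [h, dist_self]; exact hε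
    · rw [if_pos (by omega), if_neg (by omega), apply_one_zpow]
      have h2 : ((i : ℤ) + 1) = (n : ℤ) := by omega
      have h3 : ((i + 1 : ℕ) : ℤ) - n - m = -(m : ℤ) := by omega
      rw [h2, h3]; exact hd
    · rw [if_neg (by omega), if_neg (by omega), apply_one_zpow]
      have h : (i : ℤ) - n - m + 1 = ((i + 1 : ℕ) : ℤ) - n - m := by push_cast; ring
      rw [h, dist_self]; exact hε

/-- Chain recurrence is preserved by powers of `T`. -/
lemma crpt_conj (T : Equiv.Perm X) (hT : Continuous T) (hT' : Continuous T.symm) (z : X) (hz : ChainRecurrentPt T z) (j : ℤ) :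
    ChainRecurrentPt T ((T ^ j) z) := by
  intro ε hε
  have huc : UniformContinuous ⇑(T ^ j) :=
    CompactSpace.uniformContinuous_of_continuous (cont_zpow T hT hT' j)
  obtain ⟨δ, hδ, hδ'⟩ := Metric.uniformContinuous_iff.mp huc ε hε
  obtain ⟨n, c, hn, h0, hnn, hc⟩ := hz δ hδ
  refine ⟨n, fun i => (T ^ j) (c i), hn,
    by show (T ^ j) (c 0) = (T ^ j) z; rw [h0],
    by show (T ^ j) (c n) = (T ^ j) z; rw [hnn], ?_⟩
  intro i hi
  show dist (T ((T ^ j) (c i))) ((T ^ j) (c (i + 1))) < ε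
  have comm : T ((T ^ j) (c i)) = (T ^ j) (T (c i)) := by
    rw [apply_one_zpow]
    have h1 : T (c i) = (T ^ (1 : ℤ)) (c i) := by rw [zpow_one]
    rw [h1, apply_zpow, add_comm]
  rw [comm]
  exact hδ' (hc i hi)

/-- If `x` has dense orbit and every point of its orbit is chain recurrent, then every
point is chain recurrent. -/
lemma spread (T : Equiv.Perm X) (hT : Continuous T) (hT' : Continuous T.symm) (x : X) (hx : Dense (Set.range fun k : ℤ => (T ^ k) x))
    (hcr : ∀ j : ℤ, ChainRecurrentPt T ((T ^ j) x)) (y : X) : ChainRecurrentPt T y := by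
  intro ε hε
  have hε0 : 0 < ε / 3 := by positivity
  have huc : UniformContinuous ⇑T := CompactSpace.uniformContinuous_of_continuous hT
  obtain ⟨δ0, hδ0, hδ'⟩ := Metric.uniformContinuous_iff.mp huc (ε / 3) hε0
  have hδpos : 0 < min δ0 (ε / 3) := lt_min hδ0 hε0
  obtain ⟨z, hzmem, hzy⟩ := hx.exists_dist_lt y hδpos
  obtain ⟨j, rfl⟩ := hzmem
  simp only [] at hzy
  obtain ⟨n, c, hn, h0, hnn, hc⟩ := hcr j (ε / 3) hε0
  have hyz : dist y (c 0) < min δ0 (ε / 3) := by rw [h0]; exact hzy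
  refine ⟨n, fun i => if i = 0 ∨ n ≤ i then y else c i, hn, by simp, by simp [hn], ?_⟩
  intro i hi
  show dist (T (if i = 0 ∨ n ≤ i then y else c i))
    (if i + 1 = 0 ∨ n ≤ i + 1 then y else c (i + 1)) < ε
  have hTyz : dist (T y) (T (c 0)) < ε / 3 :=
    hδ' (lt_of_lt_of_le hyz (min_le_left _ _))
  rcases Nat.eq_zero_or_pos i with rfl | hipos
  · rw [if_pos (Or.inl rfl)]
    rcases eq_or_lt_of_le (show 1 ≤ n from hn) with h1 | h1
    · -- n = 1
      rw [if_pos (Or.inr (by omega))]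
      have hc0 : dist (T (c 0)) (c 1) < ε / 3 := hc 0 hi
      have hc1 : c 1 = c n := by rw [← h1]
      have : dist y (c 0) < ε / 3 := lt_of_lt_of_le hyz (min_le_right _ _)
      calc dist (T y) y ≤ dist (T y) (T (c 0)) + dist (T (c 0)) (c 1) + dist (c 1) y := by
            exact dist_triangle4 _ _ _ _
        _ < ε / 3 + ε / 3 + ε / 3 := by
            have : dist (c 1) y < ε / 3 := by
              rw [hc1, hnn, dist_comm]
              exact lt_of_lt_of_le hzy (min_le_right _ _)
            linarith [hTyz, hc0, this]
        _ = ε := by ring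
    · -- n ≥ 2
      rw [if_neg (by omega)]
      have hc0 : dist (T (c 0)) (c 1) < ε / 3 := hc 0 hi
      calc dist (T y) (c 1) ≤ dist (T y) (T (c 0)) + dist (T (c 0)) (c 1) := dist_triangle _ _ _
        _ < ε / 3 + ε / 3 := by linarith
        _ ≤ ε := by linarith
  · rw [if_neg (by omega)]
    rcases eq_or_lt_of_le (Nat.succ_le_of_lt hi) with h1 | h1
    · -- i + 1 = n
      rw [if_pos (Or.inr (by omega))]
      have hcl : dist (T (c i)) (c (i + 1)) < ε / 3 := hc i hi
      calc dist (T (c i)) y ≤ dist (T (c i)) (c (i + 1)) + dist (c (i + 1)) y :=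
            dist_triangle _ _ _
        _ < ε / 3 + ε / 3 := by
            have : dist (c (i + 1)) y < ε / 3 := by
              rw [show i + 1 = n by omega, hnn, dist_comm]
              exact lt_of_lt_of_le hzy (min_le_right _ _)
            linarith
        _ ≤ ε := by linarith
    · -- i + 1 < n
      rw [if_neg (by omega)]
      have := hc i hi
      linarith

/-- (1) → (2): if every point is chain recurrent, forward and backward orbit closures meet. -/
lemma P1_to_P2 (T : Equiv.Perm X) (hT : Continuous T) (hT' : Continuous T.symm) (x : X)
    (hx : Dense (Set.range fun k : ℤ => (T ^ k) x))
    (h1 : ∀ y : X, ChainRecurrentPt T y) :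
    (closure (fwdS T x 0) ∩ closure (bwdS T x (-1))).Nonempty := by
  by_contra hemp
  rw [Set.not_nonempty_iff_eq_empty] at hemp
  set F := closure (fwdS T x 0) with hF
  set B := closure (bwdS T x (-1)) with hB
  have hdisj : Disjoint F B := Set.disjoint_iff_inter_eq_empty.mpr hemp
  have hFc : IsCompact F := isClosed_closure.isCompact
  obtain ⟨δ, hδ, hdisj2⟩ := hdisj.exists_thickenings hFc isClosed_closure
  have key : ∀ a ∈ F, ∀ b ∈ B, ¬ dist a b < δ := by
    intro a ha b hb hab
    have h1 : b ∈ Metric.thickening δ F :=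
      Metric.mem_thickening_iff.mpr ⟨a, ha, by rwa [dist_comm]⟩
    have h2 : b ∈ Metric.thickening δ B := Metric.self_subset_thickening hδ B hb
    exact Set.disjoint_left.mp hdisj2 h1 h2
  have huniv : F ∪ B = Set.univ := by
    have hsets : fwdS T x 0 ∪ bwdS T x (-1) = Set.range (fun k : ℤ => (T ^ k) x) := by
      ext y
      constructor
      · rintro (⟨k, _, rfl⟩ | ⟨k, _, rfl⟩) <;> exact ⟨k, rfl⟩
      · rintro ⟨k, rfl⟩
        rcases le_or_gt 0 k with h | h
        · exact Or.inl ⟨k, h, rfl⟩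
        · exact Or.inr ⟨k, by omega, rfl⟩
    rw [hF, hB, ← closure_union, hsets, hx.closure_eq]
  have hTF : ∀ a ∈ F, T a ∈ F := by
    intro a ha
    have h2 : ⇑T '' fwdS T x 0 ⊆ fwdS T x 0 := by
      rintro _ ⟨z, ⟨k, hk, rfl⟩, rfl⟩
      exact ⟨k + 1, by omega, (apply_one_zpow T k x).symm⟩
    have h3 : T a ∈ closure (⇑T '' fwdS T x 0) :=
      image_closure_subset_closure_image hT ⟨a, ha, rfl⟩
    exact closure_mono h2 h3
  set y0 := (T ^ (-1 : ℤ)) x with hy0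
  have hy0B : y0 ∈ B := subset_closure ⟨-1, le_refl _, rfl⟩
  obtain ⟨n, c, hn, h0, hnn, hc⟩ := h1 y0 δ hδ
  have hTy0 : T (c 0) = x := by
    rw [h0, hy0, apply_one_zpow]
    norm_num
  have hxF : x ∈ F := subset_closure ⟨0, le_refl _, rfl⟩
  have claim : ∀ i, 1 ≤ i → i ≤ n → c i ∈ F := by
    intro i
    induction i with
    | zero => omega
    | succ i ih =>
        intro _ hin
        have hstep : T (c i) ∈ F ∧ dist (T (c i)) (c (i + 1)) < δ := by
          rcases Nat.eq_zero_or_pos i with rfl | hipos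
          · exact ⟨hTy0 ▸ hxF, hc 0 (by omega)⟩
          · exact ⟨hTF _ (ih hipos (by omega)), hc i (by omega)⟩
        have hci1 : c (i + 1) ∈ F ∪ B := huniv ▸ Set.mem_univ _
        rcases hci1 with h | h
        · exact h
        · exact absurd hstep.2 (key _ hstep.1 _ h)
  have : c n ∈ F := claim n hn (le_refl n)
  have : y0 ∈ F ∩ B := ⟨hnn ▸ this, hy0B⟩
  rw [hemp] at this
  exact this

/-- (2) → (3). -/
lemma P2_to_P3 (T : Equiv.Perm X) (hT : Continuous T) (hT' : Continuous T.symm) (x : X)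
    (h2 : (closure (fwdS T x 0) ∩ closure (bwdS T x (-1))).Nonempty) :
    ∀ ε : ℝ, 0 < ε → ∀ N : ℕ, ∃ m n : ℕ, N ≤ m ∧ N ≤ n ∧
      dist ((T ^ (n : ℤ)) x) ((T ^ (-(m : ℤ))) x) < ε := by
  have main : ∀ N : ℕ,
      (closure (fwdS T x (N : ℤ)) ∩ closure (bwdS T x (-(N : ℤ)))).Nonempty := by
    intro N
    obtain ⟨y, hyF, hyB⟩ := h2
    by_cases hall : ∀ M : ℤ, y ∈ closure (fwdS T x M)
    · refine ⟨(T ^ (-(N : ℤ))) y, ?_, ?_⟩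
      · have h1 : (T ^ (-(N : ℤ))) y ∈ ⇑(T ^ (-(N : ℤ))) '' closure (fwdS T x ((N : ℤ) + N)) :=
          ⟨y, hall _, rfl⟩
        rw [image_closure_zpow T hT hT', image_fwdS] at h1
        have he : (N : ℤ) + N + -(N : ℤ) = (N : ℤ) := by ring
        rwa [he] at h1
      · have h1 : (T ^ (-(N : ℤ))) y ∈ ⇑(T ^ (-(N : ℤ))) '' closure (bwdS T x (-1)) :=
          ⟨y, hyB, rfl⟩
        rw [image_closure_zpow T hT hT', image_bwdS] at h1
        exact closure_mono (bwdS_mono T x (by omega)) h1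
    · push_neg at hall
      obtain ⟨M, hM⟩ := hall
      have hM0 : 0 < M := by
        by_contra hM0
        push_neg at hM0
        exact hM (closure_mono (fwdS_mono T x hM0) hyF)
      have hdec := closure_fwdS_decomp T x (le_of_lt hM0)
      rw [hdec] at hyF
      rcases hyF with h | h
      · exact absurd h hM
      obtain ⟨a, ⟨ha0, haM⟩, rfl⟩ := h
      -- now x ∈ closure (bwdS (-1 - a))
      have hxB : x ∈ closure (bwdS T x (-1 - a)) := by
        have h1 : (T ^ (-a)) ((T ^ a) x) ∈ ⇑(T ^ (-a)) '' closure (bwdS T x (-1)) :=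
          ⟨(T ^ a) x, hyB, rfl⟩
        rw [image_closure_zpow T hT hT', image_bwdS] at h1
        have he : (T ^ (-a)) ((T ^ a) x) = x := by
          rw [apply_zpow, neg_add_cancel]
          norm_num
        rw [he] at h1
        have he2 : (-1 : ℤ) + -a = -1 - a := by ring
        rwa [he2] at h1
      by_cases hall2 : ∀ M : ℤ, x ∈ closure (bwdS T x M)
      · refine ⟨(T ^ (N : ℤ)) x, subset_closure ⟨N, le_refl _, rfl⟩, ?_⟩
        have h1 : (T ^ (N : ℤ)) x ∈ ⇑(T ^ (N : ℤ)) '' closure (bwdS T x (-(N : ℤ) - N)) :=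
          ⟨x, hall2 _, rfl⟩
        rw [image_closure_zpow T hT hT', image_bwdS] at h1
        have he : -(N : ℤ) - N + N = -(N : ℤ) := by ring
        rwa [he] at h1
      · push_neg at hall2
        obtain ⟨M', hM'⟩ := hall2
        have hM'lt : M' < -1 - a := by
          by_contra hM'lt
          push_neg at hM'lt
          exact hM' (closure_mono (bwdS_mono T x hM'lt) hxB)
        have hdec2 := closure_bwdS_decomp T x (le_of_lt hM'lt)
        rw [hdec2] at hxB
        rcases hxB with h | h
        · exact absurd h hM'
        obtain ⟨b, ⟨hbM, hb⟩, hbx⟩ := h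
        have hbneg : b < 0 := by omega
        have hbx' : (T ^ b) x = x := hbx
        have hb' : (T ^ (-b)) x = x := by
          calc (T ^ (-b)) x = (T ^ (-b)) ((T ^ b) x) := by rw [hbx']
            _ = (T ^ (-b + b)) x := apply_zpow T (-b) b x
            _ = x := by rw [neg_add_cancel]; norm_num
        refine ⟨x, subset_closure ⟨(N : ℤ) * (-b), ?_, ?_⟩, subset_closure ⟨(N : ℤ) * b, ?_, ?_⟩⟩
        · nlinarith [show (0:ℤ) ≤ (N:ℤ) by positivity]
        · exact periodic_zpow T x (-b) hb' N
        · nlinarith [show (0:ℤ) ≤ (N:ℤ) by positivity]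
        · exact periodic_zpow T x b hbx' N
  intro ε hε N
  obtain ⟨z, hzF, hzB⟩ := main N
  obtain ⟨u, ⟨k, hk, hku⟩, hu⟩ := Metric.mem_closure_iff.mp hzF (ε / 2) (by positivity)
  obtain ⟨v, ⟨l, hl, hlv⟩, hv⟩ := Metric.mem_closure_iff.mp hzB (ε / 2) (by positivity)
  refine ⟨(-l).toNat, k.toNat, by omega, by omega, ?_⟩
  have hk' : ((k.toNat : ℕ) : ℤ) = k := by omega
  have hl' : -(((-l).toNat : ℕ) : ℤ) = l := by omega
  rw [hk', hl', hku, hlv]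
  calc dist u v ≤ dist u z + dist z v := dist_triangle _ _ _
    _ < ε / 2 + ε / 2 := by rw [dist_comm u z]; exact add_lt_add hu hv
    _ = ε := by ring

end Main

end Stmt11Aux

open Stmt11Aux in
/-- For a transitive metrizable `ℤ`-system `(X, T)` with dense orbit point `x`, the
following are equivalent: (1) the system is chain recurrent; (2) the closures of the
forward and backward orbits of `x` intersect; (3) for every `ε > 0` and `N` there are
`m, n ≥ N` with `d(Tⁿx, T⁻ᵐx) < ε`; (4) for every `ε > 0` there are `m, n ≥ 1` with
`d(Tⁿx, T⁻ᵐx) < ε`. -/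
theorem stmt11 {X : Type*} [MetricSpace X] [CompactSpace X]
    (T : Equiv.Perm X) (hT : Continuous T) (hT' : Continuous T.symm)
    (x : X) (hx : Dense (Set.range fun k : ℤ => (T ^ k) x)) :
    ((∀ y : X, ChainRecurrentPt T y) ↔
        (closure {y : X | ∃ k : ℤ, 0 ≤ k ∧ (T ^ k) x = y} ∩
          closure {y : X | ∃ k : ℤ, k < 0 ∧ (T ^ k) x = y}).Nonempty) ∧
    ((closure {y : X | ∃ k : ℤ, 0 ≤ k ∧ (T ^ k) x = y} ∩
          closure {y : X | ∃ k : ℤ, k < 0 ∧ (T ^ k) x = y}).Nonempty ↔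
        ∀ ε : ℝ, 0 < ε → ∀ N : ℕ, ∃ m n : ℕ, N ≤ m ∧ N ≤ n ∧
          dist ((T ^ (n : ℤ)) x) ((T ^ (-(m : ℤ))) x) < ε) ∧
    ((∀ ε : ℝ, 0 < ε → ∀ N : ℕ, ∃ m n : ℕ, N ≤ m ∧ N ≤ n ∧
          dist ((T ^ (n : ℤ)) x) ((T ^ (-(m : ℤ))) x) < ε) ↔
        ∀ ε : ℝ, 0 < ε → ∃ m n : ℕ, 1 ≤ m ∧ 1 ≤ n ∧
          dist ((T ^ (n : ℤ)) x) ((T ^ (-(m : ℤ))) x) < ε) := by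
  have hBset : {y : X | ∃ k : ℤ, k < 0 ∧ (T ^ k) x = y} = bwdS T x (-1) := by
    ext y
    constructor <;> rintro ⟨k, hk, rfl⟩ <;> exact ⟨k, by omega, rfl⟩
  have hFset : {y : X | ∃ k : ℤ, 0 ≤ k ∧ (T ^ k) x = y} = fwdS T x 0 := rfl
  rw [hBset, hFset]
  have h41 : (∀ ε : ℝ, 0 < ε → ∃ m n : ℕ, 1 ≤ m ∧ 1 ≤ n ∧
        dist ((T ^ (n : ℤ)) x) ((T ^ (-(m : ℤ))) x) < ε) →
      ∀ y : X, ChainRecurrentPt T y := fun h4 y =>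
    spread T hT hT' x hx (fun j => crpt_conj T hT hT' x (crpt_x T x h4) j) y
  have h34 : (∀ ε : ℝ, 0 < ε → ∀ N : ℕ, ∃ m n : ℕ, N ≤ m ∧ N ≤ n ∧
        dist ((T ^ (n : ℤ)) x) ((T ^ (-(m : ℤ))) x) < ε) →
      ∀ ε : ℝ, 0 < ε → ∃ m n : ℕ, 1 ≤ m ∧ 1 ≤ n ∧
        dist ((T ^ (n : ℤ)) x) ((T ^ (-(m : ℤ))) x) < ε := by
    intro h ε hε
    obtain ⟨m, n, hm, hn, hd⟩ := h ε hε 1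
    exact ⟨m, n, hm, hn, hd⟩
  refine ⟨⟨fun h1 => P1_to_P2 T hT hT' x hx h1,
      fun h2 => h41 (h34 (P2_to_P3 T hT hT' x h2))⟩,
    ⟨P2_to_P3 T hT hT' x,
      fun h3 => P1_to_P2 T hT hT' x hx (h41 (h34 h3))⟩,
    ⟨h34, fun h4 => P2_to_P3 T hT hT' x (P1_to_P2 T hT hT' x hx (h41 h4))⟩⟩
end

section
/- Suppose G is a countable group admitting a free residually finite continuous action on a compact Hausdorff space X (that is, sx = x for some x ∈ X implies s = e). Then G is a residually finite group. -/
/-- If a countable group `G` admits a free residually finite continuous action on a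
(nonempty) compact Hausdorff space, then `G` is a residually finite group. -/
theorem stmt15 {G X : Type*} [Group G] [Countable G]
    [TopologicalSpace X] [CompactSpace X] [T2Space X] [Nonempty X]
    (act : G → X → X)
    (hone : ∀ x, act 1 x = x)
    (hmul : ∀ s t x, act (s * t) x = act s (act t x))
    (hcont : ∀ s, Continuous (act s))
    (hfree : ∀ s x, act s x = x → s = 1)
    (hrf : IsRFAction act) :
    ∀ g : G, g ≠ 1 → ∃ (H : Type) (_ : Group H) (_ : Fintype H) (π : G →* H), π g ≠ 1 := by
  intro g hg
  -- ε is the complement of the (closed) graph of `act g`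
  set ε : Set (X × X) := {p | act g p.1 ≠ p.2} with hε
  have hopen : IsOpen ε := by
    have : IsClosed {p : X × X | act g p.1 = p.2} :=
      isClosed_eq ((hcont g).comp continuous_fst) continuous_snd
    exact this.isOpen_compl
  have hdiag : ∀ x : X, (x, x) ∈ ε := by
    intro x h
    exact hg (hfree g x h)
  obtain ⟨E, hE, σ, h1, hm, ζ, hdense, happ⟩ := hrf {g} ε hopen hdiag
  have hinv : ∀ s : G, Function.LeftInverse (σ s⁻¹) (σ s) := by
    intro s z
    rw [← hm, inv_mul_cancel, h1]
  have hinv' : ∀ s : G, Function.RightInverse (σ s⁻¹) (σ s) := by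
    intro s z
    rw [← hm, mul_inv_cancel, h1]
  let π : G →* Equiv.Perm E :=
    { toFun := fun s => ⟨σ s, σ s⁻¹, hinv s, hinv' s⟩
      map_one' := by ext z; exact h1 z
      map_mul' := by intro s t; ext z; exact hm s t z }
  haveI : DecidableEq E := Classical.decEq E
  refine ⟨Equiv.Perm E, inferInstance, inferInstance, π, ?_⟩
  intro hcontra
  obtain ⟨z, -⟩ := hdense (Classical.arbitrary X)
  have hfix : σ g z = z := by
    have := congrArg (fun e : Equiv.Perm E => e z) hcontra
    simpa [π] using this
  have := happ z g (Finset.mem_singleton_self g)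
  rw [hfix] at this
  exact this rfl
end

section
/- Let X be a compact Hausdorff space, T : X → X a homeomorphism, and suppose there exists an open set U ⊆ X such that T(closure(U)) ⊆ U and U \ T(closure(U)) ≠ ∅. Then (X, T) is not chain recurrent: specifically, any point x ∈ U \ T(closure(U)) is not chain recurrent. -/
/-- The point `x` is chain recurrent for `T` on a topological space: for every open
neighbourhood `ε` of the diagonal there is an `ε`-chain from `x` to itself. -/
def ChainRecPt {X : Type*} [TopologicalSpace X] (T : X → X) (x : X) : Prop :=
  ∀ ε : Set (X × X), IsOpen ε → (∀ y, (y, y) ∈ ε) →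
    ∃ (n : ℕ) (c : ℕ → X), 0 < n ∧ c 0 = x ∧ c n = x ∧
      ∀ i < n, (T (c i), c (i + 1)) ∈ ε

/-- If a homeomorphism `T` of a compact Hausdorff space compresses an open set `U`
(that is, `T(closure U) ⊆ U` and `U \ T(closure U) ≠ ∅`), then no point of
`U \ T(closure U)` is chain recurrent; in particular `(X, T)` is not chain recurrent. -/
theorem stmt17 {X : Type*} [TopologicalSpace X] [CompactSpace X] [T2Space X]
    (T : Equiv.Perm X) (hT : Continuous T) (hT' : Continuous T.symm)
    (U : Set X) (hU : IsOpen U)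
    (hTU : ⇑T '' closure U ⊆ U)
    (hne : (U \ ⇑T '' closure U).Nonempty) :
    ∀ x ∈ U \ ⇑T '' closure U, ¬ ChainRecPt T x := by
  rintro x ⟨hxU, hxK⟩ hrec
  set K := ⇑T '' closure U with hK
  have hKcl : IsClosed K :=
    ((isClosed_closure.isCompact).image hT).isClosed
  have hopen : IsOpen ((Kᶜ ×ˢ (Set.univ : Set X)) ∪ ((Set.univ : Set X) ×ˢ (U \ {x}))) :=
    (hKcl.isOpen_compl.prod isOpen_univ).union (isOpen_univ.prod (hU.sdiff isClosed_singleton))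
  obtain ⟨n, c, hn, hc0, hcn, hstep⟩ := hrec _ hopen (fun y => by
    by_cases hy : y ∈ K
    · exact Or.inr ⟨trivial, hTU hy, fun h => hxK (h ▸ hy)⟩
    · exact Or.inl ⟨hy, trivial⟩)
  have key : ∀ i ≤ n, c i ∈ U ∧ (i ≠ 0 → c i ≠ x) := by
    intro i
    induction i with
    | zero => exact fun _ => ⟨hc0 ▸ hxU, fun h => absurd rfl h⟩
    | succ k ih =>
      intro hk
      have hck : c k ∈ U := (ih (Nat.le_of_succ_le hk)).1
      rcases hstep k hk with h | h
      · exact absurd ⟨c k, subset_closure hck, rfl⟩ h.1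
      · exact ⟨h.2.1, fun _ => h.2.2⟩
  exact ((key n le_rfl).2 hn.ne') hcn
end

section
/- Let X be a compact metrizable space without isolated points, with compatible metric d, and let a continuous action of G on X be residually finite. Then for every finite F ⊆ G and ε > 0 there exist a finite subset E ⊆ X, an action of G on E (as an abstract set), such that E is ε-dense in X and d(s·z (action on E), s·z (action on X)) < ε for all z ∈ E and s ∈ F; that is, the finite models can be taken to be subsets of X with ζ the inclusion map. -/
open Topology

/-- In a metric space with no isolated points, near any point we can find a point
avoiding any given finite set. -/
lemma exists_near_avoiding {X : Type*} [MetricSpace X] (hX : ∀ x : X, (𝓝[≠] x).NeBot)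
    (x : X) (S : Finset X) {δ : ℝ} (hδ : 0 < δ) :
    ∃ y : X, dist y x < δ ∧ y ∉ S := by
  classical
  have hU : (Metric.ball x δ \ ((S.erase x : Finset X) : Set X)) ∈ 𝓝 x := by
    refine IsOpen.mem_nhds (Metric.isOpen_ball.sdiff ((S.erase x).finite_toSet.isClosed)) ?_
    exact ⟨Metric.mem_ball_self hδ, by simp⟩
  haveI := hX x
  have hmem : (Metric.ball x δ \ ((S.erase x : Finset X) : Set X)) ∩ {x}ᶜ ∈ 𝓝[≠] x :=
    Filter.inter_mem (nhdsWithin_le_nhds hU) self_mem_nhdsWithin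
  obtain ⟨y, ⟨⟨hy1, hy2⟩, hy3⟩⟩ := Filter.nonempty_of_mem hmem
  refine ⟨y, Metric.mem_ball.1 hy1, fun hyS => ?_⟩
  exact hy2 (by simpa [Finset.mem_erase] using And.intro hyS (by simpa using hy3))

/-- A map from a finite type into a metric space with no isolated points can be perturbed
to an injective map. -/
lemma exists_injective_perturbation {X E : Type*} [MetricSpace X] [Fintype E]
    (hX : ∀ x : X, (𝓝[≠] x).NeBot) (ζ : E → X) {δ : ℝ} (hδ : 0 < δ) :
    ∃ ζ' : E → X, Function.Injective ζ' ∧ ∀ z, dist (ζ' z) (ζ z) < δ := by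
  classical
  have key : ∀ s : Finset E, ∃ ζ' : E → X, Set.InjOn ζ' s ∧ ∀ z ∈ s, dist (ζ' z) (ζ z) < δ := by
    intro s
    induction s using Finset.induction_on with
    | empty => exact ⟨ζ, by simp [Set.InjOn], by simp⟩
    | @insert a s ha ih =>
      obtain ⟨ζ', hinj, hd⟩ := ih
      obtain ⟨y, hy1, hy2⟩ := exists_near_avoiding hX (ζ a) (s.image ζ') hδ
      refine ⟨Function.update ζ' a y, ?_, ?_⟩
      · intro u hu v hv huv
        simp only [Finset.coe_insert, Set.mem_insert_iff, Finset.mem_coe] at hu hv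
        rcases hu with rfl | hu <;> rcases hv with rfl | hv
        · rfl
        · exfalso
          rw [Function.update_self, Function.update_of_ne (by rintro rfl; exact ha hv)] at huv
          exact hy2 (huv ▸ Finset.mem_image_of_mem ζ' hv)
        · exfalso
          rw [Function.update_self, Function.update_of_ne (by rintro rfl; exact ha hu)] at huv
          exact hy2 (huv ▸ Finset.mem_image_of_mem ζ' hu)
        · rw [Function.update_of_ne (by rintro rfl; exact ha hu),
            Function.update_of_ne (by rintro rfl; exact ha hv)] at huv
          exact hinj hu hv huv
      · intro z hz
        rcases Finset.mem_insert.1 hz with rfl | hz'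
        · simpa using hy1
        · rw [Function.update_of_ne (by rintro rfl; exact ha hz')]
          exact hd z hz'
  obtain ⟨ζ', hinj, hd⟩ := key Finset.univ
  exact ⟨ζ', fun u v h => hinj (by simp) (by simp) h, fun z => hd z (Finset.mem_univ z)⟩

/-- If `X` is a compact metrizable space without isolated points and the continuous
action of `G` on `X` is residually finite, then the finite models witnessing residual
finiteness can be taken to be finite subsets `E ⊆ X` with `ζ` the inclusion map: `E` is
`ε`-dense and the abstract `G`-action on `E` moves points `ε`-close to the action on `X`. -/
theorem stmt19 {G X : Type*} [Group G] [MetricSpace X] [CompactSpace X]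
    (hX : ∀ x : X, (𝓝[≠] x).NeBot)
    (act : G → X → X)
    (hone : ∀ x, act 1 x = x)
    (hmul : ∀ s t x, act (s * t) x = act s (act t x))
    (hcont : ∀ s, Continuous (act s))
    (hrf : IsRFAction act) :
    ∀ (F : Finset G) (ε : ℝ), 0 < ε →
      ∃ (E : Finset X) (σ : G → E → E),
        (∀ z, σ 1 z = z) ∧ (∀ s t z, σ (s * t) z = σ s (σ t z)) ∧
        (∀ x : X, ∃ z ∈ E, dist x z < ε) ∧
        ∀ (z : E), ∀ s ∈ F, dist (↑(σ s z) : X) (act s (↑z : X)) < ε := by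
  intro F ε hε
  classical
  -- uniform continuity of all `act s`, `s ∈ F`, at once
  have hΦ : UniformContinuous (fun x : X => fun s : F => act s x) :=
    CompactSpace.uniformContinuous_of_continuous (continuous_pi fun s => hcont s)
  obtain ⟨δ, hδ0, hδ⟩ := Metric.uniformContinuous_iff.1 hΦ (ε / 4) (by linarith)
  set η := min (ε / 4) δ with hηdef
  have hη0 : 0 < η := lt_min (by linarith) hδ0
  have hηε : η ≤ ε / 4 := min_le_left _ _
  have hact : ∀ x y : X, dist x y < η → ∀ s ∈ F, dist (act s x) (act s y) < ε / 4 := by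
    intro x y h s hs
    have h2 := hδ (lt_of_lt_of_le h (min_le_right _ _))
    calc dist (act s x) (act s y)
        ≤ dist (fun s : F => act s x) (fun s : F => act s y) :=
          dist_le_pi_dist (fun s : F => act (↑s) x) (fun s : F => act (↑s) y) ⟨s, hs⟩
      _ < ε / 4 := h2
  -- apply residual finiteness with the η-neighbourhood of the diagonal
  obtain ⟨E, instE, σ, hσ1, hσm, ζ, hdense, hζ⟩ :=
    hrf F {p : X × X | dist p.1 p.2 < η}
      (isOpen_lt (by fun_prop) continuous_const) (fun x => by simp [hη0])
  -- perturb ζ to an injective map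
  obtain ⟨ζ', hinj, hpert⟩ := exists_injective_perturbation hX ζ hη0
  -- the finite subset of X
  refine ⟨Finset.image ζ' Finset.univ, ?_⟩
  have hmem : ∀ z : E, ζ' z ∈ Finset.image ζ' Finset.univ :=
    fun z => Finset.mem_image_of_mem ζ' (Finset.mem_univ z)
  let e : E ≃ (Finset.image ζ' Finset.univ : Finset X) :=
    Equiv.ofBijective (fun z => ⟨ζ' z, hmem z⟩)
      ⟨fun u v h => hinj (congrArg Subtype.val h),
       fun w => by
        obtain ⟨z, _, hz⟩ := Finset.mem_image.1 w.2
        exact ⟨z, Subtype.ext hz⟩⟩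
  refine ⟨fun s w => e (σ s (e.symm w)), ?_, ?_, ?_, ?_⟩
  · intro w; show e (σ 1 (e.symm w)) = w; rw [hσ1]; exact e.apply_symm_apply w
  · intro s t w
    show e (σ (s*t) (e.symm w)) = e (σ s (e.symm (e (σ t (e.symm w)))))
    rw [hσm, e.symm_apply_apply]
  · intro x
    obtain ⟨z, hz⟩ := hdense x
    refine ⟨ζ' z, hmem z, ?_⟩
    have h1 : dist x (ζ z) < η := hz
    have h2 := hpert z
    calc dist x (ζ' z) ≤ dist x (ζ z) + dist (ζ z) (ζ' z) := dist_triangle _ _ _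
      _ < η + η := by rw [dist_comm (ζ z)]; exact add_lt_add h1 h2
      _ ≤ ε / 4 + ε / 4 := add_le_add hηε hηε
      _ < ε := by linarith
  · intro w s hs
    set z := e.symm w with hzdef
    have hw : (↑w : X) = ζ' z := by
      conv_lhs => rw [← e.apply_symm_apply w]
      rfl
    have hcoe : (↑(e (σ s z)) : X) = ζ' (σ s z) := rfl
    have h1 : dist (ζ' (σ s z)) (ζ (σ s z)) < η := hpert _
    have h2 : dist (ζ (σ s z)) (act s (ζ z)) < η := hζ z s hs
    have h3 : dist (act s (ζ z)) (act s (ζ' z)) < ε / 4 := by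
      refine hact _ _ ?_ s hs
      rw [dist_comm]; exact hpert z
    show dist (↑(e (σ s z)) : X) (act s (↑w : X)) < ε
    rw [hcoe, hw]
    calc dist (ζ' (σ s z)) (act s (ζ' z))
        ≤ dist (ζ' (σ s z)) (ζ (σ s z)) + dist (ζ (σ s z)) (act s (ζ z))
            + dist (act s (ζ z)) (act s (ζ' z)) := dist_triangle4 _ _ _ _
      _ < η + η + ε / 4 := by linarith
      _ ≤ ε / 4 + ε / 4 + ε / 4 := by linarith
      _ < ε := by linarith
end
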